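/- arXiv:0707.0230 — 5 statements merged into one kernel-verified Lean document; each statement's English description precedes it below -/
import Mathlib

section
/- Under the stated hypotheses, the infimum over all continuous functions y : [−h, 0] → ℝⁿ of ∫_{−h}^{0} f(t, y(t)) dt equals ∫_{−h}^{0} inf_{x ∈ ℝⁿ} f(t, x) dt. -/
open Set MeasureTheory

/-- Let `h > 0`, let `H` be a finite subset of `[-h,0]` and
`Hᶜ = [-h,0] \ H`.  Let `f : [-h,0] × ℝⁿ → ℝ` be continuous on `Hᶜ × ℝⁿ`.  Assume there is a
bounded function `z : [-h,0] → ℝⁿ`, continuous on `Hᶜ`, with `f (t, z t) = inf_x f (t, x)`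
for all `t ∈ [-h,0]`, and that `f` maps `[-h,0] × X` to a bounded set whenever `X` is bounded.
Then the infimum over all continuous `y : [-h,0] → ℝⁿ` of `∫_{-h}^0 f (t, y t) dt` equals
`∫_{-h}^0 inf_x f (t, x) dt`. -/
theorem statement1 (n : ℕ) (h : ℝ) (hh : 0 < h) (H : Finset ℝ)
    (hH : (↑H : Set ℝ) ⊆ Set.Icc (-h) 0)
    (f : ℝ → (Fin n → ℝ) → ℝ)
    (hf : ContinuousOn (fun p : ℝ × (Fin n → ℝ) => f p.1 p.2)
      ((Set.Icc (-h) 0 \ (↑H : Set ℝ)) ×ˢ (Set.univ : Set (Fin n → ℝ))))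
    (z : ℝ → Fin n → ℝ)
    (hzb : Bornology.IsBounded (z '' Set.Icc (-h) 0))
    (hzc : ContinuousOn z (Set.Icc (-h) 0 \ (↑H : Set ℝ)))
    (hzmin : ∀ t ∈ Set.Icc (-h) 0, IsGLB (Set.range (f t)) (f t (z t)))
    (hbdd : ∀ X : Set (Fin n → ℝ), Bornology.IsBounded X →
      Bornology.IsBounded ((fun p : ℝ × (Fin n → ℝ) => f p.1 p.2) '' (Set.Icc (-h) 0 ×ˢ X))) :
    sInf {v : ℝ | ∃ y : ℝ → Fin n → ℝ, ContinuousOn y (Set.Icc (-h) 0) ∧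
        v = ∫ t in (-h)..0, f t (y t)} = ∫ t in (-h)..0, ⨅ x : Fin n → ℝ, f t x := by
  have hle : (-h : ℝ) ≤ 0 := by linarith
  -- radius bound for z
  obtain ⟨R0, hR0⟩ := isBounded_iff_forall_norm_le.1 hzb
  set R : ℝ := max R0 0 with hRdef
  have hRnn : (0:ℝ) ≤ R := le_max_right _ _
  have hzR : ∀ t ∈ Icc (-h) 0, ‖z t‖ ≤ R := fun t ht =>
    (hR0 _ (mem_image_of_mem z ht)).trans (le_max_left _ _)
  -- uniform bounds for f on bounded balls
  have hMgen : ∀ R' : ℝ, ∃ M : ℝ, 0 ≤ M ∧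
      ∀ t ∈ Icc (-h) 0, ∀ x : Fin n → ℝ, ‖x‖ ≤ R' → |f t x| ≤ M := by
    intro R'
    obtain ⟨M, hM⟩ := isBounded_iff_forall_norm_le.1
      (hbdd (Metric.closedBall 0 R') Metric.isBounded_closedBall)
    refine ⟨max M 0, le_max_right _ _, fun t ht x hx => ?_⟩
    have hx' : x ∈ Metric.closedBall (0 : Fin n → ℝ) R' := by
      simpa [Metric.mem_closedBall, dist_zero_right] using hx
    have := hM (f t x) ⟨(t, x), ⟨ht, hx'⟩, rfl⟩
    rw [Real.norm_eq_abs] at this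
    exact this.trans (le_max_left _ _)
  obtain ⟨M, hMnn, hM⟩ := hMgen R
  -- integrability of f along a.e.-continuous bounded curves
  have hint : ∀ (R' M' : ℝ), (∀ t ∈ Icc (-h) 0, ∀ x : Fin n → ℝ, ‖x‖ ≤ R' → |f t x| ≤ M') →
      ∀ w : ℝ → Fin n → ℝ, ContinuousOn w (Icc (-h) 0 \ ↑H) →
      (∀ t ∈ Icc (-h) 0, ‖w t‖ ≤ R') →
      IntegrableOn (fun t => f t (w t)) (Ioc (-h) 0) := by
    intro R' M' hM' w hwc hwR
    have hHm : MeasurableSet (↑H : Set ℝ) := H.finite_toSet.measurableSet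
    have hcont : ContinuousOn (fun t => f t (w t)) (Icc (-h) 0 \ ↑H) :=
      hf.comp (f := fun t => (t, w t)) (ContinuousOn.prodMk continuousOn_id hwc) (fun t ht => ⟨ht, mem_univ _⟩)
    have hsm : AEStronglyMeasurable (fun t => f t (w t))
        (volume.restrict (Icc (-h) 0 \ ↑H)) :=
      hcont.aestronglyMeasurable (measurableSet_Icc.diff hHm)
    have hae : (Ioc (-h) 0 : Set ℝ) =ᵐ[volume] (Ioc (-h) 0 \ ↑H : Set ℝ) := by
      refine (MeasureTheory.diff_ae_eq_self.2 ?_).symm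
      exact measure_mono_null inter_subset_right (H.finite_toSet.measure_zero _)
    have hsm2 : AEStronglyMeasurable (fun t => f t (w t)) (volume.restrict (Ioc (-h) 0)) := by
      rw [Measure.restrict_congr_set hae]
      exact hsm.mono_measure
        (Measure.restrict_mono (diff_subset_diff_left Ioc_subset_Icc_self) le_rfl)
    refine Integrable.mono' (g := fun _ => M')
      (integrableOn_const measure_Ioc_lt_top.ne) hsm2 ?_
    refine (ae_restrict_iff' measurableSet_Ioc).2 (Filter.Eventually.of_forall fun t ht => ?_)
    rw [Real.norm_eq_abs]
    exact hM' t (Ioc_subset_Icc_self ht) _ (hwR t (Ioc_subset_Icc_self ht))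
  have hintz : IntegrableOn (fun t => f t (z t)) (Ioc (-h) 0) :=
    hint R M hM z hzc hzR
  -- the clamping retraction onto the ball of radius R
  set proj : (Fin n → ℝ) → Fin n → ℝ := fun v i => max (-R) (min R (v i)) with hproj
  have hprojc : Continuous proj := by
    rw [hproj]
    exact continuous_pi fun i => continuous_const.max (continuous_const.min (continuous_apply i))
  have hprojR : ∀ v, ‖proj v‖ ≤ R := by
    intro v
    rw [pi_norm_le_iff_of_nonneg hRnn]
    intro i
    rw [Real.norm_eq_abs, abs_le]
    constructor
    · exact le_max_left _ _
    · exact max_le (by linarith) (min_le_left _ _)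
  have hprojid : ∀ v : Fin n → ℝ, ‖v‖ ≤ R → proj v = v := by
    intro v hv
    funext i
    have h1 : |v i| ≤ R := (norm_le_pi_norm v i).trans hv
    rw [abs_le] at h1
    simp only [hproj]
    rw [min_eq_right h1.2, max_eq_right h1.1]
  -- key construction: near-optimal continuous competitors
  have construct : ∀ ε > 0, ∃ y : ℝ → Fin n → ℝ, ContinuousOn y (Icc (-h) 0) ∧
      ∫ t in Ioc (-h) 0, f t (y t) ≤ (∫ t in Ioc (-h) 0, f t (z t)) + ε := by
    intro ε hε
    set δ : ℝ := ε / (4 * M * H.card + 1) with hδdef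
    have hden : (0:ℝ) < 4 * M * H.card + 1 := by
      have h0 : (0:ℝ) ≤ (H.card : ℝ) := Nat.cast_nonneg _
      nlinarith
    have hδpos : 0 < δ := div_pos hε hden
    set U : Set ℝ := ⋃ a ∈ H, Ioo (a - δ) (a + δ) with hU
    have hUopen : IsOpen U := isOpen_biUnion fun a _ => isOpen_Ioo
    set K : Set ℝ := Icc (-h) 0 \ U with hK
    have hKclosed : IsClosed K := isClosed_Icc.sdiff hUopen
    have hKsub : K ⊆ Icc (-h) 0 \ ↑H := by
      rintro t ⟨ht1, ht2⟩
      refine ⟨ht1, fun htH => ht2 ?_⟩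
      exact mem_biUnion htH ⟨by linarith, by linarith⟩
    -- Tietze extension of z from K
    obtain ⟨g, hg⟩ := ContinuousMap.exists_restrict_eq (Y := Fin n → ℝ) hKclosed
      ⟨K.restrict z, (hzc.mono hKsub).restrict⟩
    have hgK : ∀ t ∈ K, g t = z t := by
      intro t ht
      exact ContinuousMap.congr_fun hg ⟨t, ht⟩
    set y : ℝ → Fin n → ℝ := fun t => proj (g t) with hy
    have hyc : Continuous y := hprojc.comp g.continuous
    have hyR : ∀ t, ‖y t‖ ≤ R := fun t => hprojR _
    have hyK : ∀ t ∈ K, y t = z t := by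
      intro t ht
      rw [hy]
      simp only
      rw [hgK t ht, hprojid _ (hzR t ht.1)]
    refine ⟨y, hyc.continuousOn, ?_⟩
    have hinty : IntegrableOn (fun t => f t (y t)) (Ioc (-h) 0) :=
      hint R M hM y (hyc.continuousOn.mono (fun t ht => trivial)) (fun t _ => hyR t)
    -- the difference function
    set D : ℝ → ℝ := fun t => f t (y t) - f t (z t) with hD
    have hDint : IntegrableOn D (Ioc (-h) 0) := hinty.sub hintz
    have hsplit : (∫ t in Ioc (-h) 0 ∩ U, D t) + (∫ t in Ioc (-h) 0 \ U, D t)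
        = ∫ t in Ioc (-h) 0, D t :=
      integral_inter_add_diff hUopen.measurableSet hDint
    have hzero : (∫ t in Ioc (-h) 0 \ U, D t) = 0 := by
      rw [setIntegral_congr_fun (measurableSet_Ioc.diff hUopen.measurableSet)
        (g := fun _ => (0:ℝ)) (fun t ht => ?_)]
      · exact integral_zero _ _
      · have htK : t ∈ K := ⟨Ioc_subset_Icc_self ht.1, ht.2⟩
        simp only [hD]
        rw [hyK t htK, sub_self]
    -- measure bound on the bad set
    have hmeasU : volume (Ioc (-h) 0 ∩ U) ≤ (H.card : ENNReal) * ENNReal.ofReal (2 * δ) := by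
      refine le_trans (measure_mono inter_subset_right) ?_
      refine le_trans (measure_biUnion_finset_le H _) ?_
      have heach : ∀ a ∈ H, volume (Ioo (a - δ) (a + δ)) = ENNReal.ofReal (2 * δ) := by
        intro a _
        rw [Real.volume_Ioo]
        congr 1
        ring
      rw [Finset.sum_congr rfl heach, Finset.sum_const, nsmul_eq_mul]
    have hmeas' : (volume (Ioc (-h) 0 ∩ U)).toReal ≤ (H.card : ℝ) * (2 * δ) := by
      have hne : (H.card : ENNReal) * ENNReal.ofReal (2 * δ) ≠ ⊤ :=
        ENNReal.mul_ne_top (ENNReal.natCast_ne_top _) ENNReal.ofReal_ne_top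
      refine le_trans (ENNReal.toReal_mono hne hmeasU) ?_
      rw [ENNReal.toReal_mul, ENNReal.toReal_natCast, ENNReal.toReal_ofReal (by positivity)]
    -- bound on the integral over the bad set
    have hbound : ‖∫ t in Ioc (-h) 0 ∩ U, D t‖ ≤ (2 * M) * (volume (Ioc (-h) 0 ∩ U)).toReal := by
      refine norm_setIntegral_le_of_norm_le_const
        (lt_of_le_of_lt (measure_mono inter_subset_left) measure_Ioc_lt_top)
        (fun t ht => ?_)
      have ht' := Ioc_subset_Icc_self ht.1
      have h1 := hM t ht' _ (hyR t)
      have h2 := hM t ht' _ (hzR t ht')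
      rw [Real.norm_eq_abs]
      calc |D t| ≤ |f t (y t)| + |f t (z t)| := abs_sub _ _
        _ ≤ 2 * M := by linarith
    have hmul : (volume (Ioc (-h) 0 ∩ U)).toReal ≥ 0 := ENNReal.toReal_nonneg
    have hδε : δ * (4 * M * H.card + 1) = ε := div_mul_cancel₀ _ (ne_of_gt hden)
    have hDbound : (∫ t in Ioc (-h) 0 ∩ U, D t) ≤ ε := by
      have h3 : (2 * M) * (volume (Ioc (-h) 0 ∩ U)).toReal ≤ (2 * M) * ((H.card : ℝ) * (2 * δ)) :=
        mul_le_mul_of_nonneg_left hmeas' (by linarith)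
      have h4 : (2 * M) * ((H.card : ℝ) * (2 * δ)) ≤ ε := by nlinarith [hδpos]
      have h5 := (le_abs_self _).trans ((Real.norm_eq_abs (∫ t in Ioc (-h) 0 ∩ U, D t)) ▸ hbound)
      linarith
    have hDeq : (∫ t in Ioc (-h) 0, D t) =
        (∫ t in Ioc (-h) 0, f t (y t)) - ∫ t in Ioc (-h) 0, f t (z t) :=
      integral_sub hinty hintz
    linarith [hsplit, hzero, hDbound, hDeq]
  -- rewrite the right-hand side
  have hIeq : (∫ t in (-h)..0, ⨅ x : Fin n → ℝ, f t x) = ∫ t in Ioc (-h) 0, f t (z t) := by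
    rw [intervalIntegral.integral_of_le hle]
    refine setIntegral_congr_fun measurableSet_Ioc (fun t ht => ?_)
    have ht' := Ioc_subset_Icc_self ht
    exact (hzmin t ht').csInf_eq ⟨_, mem_range_self (z t)⟩
  -- lower bound for every competitor
  have hlow : ∀ v ∈ {v : ℝ | ∃ y : ℝ → Fin n → ℝ, ContinuousOn y (Set.Icc (-h) 0) ∧
      v = ∫ t in (-h)..0, f t (y t)}, (∫ t in Ioc (-h) 0, f t (z t)) ≤ v := by
    rintro v ⟨y, hyc, rfl⟩
    rw [intervalIntegral.integral_of_le hle]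
    have hyb : Bornology.IsBounded (y '' Icc (-h) 0) :=
      (isCompact_Icc.image_of_continuousOn hyc).isBounded
    obtain ⟨Ry, hRy⟩ := isBounded_iff_forall_norm_le.1 hyb
    obtain ⟨My, _, hMy⟩ := hMgen Ry
    have hinty := hint Ry My hMy y (hyc.mono diff_subset)
      (fun t ht => hRy _ (mem_image_of_mem y ht))
    exact setIntegral_mono_on hintz hinty measurableSet_Ioc
      (fun t ht => (hzmin t (Ioc_subset_Icc_self ht)).1 ⟨y t, rfl⟩)
  rw [hIeq]
  obtain ⟨y₁, hy₁c, _⟩ := construct 1 one_pos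
  refine le_antisymm ?_ (le_csInf ⟨_, ⟨y₁, hy₁c, rfl⟩⟩ hlow)
  refine le_of_forall_pos_le_add fun ε hε => ?_
  obtain ⟨y, hyc, hyle⟩ := construct ε hε
  refine csInf_le_of_le ⟨_, hlow⟩ ⟨y, hyc, rfl⟩ ?_
  rw [intervalIntegral.integral_of_le hle]
  exact hyle
end

section
/- Let h > 0 and let M : [−h, 0] → S^{m+n} be piecewise continuous, partitioned into blocks M = [[M₁₁, M₁₂], [M₂₁, M₂₂]] with M₁₁(t) ∈ S^m and M₂₂(t) ∈ S^n. Suppose there exists ε > 0 such that M₂₂(t) ⪰ ε I for all t ∈ [−h, 0]. Then the following are equivalent: (i) for every x ∈ ℝ^m and every continuous function y : [−h, 0] → ℝⁿ, ∫_{−h}^{0} [x; y(t)]ᵀ M(t) [x; y(t)] dt ≥ 0; (ii) there exists a piecewise continuous function T : [−h, 0] → S^m such that M(t) + [[T(t), 0], [0, 0]] ⪰ 0 for all t ∈ [−h, 0] and ∫_{−h}^{0} T(t) dt = 0. -/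
open Matrix

/-- A real-valued function on `[-h,0]` is piecewise continuous if there are finitely many
points `-h < t₁ < ⋯ < t_m < 0` such that it is bounded on `[-h,0]`, continuous (within
`[-h,0]`) off these points, and has finite one-sided limits at each of them. -/
def PiecewiseCts (h : ℝ) (f : ℝ → ℝ) : Prop :=
  ∃ P : Finset ℝ, (↑P : Set ℝ) ⊆ Set.Ioo (-h) 0 ∧
    Bornology.IsBounded (f '' Set.Icc (-h) 0) ∧
    (∀ t ∈ Set.Icc (-h) 0 \ (↑P : Set ℝ), ContinuousWithinAt f (Set.Icc (-h) 0) t) ∧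
    ∀ p ∈ P, (∃ L : ℝ, Filter.Tendsto f (nhdsWithin p (Set.Iio p)) (nhds L)) ∧
      (∃ L : ℝ, Filter.Tendsto f (nhdsWithin p (Set.Ioi p)) (nhds L))

/-- The lower-right `n × n` block `M₂₂` of a matrix in `S^{m+n}`. -/
def blk22 (m n : ℕ) (M : Matrix (Fin (m + n)) (Fin (m + n)) ℝ) :
    Matrix (Fin n) (Fin n) ℝ :=
  Matrix.of fun i j => M (Fin.natAdd m i) (Fin.natAdd m j)

/-- The embedding `T ↦ [[T, 0], [0, 0]]` of `S^m` into `S^{m+n}`. -/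
def embedUL (m n : ℕ) (T : Matrix (Fin m) (Fin m) ℝ) :
    Matrix (Fin (m + n)) (Fin (m + n)) ℝ :=
  Matrix.reindex finSumFinEquiv finSumFinEquiv (Matrix.fromBlocks T 0 0 0)

section St3Aux

open MeasureTheory Set Filter

namespace St3
lemma pc_bound (hf : PiecewiseCts h f) : ∃ C, 0 ≤ C ∧ ∀ t ∈ Set.Icc (-h) 0, |f t| ≤ C := by
  obtain ⟨P, -, hbd, -, -⟩ := hf
  obtain ⟨C, hC⟩ := (isBounded_iff_forall_norm_le).1 hbd
  exact ⟨max C 0, le_max_right _ _, fun t ht => le_trans (hC _ ⟨t, ht, rfl⟩) (le_max_left _ _)⟩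

lemma nhds_left_le (p : ℝ) (hp : p ∈ Set.Ioo (-h) 0) :
    nhdsWithin p (Set.Iio p) ≤ nhdsWithin p (Set.Icc (-h) 0) := by
  have h1 : Set.Ioo (-h) p ∈ nhdsWithin p (Set.Iio p) :=
    Ioo_mem_nhdsLT_of_mem ⟨hp.1, le_refl p⟩
  have h2 : nhdsWithin p (Set.Iio p) = nhdsWithin p (Set.Iio p ∩ Set.Ioo (-h) p) :=
    nhdsWithin_restrict'' (Set.Iio p) h1
  rw [h2]
  refine nhdsWithin_mono p ?_
  intro x hx; exact ⟨le_of_lt hx.2.1, le_of_lt (lt_of_lt_of_le hx.1 hp.2.le)⟩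

lemma nhds_right_le (p : ℝ) (hp : p ∈ Set.Ioo (-h) 0) :
    nhdsWithin p (Set.Ioi p) ≤ nhdsWithin p (Set.Icc (-h) 0) := by
  have h1 : Set.Ioo p 0 ∈ nhdsWithin p (Set.Ioi p) :=
    Ioo_mem_nhdsGT_of_mem ⟨le_refl p, hp.2⟩
  have h2 : nhdsWithin p (Set.Ioi p) = nhdsWithin p (Set.Ioi p ∩ Set.Ioo p 0) :=
    nhdsWithin_restrict'' (Set.Ioi p) h1
  rw [h2]
  refine nhdsWithin_mono p ?_
  intro x hx; exact ⟨le_trans hp.1.le (le_of_lt hx.1), le_of_lt hx.2.2⟩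

/-- generic binary operation -/
lemma pc_op {op : ℝ → ℝ → ℝ} (hop : Continuous (fun q : ℝ × ℝ => op q.1 q.2))
    (hbd : ∀ Bf Bg : ℝ, ∃ C, ∀ a b : ℝ, |a| ≤ Bf → |b| ≤ Bg → |op a b| ≤ C)
    (hf : PiecewiseCts h f) (hg : PiecewiseCts h g) :
    PiecewiseCts h (fun t => op (f t) (g t)) := by
  obtain ⟨Bf, -, hBf⟩ := pc_bound hf
  obtain ⟨Bg, -, hBg⟩ := pc_bound hg
  obtain ⟨P, hP, -, hfc, hfl⟩ := hf
  obtain ⟨Q, hQ, -, hgc, hgl⟩ := hg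
  obtain ⟨C, hC⟩ := hbd Bf Bg
  refine ⟨P ∪ Q, ?_, ?_, ?_, ?_⟩
  · intro p hp
    rcases Finset.mem_union.1 (by exact_mod_cast hp) with hp | hp
    exacts [hP hp, hQ hp]
  · refine (isBounded_iff_forall_norm_le).2 ⟨C, ?_⟩
    rintro _ ⟨t, ht, rfl⟩
    exact hC _ _ (hBf t ht) (hBg t ht)
  · intro t ht
    have htP : t ∈ Set.Icc (-h) 0 \ (↑P : Set ℝ) := by
      refine ⟨ht.1, fun hc => ht.2 ?_⟩
      exact_mod_cast Finset.mem_union_left Q (by exact_mod_cast hc)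
    have htQ : t ∈ Set.Icc (-h) 0 \ (↑Q : Set ℝ) := by
      refine ⟨ht.1, fun hc => ht.2 ?_⟩
      exact_mod_cast Finset.mem_union_right P (by exact_mod_cast hc)
    exact (hop.continuousAt.comp_continuousWithinAt ((hfc t htP).prodMk (hgc t htQ)))
  · intro p hp
    have hpIoo : p ∈ Set.Ioo (-h) 0 := by
      rcases Finset.mem_union.1 hp with hp' | hp'
      exacts [hP hp', hQ hp']
    have hfL : ∃ L, Tendsto f (nhdsWithin p (Set.Iio p)) (nhds L) := by
      by_cases hpP : p ∈ P
      · exact (hfl p hpP).1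
      · exact ⟨f p, ((hfc p ⟨⟨hpIoo.1.le, hpIoo.2.le⟩, hpP⟩).mono_left (nhds_left_le p hpIoo))⟩
    have hfR : ∃ L, Tendsto f (nhdsWithin p (Set.Ioi p)) (nhds L) := by
      by_cases hpP : p ∈ P
      · exact (hfl p hpP).2
      · exact ⟨f p, ((hfc p ⟨⟨hpIoo.1.le, hpIoo.2.le⟩, hpP⟩).mono_left (nhds_right_le p hpIoo))⟩
    have hgL : ∃ L, Tendsto g (nhdsWithin p (Set.Iio p)) (nhds L) := by
      by_cases hpQ : p ∈ Q
      · exact (hgl p hpQ).1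
      · exact ⟨g p, ((hgc p ⟨⟨hpIoo.1.le, hpIoo.2.le⟩, hpQ⟩).mono_left (nhds_left_le p hpIoo))⟩
    have hgR : ∃ L, Tendsto g (nhdsWithin p (Set.Ioi p)) (nhds L) := by
      by_cases hpQ : p ∈ Q
      · exact (hgl p hpQ).2
      · exact ⟨g p, ((hgc p ⟨⟨hpIoo.1.le, hpIoo.2.le⟩, hpQ⟩).mono_left (nhds_right_le p hpIoo))⟩
    obtain ⟨Lf, hLf⟩ := hfL; obtain ⟨Lf', hLf'⟩ := hfR
    obtain ⟨Lg, hLg⟩ := hgL; obtain ⟨Lg', hLg'⟩ := hgR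
    constructor
    · exact ⟨op Lf Lg, (hop.tendsto (Lf, Lg)).comp (hLf.prodMk_nhds hLg)⟩
    · exact ⟨op Lf' Lg', (hop.tendsto (Lf', Lg')).comp (hLf'.prodMk_nhds hLg')⟩

lemma pc_const (c : ℝ) : PiecewiseCts h (fun _ => c) := by
  refine ⟨∅, by simp, ?_, fun t _ => continuousWithinAt_const, by simp⟩
  refine (isBounded_iff_forall_norm_le).2 ⟨‖c‖, ?_⟩
  rintro _ ⟨t, -, rfl⟩; exact le_refl _

lemma pc_add (hf : PiecewiseCts h f) (hg : PiecewiseCts h g) : PiecewiseCts h (fun t => f t + g t) :=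
  pc_op (by continuity) (fun Bf Bg => ⟨Bf + Bg, fun a b ha hb => (abs_add_le a b).trans (add_le_add ha hb)⟩) hf hg

lemma pc_mul (hf : PiecewiseCts h f) (hg : PiecewiseCts h g) : PiecewiseCts h (fun t => f t * g t) :=
  pc_op (by continuity) (fun Bf Bg => ⟨Bf * Bg, fun a b ha hb => by
    rw [abs_mul]; exact mul_le_mul ha hb (abs_nonneg b) ((abs_nonneg a).trans ha)⟩) hf hg

lemma pc_neg (hf : PiecewiseCts h f) : PiecewiseCts h (fun t => -f t) :=
  pc_op (op := fun a _ => -a) (by continuity) (fun Bf _ => ⟨Bf, fun a b ha _ => by rwa [abs_neg]⟩) hf hf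

lemma pc_sub (hf : PiecewiseCts h f) (hg : PiecewiseCts h g) : PiecewiseCts h (fun t => f t - g t) := by
  simpa [sub_eq_add_neg] using pc_add hf (pc_neg hg)

lemma pc_sum {ι : Type*} (s : Finset ι) (F : ι → ℝ → ℝ) (hF : ∀ i ∈ s, PiecewiseCts h (F i)) :
    PiecewiseCts h (fun t => ∑ i ∈ s, F i t) := by
  induction s using Finset.cons_induction with
  | empty => simpa using pc_const 0
  | cons a s ha ih =>
    simp only [Finset.sum_cons]
    exact pc_add (hF a (Finset.mem_cons_self a s)) (ih (fun i hi => hF i (Finset.mem_cons_of_mem hi)))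

lemma pc_prod {ι : Type*} (s : Finset ι) (F : ι → ℝ → ℝ) (hF : ∀ i ∈ s, PiecewiseCts h (F i)) :
    PiecewiseCts h (fun t => ∏ i ∈ s, F i t) := by
  induction s using Finset.cons_induction with
  | empty => simpa using pc_const 1
  | cons a s ha ih =>
    simp only [Finset.prod_cons]
    exact pc_mul (hF a (Finset.mem_cons_self a s)) (ih (fun i hi => hF i (Finset.mem_cons_of_mem hi)))

lemma pc_of_continuousOn (hg : ContinuousOn g (Set.Icc (-h) 0)) : PiecewiseCts h g := by
  refine ⟨∅, by simp, ?_, fun t ht => hg t ht.1, by simp⟩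
  exact (isCompact_Icc.image_of_continuousOn hg).isBounded

lemma pc_left_lim (hf : PiecewiseCts h f) {p : ℝ} (hp : p ∈ Set.Ioo (-h) 0) :
    ∃ L, Tendsto f (nhdsWithin p (Set.Iio p)) (nhds L) := by
  obtain ⟨P, hP, -, hfc, hfl⟩ := hf
  by_cases hpP : p ∈ P
  · exact (hfl p hpP).1
  · exact ⟨f p, ((hfc p ⟨⟨hp.1.le, hp.2.le⟩, hpP⟩).mono_left (nhds_left_le p hp))⟩

lemma pc_right_lim (hf : PiecewiseCts h f) {p : ℝ} (hp : p ∈ Set.Ioo (-h) 0) :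
    ∃ L, Tendsto f (nhdsWithin p (Set.Ioi p)) (nhds L) := by
  obtain ⟨P, hP, -, hfc, hfl⟩ := hf
  by_cases hpP : p ∈ P
  · exact (hfl p hpP).2
  · exact ⟨f p, ((hfc p ⟨⟨hp.1.le, hp.2.le⟩, hpP⟩).mono_left (nhds_right_le p hp))⟩

lemma pc_div (hf : PiecewiseCts h f) (hg : PiecewiseCts h g) {c : ℝ} (hc : 0 < c)
    (hgc : ∀ t ∈ Set.Icc (-h) 0, c ≤ g t) : PiecewiseCts h (fun t => f t / g t) := by
  obtain ⟨Bf, hBf0, hBf⟩ := pc_bound hf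
  have hfL := fun (p : ℝ) (hp : p ∈ Set.Ioo (-h) 0) => pc_left_lim hf hp
  have hfR := fun (p : ℝ) (hp : p ∈ Set.Ioo (-h) 0) => pc_right_lim hf hp
  have hgL := fun (p : ℝ) (hp : p ∈ Set.Ioo (-h) 0) => pc_left_lim hg hp
  have hgR := fun (p : ℝ) (hp : p ∈ Set.Ioo (-h) 0) => pc_right_lim hg hp
  have key_left : ∀ p ∈ Set.Ioo (-h) 0, ∀ {L : ℝ},
      Tendsto g (nhdsWithin p (Set.Iio p)) (nhds L) → c ≤ L := by
    intro p hp L hL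
    refine ge_of_tendsto hL ?_
    have h1 : Set.Ioo (-h) p ∈ nhdsWithin p (Set.Iio p) :=
      Ioo_mem_nhdsLT_of_mem ⟨hp.1, le_refl p⟩
    filter_upwards [h1] with t ht
    exact hgc t ⟨ht.1.le, le_of_lt (lt_of_lt_of_le ht.2 hp.2.le)⟩
  have key_right : ∀ p ∈ Set.Ioo (-h) 0, ∀ {L : ℝ},
      Tendsto g (nhdsWithin p (Set.Ioi p)) (nhds L) → c ≤ L := by
    intro p hp L hL
    refine ge_of_tendsto hL ?_
    have h1 : Set.Ioo p 0 ∈ nhdsWithin p (Set.Ioi p) :=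
      Ioo_mem_nhdsGT_of_mem ⟨le_refl p, hp.2⟩
    filter_upwards [h1] with t ht
    exact hgc t ⟨le_trans hp.1.le ht.1.le, ht.2.le⟩
  obtain ⟨P, hP, -, hfc, hfl⟩ := hf
  obtain ⟨Q, hQ, -, hgcont, hgl⟩ := hg
  have hfull : ∀ {p : ℝ}, p ∈ (↑(P ∪ Q) : Set ℝ) → p ∈ Set.Ioo (-h) 0 := by
    intro p hp
    rcases Finset.mem_union.1 (by exact_mod_cast hp) with hp' | hp'
    exacts [hP hp', hQ hp']
  refine ⟨P ∪ Q, fun p hp => hfull hp, ?_, ?_, ?_⟩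
  · refine (isBounded_iff_forall_norm_le).2 ⟨Bf / c, ?_⟩
    rintro _ ⟨t, ht, rfl⟩
    have hgt := hgc t ht
    rw [Real.norm_eq_abs, abs_div, abs_of_pos (lt_of_lt_of_le hc hgt)]
    rw [div_le_div_iff₀ (lt_of_lt_of_le hc hgt) hc]
    exact mul_le_mul (hBf t ht) hgt hc.le hBf0
  · intro t ht
    have htP : t ∈ Set.Icc (-h) 0 \ (↑P : Set ℝ) :=
      ⟨ht.1, fun hc' => ht.2 (by exact_mod_cast Finset.mem_union_left Q (by exact_mod_cast hc'))⟩
    have htQ : t ∈ Set.Icc (-h) 0 \ (↑Q : Set ℝ) :=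
      ⟨ht.1, fun hc' => ht.2 (by exact_mod_cast Finset.mem_union_right P (by exact_mod_cast hc'))⟩
    exact (hfc t htP).div (hgcont t htQ) (ne_of_gt (lt_of_lt_of_le hc (hgc t ht.1)))
  · intro p hp
    have hpIoo := hfull (by exact_mod_cast hp)
    obtain ⟨Lf, hLf⟩ := hfL p hpIoo
    obtain ⟨Lf', hLf'⟩ := hfR p hpIoo
    obtain ⟨Lg, hLg⟩ := hgL p hpIoo
    obtain ⟨Lg', hLg'⟩ := hgR p hpIoo
    constructor
    · exact ⟨Lf / Lg, hLf.div hLg (ne_of_gt (lt_of_lt_of_le hc (key_left p hpIoo hLg)))⟩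
    · exact ⟨Lf' / Lg', hLf'.div hLg' (ne_of_gt (lt_of_lt_of_le hc (key_right p hpIoo hLg')))⟩

lemma pc_integrableOn (hf : PiecewiseCts h f) : IntegrableOn f (Set.Icc (-h) 0) volume := by
  obtain ⟨C, -, hC⟩ := pc_bound hf
  obtain ⟨P, -, hbd, hcont, -⟩ := hf
  have hmeas : MeasurableSet (Set.Icc (-h) 0 \ (↑P : Set ℝ)) :=
    measurableSet_Icc.diff P.finite_toSet.measurableSet
  have h1 : ContinuousOn f (Set.Icc (-h) 0 \ (↑P : Set ℝ)) :=
    fun t ht => (hcont t ht).mono Set.diff_subset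
  have hae : (Set.Icc (-h) 0 : Set ℝ) =ᶠ[ae volume] (Set.Icc (-h) 0 \ (↑P : Set ℝ)) := by
    refine MeasureTheory.ae_eq_set.2 ?_
    constructor
    · exact measure_mono_null (fun x hx => by
        by_contra hc
        exact hx.2 ⟨hx.1, hc⟩) (P.finite_toSet.measure_zero volume)
    · exact measure_mono_null (fun x hx => absurd hx.1.1 hx.2) measure_empty
  have hsm : AEStronglyMeasurable f (volume.restrict (Set.Icc (-h) 0)) := by
    rw [Measure.restrict_congr_set hae]
    exact h1.aestronglyMeasurable hmeas
  haveI : IsFiniteMeasure (volume.restrict (Set.Icc (-h) 0)) := by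
    constructor
    rw [Measure.restrict_apply_univ]
    exact measure_Icc_lt_top
  refine ⟨hsm, HasFiniteIntegral.of_bounded (C := C) ?_⟩
  filter_upwards [ae_restrict_mem measurableSet_Icc] with t ht
  simpa [Real.norm_eq_abs] using hC t ht

lemma pc_intervalIntegrable (hh : 0 < h) (hf : PiecewiseCts h f) :
    IntervalIntegrable f volume (-h) 0 := by
  rw [intervalIntegrable_iff_integrableOn_Icc_of_le (by linarith)]
  exact pc_integrableOn hf

def PCmat (h : ℝ) {a b : ℕ} (F : ℝ → Matrix (Fin a) (Fin b) ℝ) : Prop :=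
  ∀ i j, PiecewiseCts h (fun t => F t i j)

lemma pc_matmul {a b c : ℕ} {F : ℝ → Matrix (Fin a) (Fin b) ℝ} {G : ℝ → Matrix (Fin b) (Fin c) ℝ}
    (hF : PCmat h F) (hG : PCmat h G) : PCmat h (fun t => F t * G t) := by
  intro i j
  have : (fun t => (F t * G t) i j) = fun t => ∑ k0 : Fin b, F t i k0 * G t k0 j := by
    funext t; simp [Matrix.mul_apply]
  rw [this]
  exact pc_sum _ _ (fun k0 _ => pc_mul (hF i k0) (hG k0 j))

lemma pc_det {a : ℕ} {F : ℝ → Matrix (Fin a) (Fin a) ℝ} (hF : PCmat h F) :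
    PiecewiseCts h (fun t => (F t).det) := by
  have : (fun t => (F t).det) =
      fun t => ∑ σ : Equiv.Perm (Fin a), ((Equiv.Perm.sign σ : ℤ) : ℝ) * ∏ i, F t (σ i) i := by
    funext t
    simp [Matrix.det_apply, Units.smul_def, zsmul_eq_mul]
  rw [this]
  refine pc_sum _ _ (fun σ _ => pc_mul (pc_const _) (pc_prod _ _ (fun i _ => hF (σ i) i)))

lemma pc_adjugate {a : ℕ} {F : ℝ → Matrix (Fin a) (Fin a) ℝ} (hF : PCmat h F) :
    PCmat h (fun t => (F t).adjugate) := by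
  intro i j
  have : (fun t => (F t).adjugate i j) =
      fun t => ((F t).updateRow j (Pi.single i 1)).det := by
    funext t; rw [Matrix.adjugate_apply]
  rw [this]
  refine pc_det (fun k0 l0 => ?_)
  by_cases hk : k0 = j
  · subst hk
    simpa [Matrix.updateRow_apply] using pc_const (h := h) (Pi.single (M := fun _ => ℝ) i 1 l0)
  · simpa [Matrix.updateRow_apply, hk] using hF k0 l0

lemma pc_transpose {a b : ℕ} {F : ℝ → Matrix (Fin a) (Fin b) ℝ} (hF : PCmat h F) :
    PCmat h (fun t => (F t)ᵀ) := fun i j => hF j i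

lemma star_vec (v : Fin n → ℝ) : star v = v := by
  funext i; exact star_trivial _

lemma psd_quad {A : Matrix (Fin n) (Fin n) ℝ} (hA : A.PosSemidef) (v : Fin n → ℝ) :
    0 ≤ v ⬝ᵥ A.mulVec v := by
  have := hA.dotProduct_mulVec_nonneg v
  rwa [star_vec] at this

lemma quad_of_shift {C : Matrix (Fin n) (Fin n) ℝ} {ε : ℝ}
    (hC : (C - ε • (1 : Matrix (Fin n) (Fin n) ℝ)).PosSemidef) (hε : 0 ≤ ε) (v : Fin n → ℝ) :
    0 ≤ v ⬝ᵥ C.mulVec v := by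
  have h1 := psd_quad hC v
  have h2 : v ⬝ᵥ (C - ε • 1).mulVec v = v ⬝ᵥ C.mulVec v - ε * (v ⬝ᵥ v) := by
    rw [Matrix.sub_mulVec, dotProduct_sub, Matrix.smul_mulVec, Matrix.one_mulVec,
      dotProduct_smul]
    simp [smul_eq_mul]
  have h3 : 0 ≤ v ⬝ᵥ v := by
    simp only [dotProduct]
    exact Finset.sum_nonneg fun i _ => mul_self_nonneg _
  nlinarith [h1, h3]

lemma herm_of_shift {C : Matrix (Fin n) (Fin n) ℝ} {ε : ℝ}
    (hC : (C - ε • (1 : Matrix (Fin n) (Fin n) ℝ)).PosSemidef) : C.IsHermitian := by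
  have h1 := hC.1
  have h2 : (ε • (1 : Matrix (Fin n) (Fin n) ℝ)).IsHermitian := by
    unfold Matrix.IsHermitian
    rw [Matrix.conjTranspose_smul]
    simp
  have := h1.add h2
  simpa using this

lemma eig_ge {C : Matrix (Fin n) (Fin n) ℝ} {ε : ℝ}
    (hC : (C - ε • (1 : Matrix (Fin n) (Fin n) ℝ)).PosSemidef)
    (i : Fin n) : ε ≤ (herm_of_shift hC).eigenvalues i := by
  set hCh := herm_of_shift hC
  set U : Matrix (Fin n) (Fin n) ℝ := ↑hCh.eigenvectorUnitary
  have hU : star U * U = 1 := by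
    have := hCh.eigenvectorUnitary.2
    exact (Unitary.mem_iff.1 hCh.eigenvectorUnitary.2).1
  have hspec : C = U * Matrix.diagonal (RCLike.ofReal ∘ hCh.eigenvalues) * star U :=
    hCh.spectral_theorem
  set N : Matrix (Fin n) (Fin n) ℝ :=
    Matrix.diagonal (RCLike.ofReal ∘ hCh.eigenvalues) - ε • 1
  set q : Fin n → ℝ := Pi.single i 1
  set v : Fin n → ℝ := U.mulVec q
  have key : v ⬝ᵥ (C - ε • 1).mulVec v = hCh.eigenvalues i - ε := by
    have h1 : C - ε • 1 = U * N * star U := by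
      rw [hspec]
      have hUs : U * (ε • (1:Matrix (Fin n) (Fin n) ℝ)) * star U = ε • 1 := by
        rw [Matrix.mul_smul, Matrix.mul_one, Matrix.smul_mul]
        congr 1
        have := hCh.eigenvectorUnitary.2
        exact (Unitary.mem_iff.1 this).2
      rw [← hUs]
      simp [N, Matrix.mul_sub, Matrix.sub_mul]
    rw [h1]
    have h2 : (U * N * star U).mulVec v = (U * N).mulVec q := by
      rw [show v = U.mulVec q from rfl, Matrix.mulVec_mulVec, Matrix.mul_assoc (U*N),
        hU, Matrix.mul_one]
    rw [h2]
    have hstarU : star U = Uᵀ := by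
      funext a b
      simp [Matrix.star_apply]
    have h3 : v ⬝ᵥ (U * N).mulVec q = q ⬝ᵥ ((star U * U) * N).mulVec q := by
      rw [show v = U.mulVec q from rfl, ← Matrix.vecMul_transpose,
        ← Matrix.dotProduct_mulVec, Matrix.mulVec_mulVec, ← Matrix.mul_assoc, ← hstarU]
    rw [h3, hU, Matrix.one_mul]
    have h4 : N.mulVec q = fun j => N j i := by
      funext j
      simp [q, Matrix.mulVec_single]
    rw [h4]
    have h5 : q ⬝ᵥ (fun j => N j i) = N i i := by
      simp [q, Pi.single_apply, dotProduct]
    rw [h5]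
    simp [N, Matrix.diagonal_apply_eq]
  have := psd_quad hC v
  rw [key] at this
  linarith

lemma det_ge_pow {C : Matrix (Fin n) (Fin n) ℝ} {ε : ℝ} (hε : 0 < ε)
    (hC : (C - ε • (1 : Matrix (Fin n) (Fin n) ℝ)).PosSemidef) : ε ^ n ≤ C.det := by
  have hCh := herm_of_shift hC
  have hdet : C.det = ∏ i, hCh.eigenvalues i := by
    simpa using hCh.det_eq_prod_eigenvalues
  rw [hdet]
  calc ε ^ n = ∏ _i : Fin n, ε := by simp
    _ ≤ ∏ i, hCh.eigenvalues i :=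
        Finset.prod_le_prod (fun i _ => hε.le) (fun i _ => eig_ge hC i)

def blk11 (m n : ℕ) (M : Matrix (Fin (m + n)) (Fin (m + n)) ℝ) : Matrix (Fin m) (Fin m) ℝ :=
  Matrix.of fun i j => M (Fin.castAdd n i) (Fin.castAdd n j)

def blk12 (m n : ℕ) (M : Matrix (Fin (m + n)) (Fin (m + n)) ℝ) : Matrix (Fin m) (Fin n) ℝ :=
  Matrix.of fun i j => M (Fin.castAdd n i) (Fin.natAdd m j)

def blk21 (m n : ℕ) (M : Matrix (Fin (m + n)) (Fin (m + n)) ℝ) : Matrix (Fin n) (Fin m) ℝ :=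
  Matrix.of fun i j => M (Fin.natAdd m i) (Fin.castAdd n j)

lemma dot_split (u v : Fin (m + n) → ℝ) :
    u ⬝ᵥ v = (fun i => u (Fin.castAdd n i)) ⬝ᵥ (fun i => v (Fin.castAdd n i)) +
      (fun j => u (Fin.natAdd m j)) ⬝ᵥ (fun j => v (Fin.natAdd m j)) :=
  Fin.sum_univ_add (fun k => u k * v k)

lemma mulVec_cast (M : Matrix (Fin (m + n)) (Fin (m + n)) ℝ) (x : Fin m → ℝ) (y : Fin n → ℝ)
    (i : Fin m) : M.mulVec (Fin.append x y) (Fin.castAdd n i) =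
      ((blk11 m n M).mulVec x + (blk12 m n M).mulVec y) i := by
  simp only [Matrix.mulVec, Pi.add_apply, blk11, blk12, Matrix.of_apply, dotProduct]
  rw [Fin.sum_univ_add (fun k => M (Fin.castAdd n i) k * Fin.append x y k)]
  simp [Fin.append_left, Fin.append_right]

lemma mulVec_nat (M : Matrix (Fin (m + n)) (Fin (m + n)) ℝ) (x : Fin m → ℝ) (y : Fin n → ℝ)
    (j : Fin n) : M.mulVec (Fin.append x y) (Fin.natAdd m j) =
      ((blk21 m n M).mulVec x + (blk22 m n M).mulVec y) j := by
  simp only [Matrix.mulVec, Pi.add_apply, blk21, blk22, Matrix.of_apply, dotProduct]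
  rw [Fin.sum_univ_add (fun k => M (Fin.natAdd m j) k * Fin.append x y k)]
  simp [Fin.append_left, Fin.append_right]

lemma quadSplit (M : Matrix (Fin (m + n)) (Fin (m + n)) ℝ) (x : Fin m → ℝ) (y : Fin n → ℝ) :
    Fin.append x y ⬝ᵥ M.mulVec (Fin.append x y) =
      x ⬝ᵥ (blk11 m n M).mulVec x + x ⬝ᵥ (blk12 m n M).mulVec y +
      y ⬝ᵥ (blk21 m n M).mulVec x + y ⬝ᵥ (blk22 m n M).mulVec y := by
  rw [dot_split]
  have hx : (fun i => Fin.append x y (Fin.castAdd n i)) = x :=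
    funext fun i => Fin.append_left x y i
  have hy : (fun j => Fin.append x y (Fin.natAdd m j)) = y :=
    funext fun j => Fin.append_right x y j
  have hWc : (fun i => M.mulVec (Fin.append x y) (Fin.castAdd n i)) =
      (blk11 m n M).mulVec x + (blk12 m n M).mulVec y :=
    funext (mulVec_cast M x y)
  have hWn : (fun j => M.mulVec (Fin.append x y) (Fin.natAdd m j)) =
      (blk21 m n M).mulVec x + (blk22 m n M).mulVec y :=
    funext (mulVec_nat M x y)
  rw [hx, hy, hWc, hWn, dotProduct_add, dotProduct_add]
  ring

lemma embed_blk11 (T : Matrix (Fin m) (Fin m) ℝ) : blk11 m n (embedUL m n T) = T := by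
  funext i j
  simp [blk11, embedUL, Matrix.reindex_apply, Matrix.submatrix_apply]

lemma embed_blk12 (T : Matrix (Fin m) (Fin m) ℝ) : blk12 m n (embedUL m n T) = 0 := by
  funext i j
  simp [blk12, embedUL, Matrix.reindex_apply, Matrix.submatrix_apply]

lemma embed_blk21 (T : Matrix (Fin m) (Fin m) ℝ) : blk21 m n (embedUL m n T) = 0 := by
  funext i j
  simp [blk21, embedUL, Matrix.reindex_apply, Matrix.submatrix_apply]

lemma embed_blk22 (T : Matrix (Fin m) (Fin m) ℝ) : blk22 m n (embedUL m n T) = 0 := by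
  funext i j
  simp [blk22, embedUL, Matrix.reindex_apply, Matrix.submatrix_apply]

/-- completion of squares -/
lemma complSq (A : Matrix (Fin m) (Fin m) ℝ) (B : Matrix (Fin m) (Fin n) ℝ)
    (C Ci : Matrix (Fin n) (Fin n) ℝ) (hCsym : Cᵀ = C) (hCi : C * Ci = 1) (hCisym : Ciᵀ = Ci)
    (x : Fin m → ℝ) (y : Fin n → ℝ) :
    x ⬝ᵥ A.mulVec x + x ⬝ᵥ B.mulVec y + y ⬝ᵥ Bᵀ.mulVec x + y ⬝ᵥ C.mulVec y =
      x ⬝ᵥ (A - B * Ci * Bᵀ).mulVec x +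
      (y + (Ci * Bᵀ).mulVec x) ⬝ᵥ C.mulVec (y + (Ci * Bᵀ).mulVec x) := by
  set w : Fin n → ℝ := (Ci * Bᵀ).mulVec x with hw
  have hCw : C.mulVec w = Bᵀ.mulVec x := by
    rw [hw, Matrix.mulVec_mulVec, ← Matrix.mul_assoc, hCi, Matrix.one_mul]
  have hcross1 : x ⬝ᵥ B.mulVec y = (Bᵀ.mulVec x) ⬝ᵥ y := by
    rw [Matrix.dotProduct_mulVec, ← Matrix.vecMul_transpose, Matrix.transpose_transpose]
  have hcross2 : w ⬝ᵥ C.mulVec y = (Bᵀ.mulVec x) ⬝ᵥ y := by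
    rw [Matrix.dotProduct_mulVec]
    have : w ᵥ* C = C.mulVec w := by conv_lhs => rw [← hCsym, Matrix.vecMul_transpose]
    rw [this, hCw]
  have hwCw : w ⬝ᵥ C.mulVec w = x ⬝ᵥ (B * Ci * Bᵀ).mulVec x := by
    rw [hCw, hw]
    rw [← Matrix.vecMul_transpose, Matrix.transpose_mul, Matrix.transpose_transpose, hCisym,
      ← Matrix.dotProduct_mulVec, Matrix.mulVec_mulVec]
  have hyCw : y ⬝ᵥ C.mulVec w = y ⬝ᵥ Bᵀ.mulVec x := by rw [hCw]
  have hexp : (y + w) ⬝ᵥ C.mulVec (y + w) =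
      y ⬝ᵥ C.mulVec y + y ⬝ᵥ C.mulVec w + w ⬝ᵥ C.mulVec y + w ⬝ᵥ C.mulVec w := by
    rw [Matrix.mulVec_add, add_dotProduct, dotProduct_add, dotProduct_add]
    ring
  have hsub : x ⬝ᵥ (A - B * Ci * Bᵀ).mulVec x =
      x ⬝ᵥ A.mulVec x - x ⬝ᵥ (B * Ci * Bᵀ).mulVec x := by
    rw [Matrix.sub_mulVec, dotProduct_sub]
  rw [hexp, hsub, hwCw, hyCw, hcross2, hcross1]
  have : y ⬝ᵥ Bᵀ.mulVec x = (Bᵀ.mulVec x) ⬝ᵥ y := dotProduct_comm _ _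
  rw [this]
  ring
variable {h : ℝ}

lemma pc_quad {k : ℕ} {F : ℝ → Matrix (Fin k) (Fin k) ℝ} (hF : PCmat h F)
    {z : ℝ → Fin k → ℝ} (hz : ∀ i, PiecewiseCts h (fun t => z t i)) :
    PiecewiseCts h (fun t => z t ⬝ᵥ (F t).mulVec (z t)) := by
  have hrw : (fun t => z t ⬝ᵥ (F t).mulVec (z t)) =
      fun t => ∑ i : Fin k, z t i * ∑ j : Fin k, F t i j * z t j := by
    funext t; simp [dotProduct, Matrix.mulVec]
  rw [hrw]
  exact pc_sum _ _ fun i _ => pc_mul (hz i) (pc_sum _ _ fun j _ => pc_mul (hF i j) (hz j))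

lemma coord_contOn {n : ℕ} {y : ℝ → Fin n → ℝ} (hy : ContinuousOn y (Set.Icc (-h) 0))
    (j : Fin n) : ContinuousOn (fun t => y t j) (Set.Icc (-h) 0) :=
  fun t ht => ((continuous_apply j).continuousAt).comp_continuousWithinAt (hy t ht)

lemma pc_append_coord {m n : ℕ} (x : Fin m → ℝ) {y : ℝ → Fin n → ℝ}
    (hy : ContinuousOn y (Set.Icc (-h) 0)) (k : Fin (m + n)) :
    PiecewiseCts h (fun t => Fin.append x (y t) k) := by
  refine Fin.addCases (motive := fun k => PiecewiseCts h fun t => Fin.append x (y t) k) ?_ ?_ k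
  · intro i
    simp only [Fin.append_left]
    exact pc_const (x i)
  · intro j
    simp only [Fin.append_right]
    exact pc_of_continuousOn (coord_contOn hy j)

lemma integral_quad_const {k : ℕ} (hh : 0 < h) {F : ℝ → Matrix (Fin k) (Fin k) ℝ}
    (hF : PCmat h F) (x : Fin k → ℝ) :
    (∫ t in (-h)..0, x ⬝ᵥ (F t).mulVec x) =
      x ⬝ᵥ (Matrix.of fun i j => ∫ t in (-h)..0, F t i j).mulVec x := by
  have hint : ∀ (i j : Fin k), IntervalIntegrable (fun t => x i * (F t i j * x j)) volume (-h) 0 :=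
    fun i j => pc_intervalIntegrable hh (pc_mul (pc_const (x i)) (pc_mul (hF i j) (pc_const (x j))))
  have h1 : (fun t => x ⬝ᵥ (F t).mulVec x) = fun t => ∑ i, ∑ j, x i * (F t i j * x j) := by
    funext t
    simp [dotProduct, Matrix.mulVec, Finset.mul_sum]
  rw [h1]
  rw [intervalIntegral.integral_finset_sum (fun i _ =>
    pc_intervalIntegrable hh (pc_sum Finset.univ _
      (fun j _ => pc_mul (pc_const (x i)) (pc_mul (hF i j) (pc_const (x j))))))]
  have h2 : ∀ i : Fin k, (∫ t in (-h)..0, ∑ j, x i * (F t i j * x j)) =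
      ∑ j, x i * ((∫ t in (-h)..0, F t i j) * x j) := by
    intro i
    rw [intervalIntegral.integral_finset_sum (fun j _ => hint i j)]
    refine Finset.sum_congr rfl (fun j _ => ?_)
    rw [intervalIntegral.integral_const_mul, intervalIntegral.integral_mul_const]
  rw [Finset.sum_congr rfl (fun i _ => h2 i)]
  simp [dotProduct, Matrix.mulVec, Finset.mul_sum]

lemma isHermitian_of_symm {k : ℕ} {A : Matrix (Fin k) (Fin k) ℝ} (hA : Aᵀ = A) :
    A.IsHermitian := by
  have hct : Aᴴ = Aᵀ := by
    funext i j
    simp [Matrix.conjTranspose_apply]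
  unfold Matrix.IsHermitian
  rw [hct, hA]

lemma embed_transpose {m n : ℕ} (T : Matrix (Fin m) (Fin m) ℝ) :
    (embedUL m n T)ᵀ = embedUL m n Tᵀ := by
  unfold embedUL
  rw [Matrix.transpose_reindex, Matrix.fromBlocks_transpose]
  simp

lemma blk11_add {m n : ℕ} (X Y : Matrix (Fin (m + n)) (Fin (m + n)) ℝ) :
    blk11 m n (X + Y) = blk11 m n X + blk11 m n Y := rfl

lemma blk12_add {m n : ℕ} (X Y : Matrix (Fin (m + n)) (Fin (m + n)) ℝ) :
    blk12 m n (X + Y) = blk12 m n X + blk12 m n Y := rfl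

lemma blk21_add {m n : ℕ} (X Y : Matrix (Fin (m + n)) (Fin (m + n)) ℝ) :
    blk21 m n (X + Y) = blk21 m n X + blk21 m n Y := rfl

lemma blk22_add {m n : ℕ} (X Y : Matrix (Fin (m + n)) (Fin (m + n)) ℝ) :
    blk22 m n (X + Y) = blk22 m n X + blk22 m n Y := rfl

lemma clamp_le {lo hi a s : ℝ} (h1 : lo ≤ s) (h2 : s ≤ hi) :
    |max lo (min hi a) - s| ≤ |a - s| := by
  rcases le_total a lo with hA | hA
  · have hm : min hi a = a := min_eq_right (hA.trans (h1.trans h2))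
    rw [hm, max_eq_left hA]
    rw [abs_of_nonpos (by linarith), abs_of_nonpos (by linarith)]
    linarith
  · rcases le_total hi a with hB | hB
    · have hm : min hi a = hi := min_eq_left hB
      rw [hm, max_eq_right (h1.trans h2)]
      rw [abs_of_nonneg (by linarith), abs_of_nonneg (by linarith)]
      linarith
    · rw [min_eq_right hB, max_eq_right hA]

lemma clamp_abs {R a : ℝ} (hR : 0 ≤ R) : |max (-R) (min R a)| ≤ R := by
  rw [abs_le]
  constructor
  · exact le_max_left _ _
  · exact max_le (by linarith) (min_le_left _ _)

lemma integrable_indicator_vec {n : ℕ} (hh : 0 < h) {R : ℝ} (hR : 0 ≤ R)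
    {F : ℝ → Fin n → ℝ} (hco : ∀ j, PiecewiseCts h (fun t => F t j))
    (hbd : ∀ t ∈ Set.Icc (-h) 0, ∀ j, |F t j| ≤ R) :
    Integrable (Set.indicator (Set.Icc (-h) 0) F) volume := by
  have hcoord_eq : ∀ j, (fun t => Set.indicator (Set.Icc (-h) 0) F t j) =
      Set.indicator (Set.Icc (-h) 0) (fun t => F t j) := by
    intro j
    funext t
    by_cases ht : t ∈ Set.Icc (-h) 0
    · simp [Set.indicator_of_mem ht]
    · simp [Set.indicator_of_notMem ht]
  have hcoord : ∀ j, Integrable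
      (fun t => Set.indicator (Set.Icc (-h) 0) F t j) volume := by
    intro j
    rw [hcoord_eq j]
    exact (pc_integrableOn (hco j)).integrable_indicator measurableSet_Icc
  have hae : ∀ j, AEMeasurable (fun t => Set.indicator (Set.Icc (-h) 0) F t j) volume :=
    fun j => (hcoord j).aemeasurable
  have haem : AEMeasurable (Set.indicator (Set.Icc (-h) 0) F) volume := by
    refine ⟨fun t j => (hae j).mk _ t,
      measurable_pi_lambda _ (fun j => (hae j).measurable_mk), ?_⟩
    have hall : ∀ᵐ t ∂volume, ∀ j, Set.indicator (Set.Icc (-h) 0) F t j = (hae j).mk _ t :=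
      MeasureTheory.ae_all_iff.2 fun j => (hae j).ae_eq_mk
    filter_upwards [hall] with t ht
    funext j
    exact ht j
  refine Integrable.mono'
    (g := Set.indicator (Set.Icc (-h) 0) (fun _ => R)) ?_ haem.aestronglyMeasurable ?_
  · exact (integrableOn_const measure_Icc_lt_top.ne).integrable_indicator
      measurableSet_Icc
  · refine Filter.Eventually.of_forall (fun t => ?_)
    by_cases ht : t ∈ Set.Icc (-h) 0
    · rw [Set.indicator_of_mem ht, Set.indicator_of_mem ht]
      exact pi_norm_le_iff_of_nonneg hR |>.2 fun j => by
        simpa [Real.norm_eq_abs] using hbd t ht j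
    · rw [Set.indicator_of_notMem ht, Set.indicator_of_notMem ht]
      simp

/-! ### The main construction -/

section Main

variable (m n : ℕ) (M : ℝ → Matrix (Fin (m + n)) (Fin (m + n)) ℝ)

/-- `C(t)`, the lower-right block. -/
def Cmat : ℝ → Matrix (Fin n) (Fin n) ℝ := fun t => blk22 m n (M t)

/-- explicit inverse of `C(t)` via the adjugate. -/
noncomputable def CiMat : ℝ → Matrix (Fin n) (Fin n) ℝ :=
  fun t => ((Cmat m n M t).det)⁻¹ • (Cmat m n M t).adjugate

/-- Schur complement `Δ(t) = A(t) - B(t) C(t)⁻¹ B(t)ᵀ`. -/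
noncomputable def DeltaMat : ℝ → Matrix (Fin m) (Fin m) ℝ :=
  fun t => blk11 m n (M t) - blk12 m n (M t) * CiMat m n M t * (blk12 m n (M t))ᵀ

variable (h : ℝ)

/-- `G = ∫ Δ`. -/
noncomputable def Gmat : Matrix (Fin m) (Fin m) ℝ :=
  Matrix.of fun i j => ∫ t in (-h)..0, DeltaMat m n M t i j

/-- The multiplier `T(t) = h⁻¹ G - Δ(t)`. -/
noncomputable def Tmat : ℝ → Matrix (Fin m) (Fin m) ℝ :=
  fun t => h⁻¹ • Gmat m n M h - DeltaMat m n M t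

end Main

section MainLemmas

variable {m n : ℕ} {h ε : ℝ} {M : ℝ → Matrix (Fin (m + n)) (Fin (m + n)) ℝ}

lemma det_lb (hε : 0 < ε)
    (hM22 : ∀ t ∈ Set.Icc (-h) 0,
      (blk22 m n (M t) - ε • (1 : Matrix (Fin n) (Fin n) ℝ)).PosSemidef) :
    ∀ t ∈ Set.Icc (-h) 0, ε ^ n ≤ (Cmat m n M t).det :=
  fun t ht => det_ge_pow hε (hM22 t ht)

lemma det_pos (hε : 0 < ε)
    (hM22 : ∀ t ∈ Set.Icc (-h) 0,
      (blk22 m n (M t) - ε • (1 : Matrix (Fin n) (Fin n) ℝ)).PosSemidef) :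
    ∀ t ∈ Set.Icc (-h) 0, 0 < (Cmat m n M t).det :=
  fun t ht => lt_of_lt_of_le (pow_pos hε n) (det_lb hε hM22 t ht)

lemma CiC (hε : 0 < ε)
    (hM22 : ∀ t ∈ Set.Icc (-h) 0,
      (blk22 m n (M t) - ε • (1 : Matrix (Fin n) (Fin n) ℝ)).PosSemidef) :
    ∀ t ∈ Set.Icc (-h) 0, Cmat m n M t * CiMat m n M t = 1 := by
  intro t ht
  show Cmat m n M t * (((Cmat m n M t).det)⁻¹ • (Cmat m n M t).adjugate) = 1
  rw [Matrix.mul_smul, Matrix.mul_adjugate, smul_smul,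
    inv_mul_cancel₀ (ne_of_gt (det_pos hε hM22 t ht)), one_smul]

lemma Cmat_pc (hMpc : ∀ i j, PiecewiseCts h fun t => M t i j) : PCmat h (Cmat m n M) :=
  fun i j => hMpc _ _

lemma Ci_pc (hε : 0 < ε)
    (hMpc : ∀ i j, PiecewiseCts h fun t => M t i j)
    (hM22 : ∀ t ∈ Set.Icc (-h) 0,
      (blk22 m n (M t) - ε • (1 : Matrix (Fin n) (Fin n) ℝ)).PosSemidef) :
    PCmat h (CiMat m n M) := by
  intro i j
  have heq : (fun t => CiMat m n M t i j) =
      fun t => (Cmat m n M t).adjugate i j / (Cmat m n M t).det := by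
    funext t
    show ((Cmat m n M t).det)⁻¹ • (Cmat m n M t).adjugate i j = _
    rw [smul_eq_mul, div_eq_inv_mul]
  rw [heq]
  exact pc_div (pc_adjugate (Cmat_pc hMpc) i j) (pc_det (Cmat_pc hMpc)) (pow_pos hε n)
    (det_lb hε hM22)

lemma symE (hMsymm : ∀ t ∈ Set.Icc (-h) 0, (M t).IsSymm) :
    ∀ t ∈ Set.Icc (-h) 0, ∀ a b, M t a b = M t b a :=
  fun t ht a b => congrFun (congrFun (hMsymm t ht) b) a

lemma blk21_eq (hMsymm : ∀ t ∈ Set.Icc (-h) 0, (M t).IsSymm) :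
    ∀ t ∈ Set.Icc (-h) 0, blk21 m n (M t) = (blk12 m n (M t))ᵀ := by
  intro t ht
  funext i j
  exact symE hMsymm t ht _ _

lemma CT (hMsymm : ∀ t ∈ Set.Icc (-h) 0, (M t).IsSymm) :
    ∀ t ∈ Set.Icc (-h) 0, (Cmat m n M t)ᵀ = Cmat m n M t := by
  intro t ht
  funext i j
  exact symE hMsymm t ht _ _

lemma CiT (hMsymm : ∀ t ∈ Set.Icc (-h) 0, (M t).IsSymm) :
    ∀ t ∈ Set.Icc (-h) 0, (CiMat m n M t)ᵀ = CiMat m n M t := by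
  intro t ht
  show (((Cmat m n M t).det)⁻¹ • (Cmat m n M t).adjugate)ᵀ = _
  rw [Matrix.transpose_smul, Matrix.adjugate_transpose, CT hMsymm t ht]
  rfl

lemma Delta_pc (hε : 0 < ε)
    (hMpc : ∀ i j, PiecewiseCts h fun t => M t i j)
    (hM22 : ∀ t ∈ Set.Icc (-h) 0,
      (blk22 m n (M t) - ε • (1 : Matrix (Fin n) (Fin n) ℝ)).PosSemidef) :
    PCmat h (DeltaMat m n M) := by
  intro i j
  have hBpc : PCmat h (fun t => blk12 m n (M t)) := fun i j => hMpc _ _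
  have hApc : PCmat h (fun t => blk11 m n (M t)) := fun i j => hMpc _ _
  have hBCB := pc_matmul (pc_matmul hBpc (Ci_pc hε hMpc hM22)) (pc_transpose hBpc)
  exact pc_sub (hApc i j) (hBCB i j)

lemma Delta_symm (hε : 0 < ε)
    (hMsymm : ∀ t ∈ Set.Icc (-h) 0, (M t).IsSymm) :
    ∀ t ∈ Set.Icc (-h) 0, (DeltaMat m n M t)ᵀ = DeltaMat m n M t := by
  intro t ht
  have hAT : (blk11 m n (M t))ᵀ = blk11 m n (M t) := by
    funext i j
    exact symE hMsymm t ht _ _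
  show (blk11 m n (M t) - blk12 m n (M t) * CiMat m n M t * (blk12 m n (M t))ᵀ)ᵀ = _
  rw [Matrix.transpose_sub, hAT, Matrix.transpose_mul, Matrix.transpose_mul,
    Matrix.transpose_transpose, CiT hMsymm t ht, ← Matrix.mul_assoc]
  rfl

/-- The key pointwise identity on `[-h,0]`. -/
lemma quad_ident (hε : 0 < ε)
    (hMsymm : ∀ t ∈ Set.Icc (-h) 0, (M t).IsSymm)
    (hM22 : ∀ t ∈ Set.Icc (-h) 0,
      (blk22 m n (M t) - ε • (1 : Matrix (Fin n) (Fin n) ℝ)).PosSemidef) :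
    ∀ t ∈ Set.Icc (-h) 0, ∀ (x : Fin m → ℝ) (y : Fin n → ℝ),
      Fin.append x y ⬝ᵥ (M t).mulVec (Fin.append x y) =
        x ⬝ᵥ (DeltaMat m n M t).mulVec x +
        (y + (CiMat m n M t * (blk12 m n (M t))ᵀ).mulVec x) ⬝ᵥ
          (Cmat m n M t).mulVec (y + (CiMat m n M t * (blk12 m n (M t))ᵀ).mulVec x) := by
  intro t ht x y
  rw [quadSplit (M t) x y, blk21_eq hMsymm t ht]
  exact complSq (blk11 m n (M t)) (blk12 m n (M t)) (blk22 m n (M t)) (CiMat m n M t)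
    (CT hMsymm t ht) (CiC hε hM22 t ht) (CiT hMsymm t ht) x y

end MainLemmas
section EasyDir

variable {m n : ℕ} {h : ℝ}

lemma easy_dir (hh : 0 < h)
    (M : ℝ → Matrix (Fin (m + n)) (Fin (m + n)) ℝ)
    (hMpc : ∀ i j, PiecewiseCts h fun t => M t i j)
    (T : ℝ → Matrix (Fin m) (Fin m) ℝ)
    (hTpc : ∀ i j, PiecewiseCts h fun t => T t i j)
    (hpsd : ∀ t ∈ Set.Icc (-h) 0, (M t + embedUL m n (T t)).PosSemidef)
    (hT0 : ∀ i j, (∫ t in (-h)..0, T t i j) = 0)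
    (x : Fin m → ℝ) (y : ℝ → Fin n → ℝ) (hy : ContinuousOn y (Set.Icc (-h) 0)) :
    0 ≤ ∫ t in (-h)..0, Fin.append x (y t) ⬝ᵥ (M t).mulVec (Fin.append x (y t)) := by
  set q : ℝ → ℝ := fun t => Fin.append x (y t) ⬝ᵥ (M t).mulVec (Fin.append x (y t)) with hq
  set r : ℝ → ℝ := fun t => x ⬝ᵥ (T t).mulVec x with hr
  have hqpc : PiecewiseCts h q :=
    pc_quad (fun i j => hMpc i j) (pc_append_coord x hy)
  have hrpc : PiecewiseCts h r :=
    pc_quad (fun i j => hTpc i j) (fun i => pc_const (x i))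
  have hkey : ∀ t ∈ Set.Icc (-h) 0, 0 ≤ q t + r t := by
    intro t ht
    have hps := (hpsd t ht).dotProduct_mulVec_nonneg (Fin.append x (y t))
    rw [star_vec] at hps
    have hsplit : Fin.append x (y t) ⬝ᵥ
        (M t + embedUL m n (T t)).mulVec (Fin.append x (y t)) = q t + r t := by
      rw [Matrix.add_mulVec, dotProduct_add]
      have hE : Fin.append x (y t) ⬝ᵥ (embedUL m n (T t)).mulVec (Fin.append x (y t)) =
          r t := by
        rw [quadSplit (embedUL m n (T t)) x (y t), embed_blk11, embed_blk12, embed_blk21,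
          embed_blk22]
        simp [hr, Matrix.zero_mulVec]
      rw [hE]
    rw [hsplit] at hps
    exact hps
  have hqi := pc_intervalIntegrable hh hqpc
  have hri := pc_intervalIntegrable hh hrpc
  have h1 : 0 ≤ ∫ t in (-h)..0, (q t + r t) :=
    intervalIntegral.integral_nonneg (by linarith) hkey
  rw [intervalIntegral.integral_add hqi hri] at h1
  have h2 : (∫ t in (-h)..0, r t) = 0 := by
    have heq : (∫ t in (-h)..0, r t) =
        x ⬝ᵥ (Matrix.of fun i j => ∫ t in (-h)..0, T t i j).mulVec x :=
      integral_quad_const hh (fun i j => hTpc i j) x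
    rw [heq]
    have hz : (Matrix.of fun i j => ∫ t in (-h)..0, T t i j) =
        (0 : Matrix (Fin m) (Fin m) ℝ) := by
      funext i j
      simpa using hT0 i j
    rw [hz]
    simp
  linarith

end EasyDir
section Gpsd

variable {m n : ℕ} {h ε : ℝ} {M : ℝ → Matrix (Fin (m + n)) (Fin (m + n)) ℝ}

lemma Gpsd (hh : 0 < h) (hε : 0 < ε)
    (hMsymm : ∀ t ∈ Set.Icc (-h) 0, (M t).IsSymm)
    (hMpc : ∀ i j, PiecewiseCts h fun t => M t i j)
    (hM22 : ∀ t ∈ Set.Icc (-h) 0,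
      (blk22 m n (M t) - ε • (1 : Matrix (Fin n) (Fin n) ℝ)).PosSemidef)
    (hyp : ∀ (x : Fin m → ℝ) (y : ℝ → Fin n → ℝ), ContinuousOn y (Set.Icc (-h) 0) →
        0 ≤ ∫ t in (-h)..0,
          Fin.append x (y t) ⬝ᵥ (M t).mulVec (Fin.append x (y t)))
    (xv : Fin m → ℝ) : 0 ≤ xv ⬝ᵥ (Gmat m n M h).mulVec xv := by
  have hΔpc : PCmat h (DeltaMat m n M) := Delta_pc hε hMpc hM22
  set q : ℝ → ℝ := fun t => xv ⬝ᵥ (DeltaMat m n M t).mulVec xv with hqdef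
  have hqpc : PiecewiseCts h q := pc_quad hΔpc (fun i => pc_const (xv i))
  have claim1 : xv ⬝ᵥ (Gmat m n M h).mulVec xv = ∫ t in (-h)..0, q t :=
    (integral_quad_const hh hΔpc xv).symm
  rw [claim1]
  set ystar : ℝ → Fin n → ℝ :=
    fun t => -((CiMat m n M t * (blk12 m n (M t))ᵀ).mulVec xv) with hysdef
  have hypc : ∀ j, PiecewiseCts h (fun t => ystar t j) := by
    intro j
    have h1 : (fun t => ystar t j) =
        fun t => -(∑ k, (CiMat m n M t * (blk12 m n (M t))ᵀ) j k * xv k) := by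
      funext t
      simp [hysdef, Matrix.mulVec, dotProduct]
    rw [h1]
    refine pc_neg (pc_sum _ _ fun k _ => pc_mul ?_ (pc_const (xv k)))
    exact pc_matmul (Ci_pc hε hMpc hM22) (pc_transpose (fun a b => hMpc _ _)) j k
  choose Rf hRf0 hRf using fun j => pc_bound (hypc j)
  set R := ∑ j, Rf j with hRdef
  have hR0 : 0 ≤ R := Finset.sum_nonneg fun j _ => hRf0 j
  have hRb : ∀ t ∈ Set.Icc (-h) 0, ∀ j, |ystar t j| ≤ R :=
    fun t ht j => le_trans (hRf j t ht)
      (Finset.single_le_sum (fun j _ => hRf0 j) (Finset.mem_univ j))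
  choose Kf hKf0 hKf using fun p : Fin n × Fin n => pc_bound (Cmat_pc (M := M) hMpc p.1 p.2)
  set K := ∑ p : Fin n × Fin n, Kf p with hKdef
  have hK0 : 0 ≤ K := Finset.sum_nonneg fun p _ => hKf0 p
  have hKb : ∀ t ∈ Set.Icc (-h) 0, ∀ i j, |Cmat m n M t i j| ≤ K :=
    fun t ht i j => le_trans (hKf (i, j) t ht)
      (Finset.single_le_sum (fun p _ => hKf0 p) (Finset.mem_univ (i, j)))
  set f := Set.indicator (Set.Icc (-h) 0) ystar with hfdef
  have hf_int : Integrable f volume := integrable_indicator_vec hh hR0 hypc hRb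
  set K2 : ℝ := (n : ℝ) ^ 2 * (2 * R * K) + 1 with hK2def
  have hK2pos : 0 < K2 := by positivity
  have main : ∀ δ : ℝ, 0 < δ → -δ ≤ ∫ t in (-h)..0, q t := by
    intro δ hδ
    obtain ⟨g, -, hgclose, hgcont, hgint⟩ :=
      hf_int.exists_hasCompactSupport_integral_sub_le (div_pos hδ hK2pos)
    set yc : ℝ → Fin n → ℝ := fun t j => max (-R) (min R (g t j)) with hycdef
    have hyccont : Continuous yc :=
      continuous_pi fun j =>
        continuous_const.max (continuous_const.min ((continuous_apply j).comp hgcont))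
    have hQ := hyp xv yc hyccont.continuousOn
    set e : ℝ → ℝ :=
      fun t => (yc t - ystar t) ⬝ᵥ (Cmat m n M t).mulVec (yc t - ystar t) with hedef
    have hepc : PiecewiseCts h e := by
      refine pc_quad (Cmat_pc hMpc) (fun j => ?_)
      have h1 : (fun t => (yc t - ystar t) j) = fun t => yc t j - ystar t j := by
        funext t; simp
      rw [h1]
      exact pc_sub (pc_of_continuousOn (((continuous_apply j).comp hyccont).continuousOn))
        (hypc j)
    have hident : ∀ t ∈ Set.Icc (-h) 0,
        Fin.append xv (yc t) ⬝ᵥ (M t).mulVec (Fin.append xv (yc t)) = q t + e t := by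
      intro t ht
      rw [quad_ident hε hMsymm hM22 t ht xv (yc t)]
      have hww : (CiMat m n M t * (blk12 m n (M t))ᵀ).mulVec xv = -ystar t := by
        rw [hysdef]; simp
      rw [hww, ← sub_eq_add_neg]
    have henn : ∀ t ∈ Set.Icc (-h) 0, 0 ≤ e t :=
      fun t ht => quad_of_shift (hM22 t ht) hε.le _
    have hgfint : Integrable (fun t => ‖f t - g t‖) volume := (hf_int.sub hgint).norm
    have heint := pc_intervalIntegrable hh hepc
    have hineq : ∀ t ∈ Set.Icc (-h) 0, e t ≤ K2 * ‖f t - g t‖ := by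
      intro t ht
      have hfy : f t = ystar t := Set.indicator_of_mem ht _
      have hv2 : ∀ j, |(yc t - ystar t) j| ≤ ‖f t - g t‖ := by
        intro j
        have habs := abs_le.1 (hRb t ht j)
        have h6 : (f t - g t) j = ystar t j - g t j := by rw [Pi.sub_apply, hfy]
        have h5 : (yc t - ystar t) j = max (-R) (min R (g t j)) - ystar t j := by simp [hycdef]
        rw [h5]
        calc |max (-R) (min R (g t j)) - ystar t j| ≤ |g t j - ystar t j| :=
              clamp_le habs.1 habs.2
          _ = |(f t - g t) j| := by rw [h6, abs_sub_comm]
          _ ≤ ‖f t - g t‖ := by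
              rw [← Real.norm_eq_abs]
              exact norm_le_pi_norm (f t - g t) j
      have hv1 : ∀ j, |(yc t - ystar t) j| ≤ 2 * R := by
        intro j
        have hyb : |yc t j| ≤ R := clamp_abs hR0
        have h4 := hRb t ht j
        have h5 : (yc t - ystar t) j = yc t j - ystar t j := by simp
        rw [h5]
        calc |yc t j - ystar t j| ≤ |yc t j| + |ystar t j| := abs_sub _ _
          _ ≤ R + R := add_le_add hyb h4
          _ = 2 * R := by ring
      have hexp : e t = ∑ i, ∑ j,
          (yc t - ystar t) i * (Cmat m n M t i j * (yc t - ystar t) j) := by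
        simp [hedef, dotProduct, Matrix.mulVec, Finset.mul_sum]
      have hterm : ∀ i j : Fin n,
          |(yc t - ystar t) i * (Cmat m n M t i j * (yc t - ystar t) j)| ≤
            (2 * R) * (K * ‖f t - g t‖) := by
        intro i j
        rw [abs_mul, abs_mul]
        refine mul_le_mul (hv1 i) ?_ (mul_nonneg (abs_nonneg _) (abs_nonneg _)) (by linarith)
        exact mul_le_mul (hKb t ht i j) (hv2 j) (abs_nonneg _) hK0
      rw [hexp]
      calc (∑ i, ∑ j, (yc t - ystar t) i * (Cmat m n M t i j * (yc t - ystar t) j))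
          ≤ |∑ i, ∑ j, (yc t - ystar t) i * (Cmat m n M t i j * (yc t - ystar t) j)| :=
            le_abs_self _
        _ ≤ ∑ i, |∑ j, (yc t - ystar t) i * (Cmat m n M t i j * (yc t - ystar t) j)| :=
            Finset.abs_sum_le_sum_abs _ _
        _ ≤ ∑ i, ∑ j, |(yc t - ystar t) i * (Cmat m n M t i j * (yc t - ystar t) j)| :=
            Finset.sum_le_sum fun i _ => Finset.abs_sum_le_sum_abs _ _
        _ ≤ ∑ _i : Fin n, ∑ _j : Fin n, (2 * R) * (K * ‖f t - g t‖) :=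
            Finset.sum_le_sum fun i _ => Finset.sum_le_sum fun j _ => hterm i j
        _ = (n : ℝ) ^ 2 * (2 * R * K) * ‖f t - g t‖ := by
            simp [Finset.sum_const]
            ring
        _ ≤ K2 * ‖f t - g t‖ := by
            refine mul_le_mul_of_nonneg_right ?_ (norm_nonneg _)
            rw [hK2def]
            linarith
    have hstep1 : (∫ t in (-h)..0, e t) ≤ ∫ t in (-h)..0, K2 * ‖f t - g t‖ := by
      refine intervalIntegral.integral_mono_on (by linarith) heint ?_ hineq
      exact (hgfint.const_mul K2).intervalIntegrable
    have hstep2 : (∫ t in (-h)..0, K2 * ‖f t - g t‖) ≤ K2 * (δ / K2) := by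
      rw [intervalIntegral.integral_const_mul]
      refine mul_le_mul_of_nonneg_left ?_ hK2pos.le
      have h4 : (∫ t in (-h)..0, ‖f t - g t‖) = ∫ t in Set.Ioc (-h) 0, ‖f t - g t‖ :=
        intervalIntegral.integral_of_le (by linarith)
      rw [h4]
      exact le_trans (setIntegral_le_integral hgfint
        (Filter.Eventually.of_forall fun t => norm_nonneg _)) hgclose
    have hcg : (∫ t in (-h)..0,
        Fin.append xv (yc t) ⬝ᵥ (M t).mulVec (Fin.append xv (yc t))) =
        ∫ t in (-h)..0, (q t + e t) := by
      refine intervalIntegral.integral_congr (fun t ht => ?_)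
      rw [Set.uIcc_of_le (by linarith : (-h : ℝ) ≤ 0)] at ht
      exact hident t ht
    rw [hcg, intervalIntegral.integral_add (pc_intervalIntegrable hh hqpc) heint] at hQ
    have hK2δ : K2 * (δ / K2) = δ := by field_simp
    linarith
  by_contra hcon
  push_neg at hcon
  have := main (-(∫ t in (-h)..0, q t) / 2) (by linarith)
  linarith

end Gpsd
section Final

variable {m n : ℕ} {h ε : ℝ} {M : ℝ → Matrix (Fin (m + n)) (Fin (m + n)) ℝ}

lemma Gsymm (hh : 0 < h) (hε : 0 < ε)
    (hMsymm : ∀ t ∈ Set.Icc (-h) 0, (M t).IsSymm) :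
    (Gmat m n M h)ᵀ = Gmat m n M h := by
  funext i j
  show (∫ t in (-h)..0, DeltaMat m n M t j i) = ∫ t in (-h)..0, DeltaMat m n M t i j
  refine intervalIntegral.integral_congr (fun t ht => ?_)
  rw [Set.uIcc_of_le (by linarith : (-h : ℝ) ≤ 0)] at ht
  exact congrFun (congrFun (Delta_symm hε hMsymm t ht) i) j

lemma Tsymm (hh : 0 < h) (hε : 0 < ε)
    (hMsymm : ∀ t ∈ Set.Icc (-h) 0, (M t).IsSymm) :
    ∀ t ∈ Set.Icc (-h) 0, (Tmat m n M h t)ᵀ = Tmat m n M h t := by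
  intro t ht
  show (h⁻¹ • Gmat m n M h - DeltaMat m n M t)ᵀ = _
  rw [Matrix.transpose_sub, Matrix.transpose_smul, Gsymm hh hε hMsymm,
    Delta_symm hε hMsymm t ht]
  rfl

end Final

end St3

end St3Aux

open MeasureTheory St3 in
theorem statement3 (m n : ℕ) (h ε : ℝ) (hh : 0 < h) (hε : 0 < ε)
    (M : ℝ → Matrix (Fin (m + n)) (Fin (m + n)) ℝ)
    (hMsymm : ∀ t ∈ Set.Icc (-h) 0, (M t).IsSymm)
    (hMpc : ∀ i j, PiecewiseCts h fun t => M t i j)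
    (hM22 : ∀ t ∈ Set.Icc (-h) 0,
      (blk22 m n (M t) - ε • (1 : Matrix (Fin n) (Fin n) ℝ)).PosSemidef) :
    (∀ (x : Fin m → ℝ) (y : ℝ → Fin n → ℝ), ContinuousOn y (Set.Icc (-h) 0) →
        0 ≤ ∫ t in (-h)..0,
          Fin.append x (y t) ⬝ᵥ (M t).mulVec (Fin.append x (y t))) ↔
      ∃ T : ℝ → Matrix (Fin m) (Fin m) ℝ,
        (∀ i j, PiecewiseCts h fun t => T t i j) ∧
        (∀ t ∈ Set.Icc (-h) 0, (T t).IsSymm) ∧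
        (∀ t ∈ Set.Icc (-h) 0, (M t + embedUL m n (T t)).PosSemidef) ∧
        (∀ i j, (∫ t in (-h)..0, T t i j) = 0) := by
  constructor
  · intro hyp
    have hTentry : ∀ i j, (fun t => Tmat m n M h t i j) =
        fun t => h⁻¹ * Gmat m n M h i j - DeltaMat m n M t i j := by
      intro i j
      funext t
      show (h⁻¹ • Gmat m n M h - DeltaMat m n M t) i j = _
      simp [Matrix.sub_apply, Matrix.smul_apply, smul_eq_mul]
    refine ⟨Tmat m n M h, ?_, ?_, ?_, ?_⟩
    · intro i j
      rw [hTentry i j]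
      exact pc_sub (pc_const _) (Delta_pc hε hMpc hM22 i j)
    · intro t ht
      exact Tsymm hh hε hMsymm t ht
    · intro t ht
      refine Matrix.PosSemidef.of_dotProduct_mulVec_nonneg ?_ ?_
      · refine isHermitian_of_symm ?_
        have hMs : (M t)ᵀ = M t := hMsymm t ht
        rw [Matrix.transpose_add, embed_transpose, hMs, Tsymm hh hε hMsymm t ht]
      · intro zv
        rw [star_vec]
        set x0 : Fin m → ℝ := fun i => zv (Fin.castAdd n i) with hx0
        set y0 : Fin n → ℝ := fun j => zv (Fin.natAdd m j) with hy0
        have hz : Fin.append x0 y0 = zv := by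
          funext k
          refine Fin.addCases (motive := fun k => Fin.append x0 y0 k = zv k) ?_ ?_ k
          · intro i
            rw [Fin.append_left]
          · intro j
            rw [Fin.append_right]
        rw [← hz, Matrix.add_mulVec, dotProduct_add]
        have hE : Fin.append x0 y0 ⬝ᵥ
            (embedUL m n (Tmat m n M h t)).mulVec (Fin.append x0 y0) =
            x0 ⬝ᵥ (Tmat m n M h t).mulVec x0 := by
          rw [quadSplit, embed_blk11, embed_blk12, embed_blk21, embed_blk22]
          simp [Matrix.zero_mulVec]
        rw [hE, quad_ident hε hMsymm hM22 t ht x0 y0]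
        have hcomb : x0 ⬝ᵥ (DeltaMat m n M t).mulVec x0 +
            x0 ⬝ᵥ (Tmat m n M h t).mulVec x0 =
            h⁻¹ * (x0 ⬝ᵥ (Gmat m n M h).mulVec x0) := by
          rw [← dotProduct_add, ← Matrix.add_mulVec]
          have hsum : DeltaMat m n M t + Tmat m n M h t = h⁻¹ • Gmat m n M h := by
            show DeltaMat m n M t + (h⁻¹ • Gmat m n M h - DeltaMat m n M t) = _
            abel
          rw [hsum, Matrix.smul_mulVec, dotProduct_smul, smul_eq_mul]
        have hC0 : 0 ≤ (y0 + (CiMat m n M t * (blk12 m n (M t))ᵀ).mulVec x0) ⬝ᵥ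
            (Cmat m n M t).mulVec
              (y0 + (CiMat m n M t * (blk12 m n (M t))ᵀ).mulVec x0) :=
          quad_of_shift (hM22 t ht) hε.le _
        have hG0 : 0 ≤ x0 ⬝ᵥ (Gmat m n M h).mulVec x0 :=
          Gpsd hh hε hMsymm hMpc hM22 hyp x0
        have hmul : 0 ≤ h⁻¹ * (x0 ⬝ᵥ (Gmat m n M h).mulVec x0) :=
          mul_nonneg (inv_nonneg.2 hh.le) hG0
        linarith
    · intro i j
      rw [hTentry i j]
      rw [intervalIntegral.integral_sub intervalIntegrable_const
        (pc_intervalIntegrable hh (Delta_pc hε hMpc hM22 i j))]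
      rw [intervalIntegral.integral_const]
      have hG : Gmat m n M h i j = ∫ t in (-h)..0, DeltaMat m n M t i j := rfl
      rw [← hG]
      rw [smul_eq_mul]
      field_simp
      ring
  · rintro ⟨T, hTpc, hTsymm, hpsd, hT0⟩ x y hy
    exact easy_dir hh M hMpc T hTpc hpsd hT0 x y hy
end

section
/- Let h > 0 and let M : [−h, 0] → S^{2n} be piecewise continuous, partitioned into n × n blocks M = [[M₁₁, M₁₂], [M₂₁, M₂₂]]. Suppose there exists ε > 0 such that M₂₂(t) ⪰ ε I for all t ∈ [−h, 0]. Then the following are equivalent: (i) for every continuous function y : [−h, 0] → ℝⁿ, ∫_{−h}^{0} [y(0); y(t)]ᵀ M(t) [y(0); y(t)] dt ≥ 0; (ii) there exists a piecewise continuous function T : [−h, 0] → S^n such that M(t) + [[T(t), 0], [0, 0]] ⪰ 0 for all t ∈ [−h, 0] and ∫_{−h}^{0} T(t) dt = 0. -/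
open Matrix

section St4Helpers
open MeasureTheory Set Filter
set_option maxHeartbeats 2000000

variable {h ε : ℝ} {m n : ℕ}

lemma aemeasurable_pi {ι : Type*} [Countable ι] {μ : MeasureTheory.Measure ℝ} {f : ℝ → ι → ℝ}
    (hf : ∀ i, AEMeasurable (fun t => f t i) μ) : AEMeasurable f μ := by
  choose g hg hge using hf
  refine ⟨fun t i => g i t, measurable_pi_iff.2 hg, ?_⟩
  have hall : ∀ᵐ t ∂μ, ∀ i, f t i = g i t := MeasureTheory.ae_all_iff.2 hge
  filter_upwards [hall] with t ht
  funext i; exact ht i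

lemma nhdsWithin_Iio_le_Icc {p : ℝ} (hp : p ∈ Set.Ioo (-h) 0) :
    nhdsWithin p (Set.Iio p) ≤ nhdsWithin p (Set.Icc (-h) 0) := by
  have h1 : Set.Ioo (-h) 0 ∈ nhdsWithin p (Set.Iio p) :=
    mem_nhdsWithin_of_mem_nhds (isOpen_Ioo.mem_nhds hp)
  rw [← nhdsWithin_inter_of_mem' h1]
  exact nhdsWithin_mono _ (fun x hx => Ioo_subset_Icc_self hx.2)

lemma nhdsWithin_Ioi_le_Icc {p : ℝ} (hp : p ∈ Set.Ioo (-h) 0) :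
    nhdsWithin p (Set.Ioi p) ≤ nhdsWithin p (Set.Icc (-h) 0) := by
  have h1 : Set.Ioo (-h) 0 ∈ nhdsWithin p (Set.Ioi p) :=
    mem_nhdsWithin_of_mem_nhds (isOpen_Ioo.mem_nhds hp)
  rw [← nhdsWithin_inter_of_mem' h1]
  exact nhdsWithin_mono _ (fun x hx => Ioo_subset_Icc_self hx.2)

/-- From a pc witness, get one-sided limits at ANY point of `Ioo (-h) 0`. -/
lemma pc_onesided {f : ℝ → ℝ} {P : Finset ℝ}
    (hPc : ∀ t ∈ Set.Icc (-h) 0 \ (↑P : Set ℝ), ContinuousWithinAt f (Set.Icc (-h) 0) t)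
    (hPl : ∀ p ∈ P, (∃ L : ℝ, Filter.Tendsto f (nhdsWithin p (Set.Iio p)) (nhds L)) ∧
      (∃ L : ℝ, Filter.Tendsto f (nhdsWithin p (Set.Ioi p)) (nhds L)))
    {p : ℝ} (hp : p ∈ Set.Ioo (-h) 0) :
    (∃ L : ℝ, Filter.Tendsto f (nhdsWithin p (Set.Iio p)) (nhds L)) ∧
      (∃ L : ℝ, Filter.Tendsto f (nhdsWithin p (Set.Ioi p)) (nhds L)) := by
  by_cases hpP : p ∈ P
  · exact hPl p hpP
  · have hc : ContinuousWithinAt f (Set.Icc (-h) 0) p :=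
      hPc p ⟨Ioo_subset_Icc_self hp, hpP⟩
    exact ⟨⟨f p, hc.tendsto.mono_left (nhdsWithin_Iio_le_Icc hp)⟩,
      ⟨f p, hc.tendsto.mono_left (nhdsWithin_Ioi_le_Icc hp)⟩⟩

lemma PiecewiseCts.bound {f : ℝ → ℝ} (hf : PiecewiseCts h f) :
    ∃ C : ℝ, 0 ≤ C ∧ ∀ t ∈ Set.Icc (-h) 0, |f t| ≤ C := by
  obtain ⟨P, _, hb, _, _⟩ := hf
  obtain ⟨C, hC⟩ := (isBounded_iff_forall_norm_le).1 hb
  exact ⟨max C 0, le_max_right _ _, fun t ht =>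
    le_trans (hC _ (mem_image_of_mem f ht)) (le_max_left _ _)⟩

lemma PiecewiseCts.const (c : ℝ) : PiecewiseCts h (fun _ => c) := by
  refine ⟨∅, by simp, ?_, fun t _ => continuousWithinAt_const, by simp⟩
  exact Bornology.IsBounded.subset (Metric.isBounded_closedBall (x := c) (r := 0))
    (by rintro y ⟨t, _, rfl⟩; simp)

lemma PiecewiseCts.op₂ {f g : ℝ → ℝ} (op : ℝ → ℝ → ℝ)
    (hop : Continuous fun p : ℝ × ℝ => op p.1 p.2)
    (hf : PiecewiseCts h f) (hg : PiecewiseCts h g) :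
    PiecewiseCts h (fun t => op (f t) (g t)) := by
  obtain ⟨Cf, _, hCf⟩ := hf.bound
  obtain ⟨Cg, _, hCg⟩ := hg.bound
  obtain ⟨P, hP, _, hPc, hPl⟩ := hf
  obtain ⟨Q, hQ, _, hQc, hQl⟩ := hg
  refine ⟨P ∪ Q, ?_, ?_, ?_, ?_⟩
  · rw [Finset.coe_union]; exact Set.union_subset hP hQ
  · have hcomp : IsCompact ((fun p : ℝ × ℝ => op p.1 p.2) ''
        (Set.Icc (-Cf) Cf ×ˢ Set.Icc (-Cg) Cg)) :=
      (isCompact_Icc.prod isCompact_Icc).image hop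
    refine hcomp.isBounded.subset ?_
    rintro y ⟨t, ht, rfl⟩
    exact ⟨(f t, g t), ⟨abs_le.1 (hCf t ht), abs_le.1 (hCg t ht)⟩, rfl⟩
  · intro t ht
    rw [Finset.coe_union] at ht
    have htP : t ∈ Set.Icc (-h) 0 \ (↑P : Set ℝ) :=
      ⟨ht.1, fun hc => ht.2 (Set.mem_union_left _ hc)⟩
    have htQ : t ∈ Set.Icc (-h) 0 \ (↑Q : Set ℝ) :=
      ⟨ht.1, fun hc => ht.2 (Set.mem_union_right _ hc)⟩
    exact hop.continuousAt.comp_continuousWithinAt ((hPc t htP).prodMk (hQc t htQ))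
  · intro p hp
    have hpI : p ∈ Set.Ioo (-h) 0 := by
      rcases Finset.mem_union.1 hp with hp' | hp'
      · exact hP (Finset.mem_coe.2 hp')
      · exact hQ (Finset.mem_coe.2 hp')
    obtain ⟨⟨L1, hL1⟩, ⟨L1', hL1'⟩⟩ := pc_onesided hPc hPl hpI
    obtain ⟨⟨L2, hL2⟩, ⟨L2', hL2'⟩⟩ := pc_onesided hQc hQl hpI
    constructor
    · exact ⟨op L1 L2, (hop.tendsto (L1, L2)).comp (hL1.prodMk_nhds hL2)⟩
    · exact ⟨op L1' L2', (hop.tendsto (L1', L2')).comp (hL1'.prodMk_nhds hL2')⟩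

lemma PiecewiseCts.add {f g : ℝ → ℝ} (hf : PiecewiseCts h f) (hg : PiecewiseCts h g) :
    PiecewiseCts h (fun t => f t + g t) :=
  hf.op₂ (· + ·) (continuous_fst.add continuous_snd) hg

lemma PiecewiseCts.mul {f g : ℝ → ℝ} (hf : PiecewiseCts h f) (hg : PiecewiseCts h g) :
    PiecewiseCts h (fun t => f t * g t) :=
  hf.op₂ (· * ·) (continuous_fst.mul continuous_snd) hg

lemma PiecewiseCts.sub {f g : ℝ → ℝ} (hf : PiecewiseCts h f) (hg : PiecewiseCts h g) :
    PiecewiseCts h (fun t => f t - g t) :=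
  hf.op₂ (· - ·) (continuous_fst.sub continuous_snd) hg

lemma PiecewiseCts.neg {f : ℝ → ℝ} (hf : PiecewiseCts h f) :
    PiecewiseCts h (fun t => -(f t)) := by
  simpa using (PiecewiseCts.const (h := h) 0).sub hf

lemma PiecewiseCts.smul {f : ℝ → ℝ} (c : ℝ) (hf : PiecewiseCts h f) :
    PiecewiseCts h (fun t => c * f t) :=
  (PiecewiseCts.const c).mul hf

lemma PiecewiseCts.sum {ι : Type*} (s : Finset ι) (f : ι → ℝ → ℝ)
    (hf : ∀ i ∈ s, PiecewiseCts h (f i)) :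
    PiecewiseCts h (fun t => ∑ i ∈ s, f i t) := by
  classical
  induction s using Finset.induction_on with
  | empty => simpa using PiecewiseCts.const (h := h) 0
  | @insert a s ha ih =>
    have : PiecewiseCts h (fun t => f a t + ∑ i ∈ s, f i t) :=
      (hf a (Finset.mem_insert_self a s)).add
        (ih fun i hi => hf i (Finset.mem_insert_of_mem hi))
    simpa [Finset.sum_insert ha] using this

lemma PiecewiseCts.prod {ι : Type*} (s : Finset ι) (f : ι → ℝ → ℝ)
    (hf : ∀ i ∈ s, PiecewiseCts h (f i)) :
    PiecewiseCts h (fun t => ∏ i ∈ s, f i t) := by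
  classical
  induction s using Finset.induction_on with
  | empty => simpa using PiecewiseCts.const (h := h) 1
  | @insert a s ha ih =>
    have : PiecewiseCts h (fun t => f a t * ∏ i ∈ s, f i t) :=
      (hf a (Finset.mem_insert_self a s)).mul
        (ih fun i hi => hf i (Finset.mem_insert_of_mem hi))
    simpa [Finset.prod_insert ha] using this

lemma PiecewiseCts.inv {f : ℝ → ℝ} {c : ℝ} (hc : 0 < c)
    (hf : PiecewiseCts h f) (hbd : ∀ t ∈ Set.Icc (-h) 0, c ≤ f t) :
    PiecewiseCts h (fun t => (f t)⁻¹) := by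
  obtain ⟨P, hP, _, hPc, hPl⟩ := hf
  refine ⟨P, hP, ?_, ?_, ?_⟩
  · rw [isBounded_iff_forall_norm_le]
    refine ⟨c⁻¹, ?_⟩
    rintro y ⟨t, ht, rfl⟩
    have h1 : c ≤ f t := hbd t ht
    have h2 : 0 < f t := lt_of_lt_of_le hc h1
    rw [Real.norm_eq_abs, abs_of_pos (inv_pos.2 h2)]
    exact inv_anti₀ hc h1
  · intro t ht
    exact (hPc t ht).inv₀ (ne_of_gt (lt_of_lt_of_le hc (hbd t ht.1)))
  · intro p hp
    have hpI : p ∈ Set.Ioo (-h) 0 := hP (Finset.mem_coe.2 hp)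
    obtain ⟨⟨L1, hL1⟩, ⟨L2, hL2⟩⟩ := hPl p hp
    have hev1 : ∀ᶠ t in nhdsWithin p (Set.Iio p), c ≤ f t := by
      filter_upwards [mem_nhdsWithin_of_mem_nhds (isOpen_Ioo.mem_nhds hpI)] with t ht
      exact hbd t (Ioo_subset_Icc_self ht)
    have hev2 : ∀ᶠ t in nhdsWithin p (Set.Ioi p), c ≤ f t := by
      filter_upwards [mem_nhdsWithin_of_mem_nhds (isOpen_Ioo.mem_nhds hpI)] with t ht
      exact hbd t (Ioo_subset_Icc_self ht)
    have hL1c : c ≤ L1 := ge_of_tendsto hL1 hev1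
    have hL2c : c ≤ L2 := ge_of_tendsto hL2 hev2
    constructor
    · exact ⟨L1⁻¹, (Filter.Tendsto.inv₀ hL1 (ne_of_gt (lt_of_lt_of_le hc hL1c)))⟩
    · exact ⟨L2⁻¹, (Filter.Tendsto.inv₀ hL2 (ne_of_gt (lt_of_lt_of_le hc hL2c)))⟩

/-! ### Nice (integrable-ready) functions -/

def Nice (h : ℝ) (f : ℝ → ℝ) : Prop :=
  AEMeasurable f (volume.restrict (Set.Icc (-h) 0)) ∧
    ∃ C : ℝ, ∀ t ∈ Set.Icc (-h) 0, |f t| ≤ C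

lemma PiecewiseCts.nice {f : ℝ → ℝ} (hf : PiecewiseCts h f) : Nice h f := by
  obtain ⟨C, _, hC⟩ := hf.bound
  obtain ⟨P, hP, _, hPc, _⟩ := hf
  refine ⟨?_, C, hC⟩
  have hres : volume.restrict (Set.Icc (-h) 0)
      = volume.restrict (Set.Icc (-h) 0 \ (↑P : Set ℝ)) := by
    refine Measure.restrict_congr_set ?_
    rw [Filter.eventuallyEq_set]
    have hP0 : (↑P : Set ℝ)ᶜ ∈ ae volume := by
      rw [MeasureTheory.compl_mem_ae_iff]
      exact P.finite_toSet.measure_zero volume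
    filter_upwards [hP0] with x hx
    simp only [Set.mem_compl_iff] at hx
    simp [Set.mem_diff, hx]
  rw [hres]
  have hcont : ContinuousOn f (Set.Icc (-h) 0 \ (↑P : Set ℝ)) := fun t ht =>
    (hPc t ht).mono Set.diff_subset
  exact hcont.aemeasurable (measurableSet_Icc.diff (P.finite_toSet.measurableSet))

lemma Nice.of_continuousOn {f : ℝ → ℝ} (hf : ContinuousOn f (Set.Icc (-h) 0)) : Nice h f := by
  refine ⟨hf.aemeasurable measurableSet_Icc, ?_⟩
  obtain ⟨C, hC⟩ := isBounded_iff_forall_norm_le.1 (isCompact_Icc.image_of_continuousOn hf).isBounded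
  exact ⟨C, fun t ht => hC _ (Set.mem_image_of_mem f ht)⟩

lemma Nice.const (c : ℝ) : Nice h (fun _ => c) := ⟨aemeasurable_const, |c|, fun _ _ => le_rfl⟩

lemma Nice.add {f g : ℝ → ℝ} (hf : Nice h f) (hg : Nice h g) : Nice h (fun t => f t + g t) := by
  obtain ⟨hfm, Cf, hCf⟩ := hf; obtain ⟨hgm, Cg, hCg⟩ := hg
  exact ⟨hfm.add hgm, Cf + Cg, fun t ht =>
    (abs_add_le _ _).trans (add_le_add (hCf t ht) (hCg t ht))⟩

lemma Nice.mul {f g : ℝ → ℝ} (hf : Nice h f) (hg : Nice h g) : Nice h (fun t => f t * g t) := by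
  obtain ⟨hfm, Cf, hCf⟩ := hf; obtain ⟨hgm, Cg, hCg⟩ := hg
  refine ⟨hfm.mul hgm, (|Cf| + 1) * (|Cg| + 1), fun t ht => ?_⟩
  rw [abs_mul]
  have h1 : |f t| ≤ |Cf| + 1 := (hCf t ht).trans ((le_abs_self Cf).trans (by linarith))
  have h2 : |g t| ≤ |Cg| + 1 := (hCg t ht).trans ((le_abs_self Cg).trans (by linarith))
  exact mul_le_mul h1 h2 (abs_nonneg _) (by positivity)

lemma Nice.neg {f : ℝ → ℝ} (hf : Nice h f) : Nice h (fun t => -(f t)) := by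
  obtain ⟨hfm, Cf, hCf⟩ := hf
  exact ⟨hfm.neg, Cf, fun t ht => by rw [abs_neg]; exact hCf t ht⟩

lemma Nice.sub {f g : ℝ → ℝ} (hf : Nice h f) (hg : Nice h g) : Nice h (fun t => f t - g t) := by
  simpa [sub_eq_add_neg] using hf.add hg.neg

lemma Nice.sum {ι : Type*} (s : Finset ι) (f : ι → ℝ → ℝ)
    (hf : ∀ i ∈ s, Nice h (f i)) : Nice h (fun t => ∑ i ∈ s, f i t) := by
  classical
  induction s using Finset.induction_on with
  | empty => simpa using Nice.const (h := h) 0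
  | @insert a s ha ih =>
    have := (hf a (Finset.mem_insert_self a s)).add
      (ih fun i hi => hf i (Finset.mem_insert_of_mem hi))
    simpa [Finset.sum_insert ha] using this

lemma Nice.intervalIntegrable {f : ℝ → ℝ} (hh : 0 < h) (hf : Nice h f) :
    IntervalIntegrable f volume (-h) 0 := by
  obtain ⟨hfm, C, hC⟩ := hf
  rw [intervalIntegrable_iff_integrableOn_Ioc_of_le (by linarith)]
  have hmono : volume.restrict (Set.Ioc (-h) 0) ≤ volume.restrict (Set.Icc (-h) 0) :=
    Measure.restrict_mono Set.Ioc_subset_Icc_self le_rfl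
  refine Integrable.mono' (g := fun _ => C) (integrable_const C)
    ((hfm.mono_measure hmono).aestronglyMeasurable) ?_
  filter_upwards [ae_restrict_mem measurableSet_Ioc] with t ht
  exact hC t (Set.Ioc_subset_Icc_self ht)

/-! ### Matrix piecewise continuity -/

def PCMat {N : Type*} [Fintype N] (h : ℝ) (A : ℝ → Matrix N N ℝ) : Prop :=
  ∀ i j, PiecewiseCts h (fun t => A t i j)

lemma PCMat.det {N : Type*} [Fintype N] [DecidableEq N] {A : ℝ → Matrix N N ℝ}
    (hA : PCMat h A) : PiecewiseCts h (fun t => (A t).det) := by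
  have : (fun t => (A t).det)
      = fun t => ∑ σ : Equiv.Perm N, (Equiv.Perm.sign σ : ℝ) * ∏ i, A t (σ i) i := by
    funext t; rw [Matrix.det_apply']
  rw [this]
  refine PiecewiseCts.sum _ _ (fun σ _ => ?_)
  exact (PiecewiseCts.const _).mul (PiecewiseCts.prod _ _ (fun i _ => hA _ _))

lemma PCMat.adjugate {N : Type*} [Fintype N] [DecidableEq N] {A : ℝ → Matrix N N ℝ}
    (hA : PCMat h A) : PCMat h (fun t => (A t).adjugate) := by
  intro i j
  have : (fun t => (A t).adjugate i j)
      = fun t => ((A t).updateRow j (Pi.single i 1)).det := by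
    funext t; rw [Matrix.adjugate_apply]
  rw [this]
  refine PCMat.det (fun a b => ?_)
  rcases eq_or_ne a j with rfl | hne
  · simp only [Matrix.updateRow_self]
    exact PiecewiseCts.const _
  · simp only [Matrix.updateRow_ne hne]
    exact hA a b

lemma PCMat.inv {N : Type*} [Fintype N] [DecidableEq N] {A : ℝ → Matrix N N ℝ} {c : ℝ}
    (hc : 0 < c) (hA : PCMat h A) (hdet : ∀ t ∈ Set.Icc (-h) 0, c ≤ (A t).det) :
    PCMat h (fun t => (A t)⁻¹) := by
  intro i j
  have : (fun t => (A t)⁻¹ i j) = fun t => ((A t).det)⁻¹ * (A t).adjugate i j := by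
    funext t
    rw [Matrix.inv_def, Ring.inverse_eq_inv]
    simp [Matrix.smul_apply, smul_eq_mul]
  rw [this]
  exact (PiecewiseCts.inv hc hA.det hdet).mul (hA.adjugate i j)

/-! ### Positivity facts -/

lemma eigenvalues_ge {N : Type*} [Fintype N] [DecidableEq N] {D : Matrix N N ℝ} {ε : ℝ}
    (hD : D.IsHermitian) (hPSD : (D - ε • (1 : Matrix N N ℝ)).PosSemidef) (i : N) :
    ε ≤ hD.eigenvalues i := by
  set v : N → ℝ := ⇑(hD.eigenvectorBasis i) with hv
  have h0 := hPSD.dotProduct_mulVec_nonneg v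
  have hvmul : (D - ε • (1 : Matrix N N ℝ)) *ᵥ v = D *ᵥ v - ε • v := by
    rw [Matrix.sub_mulVec, Matrix.smul_mulVec, Matrix.one_mulVec]
  have hnorm : dotProduct (star v) v = 1 := by
    have := hD.eigenvectorBasis.orthonormal.1 i
    have h2 : (inner ℝ (hD.eigenvectorBasis i) (hD.eigenvectorBasis i) : ℝ) = 1 := by
      rw [real_inner_self_eq_norm_sq, this]; norm_num
    rwa [EuclideanSpace.inner_eq_star_dotProduct] at h2
  have hval : hD.eigenvalues i = dotProduct (star v) (D *ᵥ v) := by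
    rw [hD.eigenvalues_eq]
    simp [RCLike.re_to_real, hv]
  rw [hvmul, dotProduct_sub, dotProduct_smul, hnorm] at h0
  rw [hval]
  simp only [smul_eq_mul, mul_one] at h0
  linarith

lemma det_ge_pow {N : Type*} [Fintype N] [DecidableEq N] {D : Matrix N N ℝ} {ε : ℝ}
    (hε : 0 < ε) (hD : D.IsHermitian) (hPSD : (D - ε • (1 : Matrix N N ℝ)).PosSemidef) :
    ε ^ (Fintype.card N) ≤ D.det := by
  rw [hD.det_eq_prod_eigenvalues]
  have : (ε : ℝ) ^ (Fintype.card N) = ∏ _i : N, ε := by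
    rw [Finset.prod_const, Finset.card_univ]
  rw [this]
  push_cast
  exact Finset.prod_le_prod (fun i _ => le_of_lt hε)
    (fun i _ => eigenvalues_ge hD hPSD i)

lemma posDef_of_shift {N : Type*} [Fintype N] [DecidableEq N] {D : Matrix N N ℝ} {ε : ℝ}
    (hε : 0 < ε) (hD : D.IsHermitian) (hPSD : (D - ε • (1 : Matrix N N ℝ)).PosSemidef) :
    D.PosDef := by
  refine Matrix.posDef_iff_dotProduct_mulVec.2 ⟨hD, fun x hx => ?_⟩
  have h0 := hPSD.dotProduct_mulVec_nonneg x
  have hvmul : (D - ε • (1 : Matrix N N ℝ)) *ᵥ x = D *ᵥ x - ε • x := by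
    rw [Matrix.sub_mulVec, Matrix.smul_mulVec, Matrix.one_mulVec]
  rw [hvmul, dotProduct_sub, dotProduct_smul] at h0
  have hpos : 0 < dotProduct (star x) x := Matrix.dotProduct_star_self_pos_iff.2 hx
  have : (0:ℝ) < ε * dotProduct (star x) x := mul_pos hε hpos
  simp only [smul_eq_mul] at h0
  linarith

/-- symmetrized block view -/
def toBlk (M : Matrix (Fin (m + n)) (Fin (m + n)) ℝ) :
    Matrix (Fin m ⊕ Fin n) (Fin m ⊕ Fin n) ℝ :=
  M.submatrix finSumFinEquiv finSumFinEquiv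

lemma append_eq_elim_comp (x : Fin m → ℝ) (y : Fin n → ℝ) :
    Fin.append x y = Sum.elim x y ∘ (finSumFinEquiv (m := m) (n := n)).symm := by
  funext i
  obtain ⟨j, rfl⟩ := finSumFinEquiv.surjective i
  rcases j with j | j
  · simp [finSumFinEquiv_apply_left, Fin.append_left]
  · simp [finSumFinEquiv_apply_right, Fin.append_right]

lemma quad_transfer (M : Matrix (Fin (m + n)) (Fin (m + n)) ℝ) (x : Fin m → ℝ)
    (y : Fin n → ℝ) :
    Fin.append x y ⬝ᵥ M *ᵥ Fin.append x y
      = Sum.elim x y ⬝ᵥ (toBlk M) *ᵥ Sum.elim x y := by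
  rw [toBlk, Matrix.submatrix_mulVec_equiv, append_eq_elim_comp,
    comp_equiv_symm_dotProduct]

lemma toBlk_blk22 (M : Matrix (Fin (m + n)) (Fin (m + n)) ℝ) :
    (toBlk M).toBlocks₂₂ = blk22 m n M := by
  ext i j
  simp [toBlk, blk22, Matrix.toBlocks₂₂, finSumFinEquiv_apply_right]

lemma toBlk_embedUL (T : Matrix (Fin m) (Fin m) ℝ) :
    toBlk (embedUL m n T) = Matrix.fromBlocks T 0 0 0 := by
  simp [toBlk, embedUL, Matrix.reindex_apply, Matrix.submatrix_submatrix]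

lemma toBlk_add (M N : Matrix (Fin (m + n)) (Fin (m + n)) ℝ) :
    toBlk (M + N) = toBlk M + toBlk N := by
  ext i j; simp [toBlk]

lemma toBlk_posSemidef {M : Matrix (Fin (m + n)) (Fin (m + n)) ℝ} :
    (toBlk M).PosSemidef ↔ M.PosSemidef :=
  Matrix.posSemidef_submatrix_equiv finSumFinEquiv

lemma toBlk_isSymm {M : Matrix (Fin (m + n)) (Fin (m + n)) ℝ} (hM : M.IsSymm) :
    (toBlk M).IsSymm := by
  ext i j
  simp only [Matrix.transpose_apply, toBlk, Matrix.submatrix_apply]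
  exact congrFun (congrFun hM _) _ |>.symm ▸ (by rw [← hM]; rfl)

lemma isSymm_toBlocks₂₁ {A : Matrix (Fin m ⊕ Fin n) (Fin m ⊕ Fin n) ℝ} (hA : A.IsSymm) :
    A.toBlocks₂₁ = A.toBlocks₁₂ᵀ := by
  ext i j
  simp only [Matrix.toBlocks₂₁, Matrix.toBlocks₁₂, Matrix.transpose_apply, Matrix.of_apply]
  conv_lhs => rw [← hA]
  rfl

lemma isSymm_toBlocks₁₁ {A : Matrix (Fin m ⊕ Fin n) (Fin m ⊕ Fin n) ℝ} (hA : A.IsSymm) :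
    A.toBlocks₁₁.IsSymm := by
  ext i j
  simp only [Matrix.toBlocks₁₁, Matrix.transpose_apply, Matrix.of_apply]
  conv_lhs => rw [← hA]
  rfl

lemma isSymm_toBlocks₂₂ {A : Matrix (Fin m ⊕ Fin n) (Fin m ⊕ Fin n) ℝ} (hA : A.IsSymm) :
    A.toBlocks₂₂.IsSymm := by
  ext i j
  simp only [Matrix.toBlocks₂₂, Matrix.transpose_apply, Matrix.of_apply]
  conv_lhs => rw [← hA]
  rfl

lemma isSymm_iff_isHermitian {N' : Type*} {A : Matrix N' N' ℝ} : A.IsSymm ↔ A.IsHermitian := by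
  rw [Matrix.IsHermitian, Matrix.conjTranspose_eq_transpose_of_trivial, Matrix.IsSymm]

/-- the key completing-the-square decomposition, specialized to ℝ -/
lemma decomp (A : Matrix (Fin m) (Fin m) ℝ) (B : Matrix (Fin m) (Fin n) ℝ)
    (D : Matrix (Fin n) (Fin n) ℝ) (hD : D.IsHermitian) [Invertible D]
    (x : Fin m → ℝ) (y : Fin n → ℝ) :
    Sum.elim x y ⬝ᵥ (Matrix.fromBlocks A B Bᵀ D) *ᵥ Sum.elim x y
      = ((D⁻¹ * Bᵀ) *ᵥ x + y) ⬝ᵥ D *ᵥ ((D⁻¹ * Bᵀ) *ᵥ x + y)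
        + x ⬝ᵥ (A - B * D⁻¹ * Bᵀ) *ᵥ x := by
  have hBt : Bᵀ = Bᴴ := (Matrix.conjTranspose_eq_transpose_of_trivial B).symm
  have := Matrix.schur_complement_eq₂₂ A B (D := D) x y hD
  have hstar : ∀ (k : Type) (v : Fin n → ℝ), True := fun _ _ => trivial
  rw [hBt]
  rw [Matrix.dotProduct_mulVec, Matrix.dotProduct_mulVec, Matrix.dotProduct_mulVec]
  have hsx : star (Sum.elim x y) = Sum.elim x y := by simp [star_trivial]
  have h1 : star ((D⁻¹ * Bᴴ) *ᵥ x + y) = (D⁻¹ * Bᴴ) *ᵥ x + y := by simp [star_trivial]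
  have h2 : star x = x := by simp [star_trivial]
  rw [← hsx, ← h1, ← h2] at *
  exact this

lemma iiSum {ι : Type*} {a b : ℝ} (s : Finset ι) (f : ι → ℝ → ℝ)
    (hf : ∀ i ∈ s, IntervalIntegrable (f i) volume a b) :
    IntervalIntegrable (fun t => ∑ i ∈ s, f i t) volume a b := by
  classical
  induction s using Finset.induction_on with
  | empty => simpa using intervalIntegrable_const (c := (0:ℝ))
  | @insert c s hc ih =>
    have := (hf c (Finset.mem_insert_self c s)).add
      (ih fun i hi => hf i (Finset.mem_insert_of_mem hi))
    simpa [Finset.sum_insert hc] using this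

lemma Nice.quadForm {N' : Type*} [Fintype N'] {A : ℝ → Matrix N' N' ℝ} {v w : ℝ → N' → ℝ}
    (hA : ∀ i j, Nice h fun t => A t i j) (hv : ∀ i, Nice h fun t => v t i)
    (hw : ∀ i, Nice h fun t => w t i) : Nice h (fun t => v t ⬝ᵥ (A t) *ᵥ w t) := by
  have hrw : (fun t => v t ⬝ᵥ (A t) *ᵥ w t)
      = fun t => ∑ i, ∑ j, v t i * (A t i j * w t j) := by
    funext t; simp [dotProduct, Matrix.mulVec, Finset.mul_sum]
  rw [hrw]
  exact Nice.sum _ _ fun i _ => Nice.sum _ _ fun j _ => (hv i).mul ((hA i j).mul (hw j))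

lemma embed_quad (T : Matrix (Fin m) (Fin m) ℝ) (x : Fin m → ℝ) (y : Fin n → ℝ) :
    Fin.append x y ⬝ᵥ (embedUL m n T) *ᵥ Fin.append x y = x ⬝ᵥ T *ᵥ x := by
  rw [quad_transfer, toBlk_embedUL, Matrix.fromBlocks_mulVec]
  simp [sumElim_dotProduct_sumElim]

lemma embedUL_pc {T : ℝ → Matrix (Fin m) (Fin m) ℝ}
    (hT : ∀ i j, PiecewiseCts h fun t => T t i j) :
    ∀ i j, PiecewiseCts h fun t => embedUL m n (T t) i j := by
  intro i j
  obtain ⟨a, rfl⟩ := finSumFinEquiv.surjective i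
  obtain ⟨b, rfl⟩ := finSumFinEquiv.surjective j
  have : (fun t => embedUL m n (T t) (finSumFinEquiv a) (finSumFinEquiv b))
      = fun t => Matrix.fromBlocks (T t) (0 : Matrix (Fin m) (Fin n) ℝ) 0 0 a b := by
    funext t
    simp [embedUL, Matrix.reindex_apply, Matrix.submatrix_apply]
  rw [this]
  rcases a with a | a <;> rcases b with b | b
  · exact hT a b
  all_goals simpa using PiecewiseCts.const (h := h) 0

lemma backward (hh : 0 < h)
    (M : ℝ → Matrix (Fin (n + n)) (Fin (n + n)) ℝ)
    (hMpc : ∀ i j, PiecewiseCts h fun t => M t i j)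
    (T : ℝ → Matrix (Fin n) (Fin n) ℝ)
    (hTpc : ∀ i j, PiecewiseCts h fun t => T t i j)
    (hTpos : ∀ t ∈ Set.Icc (-h) 0, (M t + embedUL n n (T t)).PosSemidef)
    (hTint : ∀ i j, (∫ t in (-h)..0, T t i j) = 0)
    (y : ℝ → Fin n → ℝ) (hy : ContinuousOn y (Set.Icc (-h) 0)) :
    0 ≤ ∫ t in (-h)..0,
      Fin.append (y 0) (y t) ⬝ᵥ (M t).mulVec (Fin.append (y 0) (y t)) := by
  set x := y 0 with hx
  set v : ℝ → Fin (n + n) → ℝ := fun t => Fin.append x (y t) with hv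
  have hvnice : ∀ i, Nice h (fun t => v t i) := by
    intro i
    obtain ⟨a, rfl⟩ := finSumFinEquiv.surjective i
    rcases a with a | a
    · have : (fun t => v t (finSumFinEquiv (Sum.inl a))) = fun _ => x a := by
        funext t; simp [hv, finSumFinEquiv_apply_left, Fin.append_left]
      rw [this]; exact Nice.const _
    · have : (fun t => v t (finSumFinEquiv (Sum.inr a))) = fun t => y t a := by
        funext t
        show Fin.append x (y t) (finSumFinEquiv (Sum.inr a)) = y t a
        rw [finSumFinEquiv_apply_right]
        exact Fin.append_right x (y t) a
      rw [this]
      exact Nice.of_continuousOn ((continuous_apply a).comp_continuousOn hy)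
  set q : ℝ → ℝ := fun t => v t ⬝ᵥ (M t + embedUL n n (T t)) *ᵥ v t with hq
  set r : ℝ → ℝ := fun t => x ⬝ᵥ (T t) *ᵥ x with hr
  have hiden : ∀ t, Fin.append x (y t) ⬝ᵥ (M t).mulVec (Fin.append x (y t)) = q t - r t := by
    intro t
    simp only [hq, hv, hr, Matrix.add_mulVec, dotProduct_add]
    rw [embed_quad (T t) x (y t)]
    ring
  have hqnice : Nice h q := by
    refine Nice.quadForm (fun i j => ?_) hvnice hvnice
    have : (fun t => (M t + embedUL n n (T t)) i j)
        = fun t => M t i j + embedUL n n (T t) i j := by funext t; simp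
    rw [this]
    have h1 := (hMpc i j).nice
    have h2 := (embedUL_pc hTpc i j).nice
    simpa [sub_neg_eq_add] using h1.add h2
  have hrnice : Nice h r :=
    Nice.quadForm (A := T) (v := fun _ => x) (w := fun _ => x)
      (fun i j => (hTpc i j).nice) (fun i => Nice.const _) (fun i => Nice.const _)
  have hsplit : (∫ t in (-h)..0, Fin.append x (y t) ⬝ᵥ (M t).mulVec (Fin.append x (y t)))
      = (∫ t in (-h)..0, q t) - ∫ t in (-h)..0, r t := by
    rw [← intervalIntegral.integral_sub (hqnice.intervalIntegrable hh)
      (hrnice.intervalIntegrable hh)]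
    exact intervalIntegral.integral_congr (fun t _ => hiden t)
  rw [hsplit]
  have hrzero : (∫ t in (-h)..0, r t) = 0 := by
    have hrw : r = fun t => ∑ i, ∑ j, (x i * x j) * T t i j := by
      funext t
      simp only [hr, dotProduct, Matrix.mulVec, Finset.mul_sum]
      refine Finset.sum_congr rfl fun i _ => Finset.sum_congr rfl fun j _ => by ring
    rw [hrw]
    beta_reduce
    rw [intervalIntegral.integral_finset_sum (f := fun (i : Fin n) t => ∑ j, x i * x j * T t i j)
      (fun i _ => iiSum Finset.univ _
        (fun j _ => (((Nice.const _).mul (hTpc i j).nice)).intervalIntegrable hh))]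
    refine Finset.sum_eq_zero fun i _ => ?_
    rw [intervalIntegral.integral_finset_sum (f := fun (j : Fin n) t => x i * x j * T t i j)
      (fun j _ => (((Nice.const _).mul (hTpc i j).nice)).intervalIntegrable hh)]
    refine Finset.sum_eq_zero fun j _ => ?_
    rw [intervalIntegral.integral_const_mul, hTint i j, mul_zero]
  rw [hrzero, sub_zero]
  refine intervalIntegral.integral_nonneg (by linarith) (fun u hu => ?_)
  have h0 := (hTpos u hu).dotProduct_mulVec_nonneg (v u)
  have hst : star (v u) = v u := funext fun i => star_trivial _
  rwa [hst] at h0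

noncomputable def del (k : ℕ) : ℝ := ((k : ℝ) + 1)⁻¹

lemma del_pos (k : ℕ) : 0 < del k := by
  have : (0:ℝ) < (k:ℝ) + 1 := by positivity
  exact inv_pos.2 this

lemma del_le_one (k : ℕ) : del k ≤ 1 := by
  rw [del]
  rw [inv_le_one_iff₀]
  right; linarith [Nat.cast_nonneg (α := ℝ) k]

lemma del_tendsto : Filter.Tendsto del Filter.atTop (nhds 0) := by
  have := tendsto_one_div_add_atTop_nhds_zero_nat (𝕜 := ℝ)
  rw [show del = fun k : ℕ => ((k : ℝ) + 1)⁻¹ from rfl]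
  simpa [one_div] using this

lemma del_eventually_lt {r : ℝ} (hr : 0 < r) : ∀ᶠ k in Filter.atTop, del k < r := by
  have := del_tendsto (Metric.ball_mem_nhds (0:ℝ) hr)
  filter_upwards [this] with k hk
  have : |del k| < r := by simpa [Real.dist_eq] using hk
  exact lt_of_le_of_lt (le_abs_self _) this

variable {n : ℕ}

lemma G_ii {G : ℝ → Fin n → ℝ} {CG : ℝ} (hGm : AEStronglyMeasurable G volume)
    (hGb : ∀ t, ‖G t‖ ≤ CG) (a b : ℝ) : IntervalIntegrable G volume a b := by
  constructor <;>
  · refine Integrable.mono' (g := fun _ => CG) (integrable_const CG)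
      (hGm.restrict) ?_
    exact Eventually.of_forall (fun t => hGb t)

noncomputable def wfun (G : ℝ → Fin n → ℝ) (k : ℕ) (t : ℝ) : Fin n → ℝ :=
  (del k)⁻¹ • ∫ s in t..(t + del k), G s

lemma w_cont {G : ℝ → Fin n → ℝ} {CG : ℝ} (hGm : AEStronglyMeasurable G volume)
    (hGb : ∀ t, ‖G t‖ ≤ CG) (k : ℕ) : Continuous (wfun G k) := by
  have hF : Continuous (fun t => ∫ s in (0:ℝ)..t, G s) :=
    intervalIntegral.continuous_primitive (fun a b => G_ii hGm hGb a b) 0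
  have hsplit : ∀ t : ℝ, (∫ s in t..(t + del k), G s)
      = (∫ s in (0:ℝ)..(t + del k), G s) - ∫ s in (0:ℝ)..t, G s := by
    intro t
    rw [← intervalIntegral.integral_interval_sub_left (G_ii hGm hGb 0 (t + del k))
      (G_ii hGm hGb 0 t)]
  have : wfun G k = fun t => (del k)⁻¹ •
      ((∫ s in (0:ℝ)..(t + del k), G s) - ∫ s in (0:ℝ)..t, G s) := by
    funext t; rw [wfun, hsplit]
  rw [this]
  exact ((hF.comp (continuous_id.add continuous_const)).sub hF).const_smul (del k)⁻¹

lemma w_bound {G : ℝ → Fin n → ℝ} {CG : ℝ} (hGm : AEStronglyMeasurable G volume)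
    (hGb : ∀ t, ‖G t‖ ≤ CG) (k : ℕ) (t : ℝ) : ‖wfun G k t‖ ≤ CG := by
  have h1 : ‖∫ s in t..(t + del k), G s‖ ≤ CG * |(t + del k) - t| :=
    intervalIntegral.norm_integral_le_of_norm_le_const (fun s _ => hGb s)
  have h2 : |(t + del k) - t| = del k := by
    rw [add_sub_cancel_left, abs_of_pos (del_pos k)]
  rw [h2] at h1
  rw [wfun, norm_smul, Real.norm_eq_abs, abs_of_pos (inv_pos.2 (del_pos k))]
  calc (del k)⁻¹ * ‖∫ s in t..(t + del k), G s‖ ≤ (del k)⁻¹ * (CG * del k) :=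
        mul_le_mul_of_nonneg_left h1 (le_of_lt (inv_pos.2 (del_pos k)))
    _ = CG := by field_simp [ne_of_gt (del_pos k)]

lemma w_tendsto {G : ℝ → Fin n → ℝ} {CG : ℝ} (hGm : AEStronglyMeasurable G volume)
    (hGb : ∀ t, ‖G t‖ ≤ CG) {t : ℝ} (hc : ContinuousAt G t) :
    Filter.Tendsto (fun k => wfun G k t) Filter.atTop (nhds (G t)) := by
  rw [Metric.tendsto_atTop]
  intro ε hε
  obtain ⟨r, hr, hball⟩ := Metric.continuousAt_iff.1 hc (ε/2) (by linarith)
  obtain ⟨N, hN⟩ := (del_eventually_lt hr).exists_forall_of_atTop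
  refine ⟨N, fun k hk => ?_⟩
  have hdk : del k < r := hN k hk
  have hkey : ‖wfun G k t - G t‖ ≤ ε/2 := by
    have hGt_int : IntervalIntegrable (fun _ : ℝ => G t) volume t (t + del k) :=
      intervalIntegrable_const
    have hint := G_ii hGm hGb t (t + del k)
    have heq : wfun G k t - G t = (del k)⁻¹ • ∫ s in t..(t + del k), (G s - G t) := by
      rw [intervalIntegral.integral_sub hint hGt_int, intervalIntegral.integral_const]
      rw [wfun, smul_sub, add_sub_cancel_left, smul_smul,
        inv_mul_cancel₀ (ne_of_gt (del_pos k)), one_smul]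
    rw [heq, norm_smul, Real.norm_eq_abs, abs_of_pos (inv_pos.2 (del_pos k))]
    have hbd : ‖∫ s in t..(t + del k), (G s - G t)‖ ≤ (ε/2) * |(t + del k) - t| := by
      refine intervalIntegral.norm_integral_le_of_norm_le_const (fun s hs => ?_)
      rw [Set.uIoc_of_le (by linarith [del_pos k])] at hs
      have : dist s t < r := by
        rw [Real.dist_eq, abs_of_pos (by linarith [hs.1] : (0:ℝ) < s - t)]
        linarith [hs.2, hdk, hs.1]
      exact le_of_lt (by simpa [dist_eq_norm] using hball this)
    have h2 : |(t + del k) - t| = del k := by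
      rw [add_sub_cancel_left, abs_of_pos (del_pos k)]
    rw [h2] at hbd
    calc (del k)⁻¹ * ‖∫ s in t..(t + del k), (G s - G t)‖
        ≤ (del k)⁻¹ * ((ε/2) * del k) :=
          mul_le_mul_of_nonneg_left hbd (le_of_lt (inv_pos.2 (del_pos k)))
      _ = ε/2 := by field_simp [ne_of_gt (del_pos k)]
  calc dist (wfun G k t) (G t) = ‖wfun G k t - G t‖ := dist_eq_norm _ _
    _ ≤ ε/2 := hkey
    _ < ε := by linarith

lemma PCMat.matmul {N : Type*} [Fintype N] {A B : ℝ → Matrix N N ℝ}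
    (hA : PCMat h A) (hB : PCMat h B) : PCMat h (fun t => A t * B t) := by
  intro i j
  have : (fun t => (A t * B t) i j) = fun t => ∑ l, A t i l * B t l j := by
    funext t; simp [Matrix.mul_apply]
  rw [this]
  exact PiecewiseCts.sum _ _ fun l _ => (hA i l).mul (hB l j)

lemma PCMat.matsub {N : Type*} [Fintype N] {A B : ℝ → Matrix N N ℝ}
    (hA : PCMat h A) (hB : PCMat h B) : PCMat h (fun t => A t - B t) := fun i j => by
  have : (fun t => (A t - B t) i j) = fun t => A t i j - B t i j := by
    funext t; simp
  rw [this]; exact (hA i j).sub (hB i j)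

lemma PCMat.transpose {N : Type*} [Fintype N] {A : ℝ → Matrix N N ℝ}
    (hA : PCMat h A) : PCMat h (fun t => (A t)ᵀ) := fun i j => hA j i

lemma PCMat.bound {N : Type*} [Fintype N] {A : ℝ → Matrix N N ℝ} (hA : PCMat h A) :
    ∃ C, 0 ≤ C ∧ ∀ t ∈ Set.Icc (-h) 0, ∀ i j, |A t i j| ≤ C := by
  classical
  choose C hC0 hC using fun p : N × N => (hA p.1 p.2).bound
  refine ⟨∑ p : N × N, C p, Finset.sum_nonneg fun p _ => hC0 p, fun t ht i j => ?_⟩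
  calc |A t i j| ≤ C (i, j) := hC (i, j) t ht
    _ ≤ ∑ p : N × N, C p :=
      Finset.single_le_sum (fun p _ => hC0 p) (Finset.mem_univ (i, j))

lemma vec_bound {N : Type*} [Fintype N] {g : ℝ → N → ℝ}
    (hg : ∀ i, PiecewiseCts h (fun t => g t i)) :
    ∃ C, 0 ≤ C ∧ ∀ t ∈ Set.Icc (-h) 0, ‖g t‖ ≤ C := by
  classical
  choose C hC0 hC using fun i : N => (hg i).bound
  refine ⟨∑ i : N, C i, Finset.sum_nonneg fun i _ => hC0 i, fun t ht => ?_⟩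
  rw [pi_norm_le_iff_of_nonneg (Finset.sum_nonneg fun i _ => hC0 i)]
  intro i
  calc ‖g t i‖ = |g t i| := rfl
    _ ≤ C i := hC i t ht
    _ ≤ ∑ i : N, C i := Finset.single_le_sum (fun i _ => hC0 i) (Finset.mem_univ i)

lemma quad_bound {N' : Type*} [Fintype N'] (A : Matrix N' N' ℝ) (v w : N' → ℝ)
    {cv cA cw : ℝ} (hv : ∀ i, |v i| ≤ cv) (hA : ∀ i j, |A i j| ≤ cA)
    (hw : ∀ i, |w i| ≤ cw) (hcv : 0 ≤ cv) (hcA : 0 ≤ cA) :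
    |v ⬝ᵥ A *ᵥ w| ≤ (Fintype.card N' : ℝ) ^ 2 * (cv * (cA * cw)) := by
  have h1 : v ⬝ᵥ A *ᵥ w = ∑ i, ∑ j, v i * (A i j * w j) := by
    simp [dotProduct, Matrix.mulVec, Finset.mul_sum]
  have hterm : ∀ i j, |v i * (A i j * w j)| ≤ cv * (cA * cw) := by
    intro i j
    rw [abs_mul, abs_mul]
    exact mul_le_mul (hv i) (mul_le_mul (hA i j) (hw j) (abs_nonneg _) hcA)
      (by positivity) hcv
  rw [h1]
  calc |∑ i, ∑ j, v i * (A i j * w j)| ≤ ∑ i, |∑ j, v i * (A i j * w j)| :=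
        Finset.abs_sum_le_sum_abs _ _
    _ ≤ ∑ i : N', ∑ j : N', |v i * (A i j * w j)| :=
        Finset.sum_le_sum fun i _ => Finset.abs_sum_le_sum_abs _ _
    _ ≤ ∑ _i : N', ∑ _j : N', cv * (cA * cw) :=
        Finset.sum_le_sum fun i _ => Finset.sum_le_sum fun j _ => hterm i j
    _ = (Fintype.card N' : ℝ) ^ 2 * (cv * (cA * cw)) := by
        simp [Finset.sum_const, Finset.card_univ, nsmul_eq_mul]
        ring

lemma quad_cont {N' : Type*} [Fintype N'] (A : Matrix N' N' ℝ) (c : N' → ℝ) :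
    Continuous fun v : N' → ℝ => (v - c) ⬝ᵥ A *ᵥ (v - c) := by
  have h1 : (fun v : N' → ℝ => (v - c) ⬝ᵥ A *ᵥ (v - c))
      = fun v => ∑ i, ∑ j, (v i - c i) * (A i j * (v j - c j)) := by
    funext v; simp [dotProduct, Matrix.mulVec, Finset.mul_sum]
  rw [h1]
  refine continuous_finset_sum _ fun i _ => continuous_finset_sum _ fun j _ => ?_
  exact (((continuous_apply i).sub continuous_const).mul
    (continuous_const.mul ((continuous_apply j).sub continuous_const)))

/-! ### Block functions -/


noncomputable def Afun (M : ℝ → Matrix (Fin (n + n)) (Fin (n + n)) ℝ) (t : ℝ) :=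
  (toBlk (M t)).toBlocks₁₁
noncomputable def Bfun (M : ℝ → Matrix (Fin (n + n)) (Fin (n + n)) ℝ) (t : ℝ) :=
  (toBlk (M t)).toBlocks₁₂
noncomputable def Dfun (M : ℝ → Matrix (Fin (n + n)) (Fin (n + n)) ℝ) (t : ℝ) :=
  (toBlk (M t)).toBlocks₂₂
noncomputable def Sfun (M : ℝ → Matrix (Fin (n + n)) (Fin (n + n)) ℝ) (t : ℝ) :=
  Afun M t - Bfun M t * (Dfun M t)⁻¹ * (Bfun M t)ᵀ
noncomputable def gvec (M : ℝ → Matrix (Fin (n + n)) (Fin (n + n)) ℝ) (x : Fin n → ℝ)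
    (t : ℝ) : Fin n → ℝ :=
  -(((Dfun M t)⁻¹ * (Bfun M t)ᵀ) *ᵥ x)

section Main
variable {M : ℝ → Matrix (Fin (n + n)) (Fin (n + n)) ℝ}

lemma pc_Afun (hMpc : ∀ i j, PiecewiseCts h fun t => M t i j) : PCMat h (Afun M) :=
  fun i j => hMpc _ _
lemma pc_Bfun (hMpc : ∀ i j, PiecewiseCts h fun t => M t i j) : PCMat h (Bfun M) :=
  fun i j => hMpc _ _
lemma pc_Dfun (hMpc : ∀ i j, PiecewiseCts h fun t => M t i j) : PCMat h (Dfun M) :=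
  fun i j => hMpc _ _

lemma hDsymm (hMsymm : ∀ t ∈ Set.Icc (-h) 0, (M t).IsSymm) :
    ∀ t ∈ Set.Icc (-h) 0, (Dfun M t).IsSymm :=
  fun t ht => isSymm_toBlocks₂₂ (toBlk_isSymm (hMsymm t ht))

lemma hDshift (hM22 : ∀ t ∈ Set.Icc (-h) 0,
      (blk22 n n (M t) - ε • (1 : Matrix (Fin n) (Fin n) ℝ)).PosSemidef) :
    ∀ t ∈ Set.Icc (-h) 0, (Dfun M t - ε • (1 : Matrix (Fin n) (Fin n) ℝ)).PosSemidef := by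
  intro t ht
  have := hM22 t ht
  rwa [← toBlk_blk22 (M t)] at this

lemma hDpd (hε : 0 < ε) (hMsymm : ∀ t ∈ Set.Icc (-h) 0, (M t).IsSymm)
    (hM22 : ∀ t ∈ Set.Icc (-h) 0,
      (blk22 n n (M t) - ε • (1 : Matrix (Fin n) (Fin n) ℝ)).PosSemidef) :
    ∀ t ∈ Set.Icc (-h) 0, (Dfun M t).PosDef :=
  fun t ht => posDef_of_shift hε (isSymm_iff_isHermitian.1 (hDsymm hMsymm t ht))
    (hDshift hM22 t ht)

lemma hDdet (hε : 0 < ε) (hMsymm : ∀ t ∈ Set.Icc (-h) 0, (M t).IsSymm)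
    (hM22 : ∀ t ∈ Set.Icc (-h) 0,
      (blk22 n n (M t) - ε • (1 : Matrix (Fin n) (Fin n) ℝ)).PosSemidef) :
    ∀ t ∈ Set.Icc (-h) 0, ε ^ n ≤ (Dfun M t).det := by
  intro t ht
  have := det_ge_pow hε (isSymm_iff_isHermitian.1 (hDsymm hMsymm t ht)) (hDshift hM22 t ht)
  rwa [Fintype.card_fin] at this

lemma pc_Dinv (hε : 0 < ε) (hMsymm : ∀ t ∈ Set.Icc (-h) 0, (M t).IsSymm)
    (hMpc : ∀ i j, PiecewiseCts h fun t => M t i j)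
    (hM22 : ∀ t ∈ Set.Icc (-h) 0,
      (blk22 n n (M t) - ε • (1 : Matrix (Fin n) (Fin n) ℝ)).PosSemidef) :
    PCMat h (fun t => (Dfun M t)⁻¹) :=
  PCMat.inv (pow_pos hε n) (pc_Dfun hMpc) (hDdet hε hMsymm hM22)

lemma pc_Sfun (hε : 0 < ε) (hMsymm : ∀ t ∈ Set.Icc (-h) 0, (M t).IsSymm)
    (hMpc : ∀ i j, PiecewiseCts h fun t => M t i j)
    (hM22 : ∀ t ∈ Set.Icc (-h) 0,
      (blk22 n n (M t) - ε • (1 : Matrix (Fin n) (Fin n) ℝ)).PosSemidef) :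
    PCMat h (Sfun M) :=
  PCMat.matsub (pc_Afun hMpc)
    (PCMat.matmul (PCMat.matmul (pc_Bfun hMpc) (pc_Dinv hε hMsymm hMpc hM22))
      (PCMat.transpose (pc_Bfun hMpc)))

lemma pc_gvec (hε : 0 < ε) (hMsymm : ∀ t ∈ Set.Icc (-h) 0, (M t).IsSymm)
    (hMpc : ∀ i j, PiecewiseCts h fun t => M t i j)
    (hM22 : ∀ t ∈ Set.Icc (-h) 0,
      (blk22 n n (M t) - ε • (1 : Matrix (Fin n) (Fin n) ℝ)).PosSemidef)
    (x : Fin n → ℝ) :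
    ∀ i, PiecewiseCts h (fun t => gvec M x t i) := by
  intro i
  have hE : PCMat h (fun t => (Dfun M t)⁻¹ * (Bfun M t)ᵀ) :=
    PCMat.matmul (pc_Dinv hε hMsymm hMpc hM22) (PCMat.transpose (pc_Bfun hMpc))
  have : (fun t => gvec M x t i)
      = fun t => -(∑ j, ((Dfun M t)⁻¹ * (Bfun M t)ᵀ) i j * x j) := by
    funext t; simp [gvec, Matrix.mulVec, dotProduct]
  rw [this]
  exact (PiecewiseCts.sum _ _ fun j _ => (hE i j).mul (PiecewiseCts.const _)).neg

lemma quad_iden (hε : 0 < ε) (hMsymm : ∀ t ∈ Set.Icc (-h) 0, (M t).IsSymm)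
    (hM22 : ∀ t ∈ Set.Icc (-h) 0,
      (blk22 n n (M t) - ε • (1 : Matrix (Fin n) (Fin n) ℝ)).PosSemidef)
    {t : ℝ} (ht : t ∈ Set.Icc (-h) 0) (x v : Fin n → ℝ) :
    Fin.append x v ⬝ᵥ (M t) *ᵥ Fin.append x v
      = (v - gvec M x t) ⬝ᵥ (Dfun M t) *ᵥ (v - gvec M x t) + x ⬝ᵥ (Sfun M t) *ᵥ x := by
  haveI : Invertible (Dfun M t) :=
    Matrix.invertibleOfIsUnitDet _ (isUnit_iff_ne_zero.2
      (ne_of_gt (hDpd hε hMsymm hM22 t ht).det_pos))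
  have hblocks : toBlk (M t) = Matrix.fromBlocks (Afun M t) (Bfun M t)
      ((Bfun M t)ᵀ) (Dfun M t) := by
    conv_lhs => rw [← Matrix.fromBlocks_toBlocks (toBlk (M t))]
    rw [isSymm_toBlocks₂₁ (toBlk_isSymm (hMsymm t ht))]
    rfl
  rw [quad_transfer, hblocks,
    decomp _ _ _ (isSymm_iff_isHermitian.1 (hDsymm hMsymm t ht)) x v]
  have hgv : ((Dfun M t)⁻¹ * (Bfun M t)ᵀ) *ᵥ x + v = v - gvec M x t := by
    rw [gvec, sub_neg_eq_add, add_comm]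
  rw [hgv, Sfun]

lemma toBlk_eq_fromBlocks {t : ℝ} (hs : (M t).IsSymm) :
    toBlk (M t) = Matrix.fromBlocks (Afun M t) (Bfun M t) ((Bfun M t)ᵀ) (Dfun M t) := by
  conv_lhs => rw [← Matrix.fromBlocks_toBlocks (toBlk (M t))]
  rw [isSymm_toBlocks₂₁ (toBlk_isSymm hs)]
  rfl

lemma Sfun_symm (hε : 0 < ε) (hMsymm : ∀ t ∈ Set.Icc (-h) 0, (M t).IsSymm)
    (hMpc : ∀ i j, PiecewiseCts h fun t => M t i j)
    (hM22 : ∀ t ∈ Set.Icc (-h) 0,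
      (blk22 n n (M t) - ε • (1 : Matrix (Fin n) (Fin n) ℝ)).PosSemidef) :
    ∀ t ∈ Set.Icc (-h) 0, (Sfun M t).IsSymm := by
  intro t ht
  have hA : (Afun M t)ᵀ = Afun M t := isSymm_toBlocks₁₁ (toBlk_isSymm (hMsymm t ht))
  have hD : (Dfun M t)ᵀ = Dfun M t := hDsymm hMsymm t ht
  show (Sfun M t)ᵀ = Sfun M t
  rw [Sfun, Matrix.transpose_sub, hA, Matrix.transpose_mul, Matrix.transpose_mul,
    Matrix.transpose_transpose, Matrix.transpose_nonsing_inv, hD, Matrix.mul_assoc]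

noncomputable def Sbar (M : ℝ → Matrix (Fin (n + n)) (Fin (n + n)) ℝ) (h : ℝ) :
    Matrix (Fin n) (Fin n) ℝ :=
  Matrix.of fun i j => ∫ t in (-h)..0, Sfun M t i j

lemma Sbar_symm (hh : 0 < h) (hε : 0 < ε)
    (hMsymm : ∀ t ∈ Set.Icc (-h) 0, (M t).IsSymm)
    (hMpc : ∀ i j, PiecewiseCts h fun t => M t i j)
    (hM22 : ∀ t ∈ Set.Icc (-h) 0,
      (blk22 n n (M t) - ε • (1 : Matrix (Fin n) (Fin n) ℝ)).PosSemidef) :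
    (Sbar M h)ᵀ = Sbar M h := by
  ext i j
  rw [Matrix.transpose_apply]
  show (∫ t in (-h)..0, Sfun M t j i) = ∫ t in (-h)..0, Sfun M t i j
  refine intervalIntegral.integral_congr ?_
  intro t ht
  rw [Set.uIcc_of_le (by linarith : -h ≤ (0:ℝ))] at ht
  have hsym := Sfun_symm hε hMsymm hMpc hM22 t ht
  have h2 : (Sfun M t)ᵀ i j = Sfun M t i j := by rw [hsym]
  simpa [Matrix.transpose_apply] using h2


lemma key_ineq (hh : 0 < h) (hε : 0 < ε)
    (hMsymm : ∀ t ∈ Set.Icc (-h) 0, (M t).IsSymm)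
    (hMpc : ∀ i j, PiecewiseCts h fun t => M t i j)
    (hM22 : ∀ t ∈ Set.Icc (-h) 0,
      (blk22 n n (M t) - ε • (1 : Matrix (Fin n) (Fin n) ℝ)).PosSemidef)
    (hyp : ∀ y : ℝ → Fin n → ℝ, ContinuousOn y (Set.Icc (-h) 0) →
        0 ≤ ∫ t in (-h)..0,
          Fin.append (y 0) (y t) ⬝ᵥ (M t).mulVec (Fin.append (y 0) (y t)))
    (x : Fin n → ℝ) :
    0 ≤ x ⬝ᵥ (Sbar M h) *ᵥ x := by
  classical
  set g : ℝ → Fin n → ℝ := gvec M x with hgdef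
  have hgpc : ∀ i, PiecewiseCts h (fun t => g t i) := pc_gvec hε hMsymm hMpc hM22 x
  obtain ⟨Cg, hCg0, hCgb⟩ := vec_bound hgpc
  -- the truncated version of g
  set G : ℝ → Fin n → ℝ := (Set.Icc (-h) 0).indicator g with hGdef
  have hGcomp : ∀ i, (fun t => G t i) = (Set.Icc (-h) 0).indicator (fun t => g t i) := by
    intro i; funext t
    by_cases ht : t ∈ Set.Icc (-h) 0
    · simp [hGdef, Set.indicator_of_mem ht]
    · simp [hGdef, Set.indicator_of_notMem ht]
  have hGm : AEStronglyMeasurable G volume := by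
    have : AEMeasurable G volume := by
      refine aemeasurable_pi (fun i => ?_)
      rw [hGcomp i, aemeasurable_indicator_iff measurableSet_Icc]
      exact (hgpc i).nice.1
    exact this.aestronglyMeasurable
  have hGb : ∀ t, ‖G t‖ ≤ Cg := by
    intro t
    by_cases ht : t ∈ Set.Icc (-h) 0
    · rw [hGdef, Set.indicator_of_mem ht]; exact hCgb t ht
    · rw [hGdef, Set.indicator_of_notMem ht]; simpa using hCg0
  have hGeqg : ∀ t ∈ Set.Icc (-h) 0, G t = g t := fun t ht => Set.indicator_of_mem ht g
  -- the approximating sequence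
  set Y : ℕ → ℝ → Fin n → ℝ :=
    fun k t => wfun G k t + (max 0 (1 + t / del k)) • (x - wfun G k 0) with hYdef
  have hYcont : ∀ k, Continuous (Y k) := by
    intro k
    refine (w_cont hGm hGb k).add ?_
    refine Continuous.smul (f := fun t : ℝ => max 0 (1 + t / del k)) ?_ continuous_const
    exact continuous_const.max (continuous_const.add (continuous_id.div_const _))
  have hY0 : ∀ k, Y k 0 = x := by
    intro k
    have h1 : max (0:ℝ) (1 + 0 / del k) = 1 := by
      rw [zero_div, add_zero]; exact max_eq_right zero_le_one
    simp only [hYdef, h1, one_smul]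
    abel
  have hYbd : ∀ k, ∀ t ∈ Set.Icc (-h) 0, ‖Y k t‖ ≤ 2 * Cg + ‖x‖ := by
    intro k t ht
    have hcoef : max (0:ℝ) (1 + t / del k) ≤ 1 := by
      have htle : t ≤ 0 := ht.2
      have : t / del k ≤ 0 := div_nonpos_iff.2 (Or.inr ⟨htle, le_of_lt (del_pos k)⟩)
      refine max_le zero_le_one (by linarith)
    have hcoef0 : 0 ≤ max (0:ℝ) (1 + t / del k) := le_max_left _ _
    calc ‖Y k t‖ ≤ ‖wfun G k t‖ + ‖(max 0 (1 + t / del k)) • (x - wfun G k 0)‖ :=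
          norm_add_le _ _
      _ ≤ Cg + 1 * (‖x‖ + Cg) := by
          refine add_le_add (w_bound hGm hGb k t) ?_
          rw [norm_smul, Real.norm_eq_abs, abs_of_nonneg hcoef0]
          refine mul_le_mul hcoef ?_ (norm_nonneg _) zero_le_one
          exact (norm_sub_le _ _).trans (add_le_add le_rfl (w_bound hGm hGb k 0))
      _ = 2 * Cg + ‖x‖ := by ring
  -- pointwise convergence of Y k t to g t off the bad set
  obtain ⟨CD, hCD0, hCDb⟩ := PCMat.bound (pc_Dfun (h := h) hMpc)
  -- bad set
  choose P hP1 _hP2 hP3 _hP4 using fun i => hgpc i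
  set Pstar : Finset ℝ := Finset.univ.biUnion P with hPstar
  have hYlim : ∀ t ∈ Set.Ioo (-h) 0, t ∉ (↑Pstar : Set ℝ) →
      Filter.Tendsto (fun k => Y k t) Filter.atTop (nhds (g t)) := by
    intro t ht htP
    have htIcc : t ∈ Set.Icc (-h) 0 := Set.Ioo_subset_Icc_self ht
    -- G is continuous at t
    have hgc : ContinuousAt g t := by
      rw [continuousAt_pi]
      intro i
      have hti : t ∉ (↑(P i) : Set ℝ) := fun hc =>
        htP (Finset.mem_coe.2 (Finset.mem_biUnion.2 ⟨i, Finset.mem_univ i,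
          Finset.mem_coe.1 hc⟩))
      have hcwa := hP3 i t ⟨htIcc, hti⟩
      exact hcwa.continuousAt (Icc_mem_nhds ht.1 ht.2)
    have hGc : ContinuousAt G t := by
      refine hgc.congr ?_
      have hIoo : Set.Ioo (-h) 0 ∈ nhds t := isOpen_Ioo.mem_nhds ht
      filter_upwards [hIoo] with s hs
      exact (Set.indicator_of_mem (Set.Ioo_subset_Icc_self hs) g).symm
    have hwlim : Filter.Tendsto (fun k => wfun G k t) Filter.atTop (nhds (G t)) :=
      w_tendsto hGm hGb hGc
    have hGt : G t = g t := hGeqg t htIcc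
    rw [hGt] at hwlim
    have hramp : Filter.Tendsto
        (fun k => (max 0 (1 + t / del k)) • (x - wfun G k 0)) Filter.atTop
        (nhds (0 : Fin n → ℝ)) := by
      have hev : ∀ᶠ k in Filter.atTop,
          (max 0 (1 + t / del k)) • (x - wfun G k 0) = (0 : Fin n → ℝ) := by
        filter_upwards [del_eventually_lt (show (0:ℝ) < -t by linarith [ht.2])] with k hk
        have hz : 1 + t / del k ≤ 0 := by
          have h1 : t / del k ≤ -1 := by
            rw [div_le_iff₀ (del_pos k)]
            linarith
          linarith
        rw [max_eq_left hz, zero_smul]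
      exact Filter.Tendsto.congr' (Filter.EventuallyEq.symm hev) tendsto_const_nhds
    have := hwlim.add hramp
    simpa using this
  -- the two parts of the integrand
  set φ : ℕ → ℝ → ℝ :=
    fun k t => (Y k t - g t) ⬝ᵥ (Dfun M t) *ᵥ (Y k t - g t) with hφdef
  set ψ : ℝ → ℝ := fun t => x ⬝ᵥ (Sfun M t) *ᵥ x with hψdef
  have hψnice : Nice h ψ :=
    Nice.quadForm (A := Sfun M) (v := fun _ => x) (w := fun _ => x)
      (fun i j => (pc_Sfun hε hMsymm hMpc hM22 i j).nice)
      (fun i => (PiecewiseCts.const _).nice) (fun i => (PiecewiseCts.const _).nice)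
  have hYgnice : ∀ k i, Nice h (fun t => Y k t i - g t i) := fun k i =>
    (Nice.of_continuousOn (((continuous_apply i).comp (hYcont k)).continuousOn)).sub
      (hgpc i).nice
  have hφnice : ∀ k, Nice h (φ k) := fun k =>
    Nice.quadForm (A := Dfun M) (v := fun t => Y k t - g t) (w := fun t => Y k t - g t)
      (fun i j => (pc_Dfun hMpc i j).nice) (fun i => hYgnice k i) (fun i => hYgnice k i)
  have hsplit : ∀ k, (∫ t in (-h)..0,
        Fin.append x (Y k t) ⬝ᵥ (M t) *ᵥ Fin.append x (Y k t))
      = (∫ t in (-h)..0, φ k t) + ∫ t in (-h)..0, ψ t := by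
    intro k
    rw [← intervalIntegral.integral_add ((hφnice k).intervalIntegrable hh)
      (hψnice.intervalIntegrable hh)]
    refine intervalIntegral.integral_congr ?_
    intro t ht
    rw [Set.uIcc_of_le (by linarith : -h ≤ (0:ℝ))] at ht
    exact quad_iden hε hMsymm hM22 ht x (Y k t)
  have hInonneg : ∀ k, 0 ≤ (∫ t in (-h)..0, φ k t) + ∫ t in (-h)..0, ψ t := by
    intro k
    have h0 := hyp (Y k) (hYcont k).continuousOn
    rw [hY0 k] at h0
    rwa [hsplit k] at h0
  -- dominated convergence for the φ part
  have hφlim : Filter.Tendsto (fun k => ∫ t in (-h)..0, φ k t) Filter.atTop (nhds 0) := by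
    have hrw : (fun k => ∫ t in (-h)..0, φ k t)
        = fun k => ∫ t in Set.Ioc (-h) 0, φ k t ∂volume := by
      funext k; exact intervalIntegral.integral_of_le (by linarith)
    rw [hrw]
    set ce : ℝ := 2 * Cg + ‖x‖ + Cg with hce
    have hce0 : 0 ≤ ce := by
      have := norm_nonneg x; rw [hce]; linarith
    set K : ℝ := (n : ℝ) ^ 2 * (ce * (CD * ce)) with hK
    have hdct := MeasureTheory.tendsto_integral_of_dominated_convergence
      (μ := volume.restrict (Set.Ioc (-h) 0)) (F := fun k t => φ k t)
      (f := fun _ => (0:ℝ)) (bound := fun _ => K)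
      (fun k => ((hφnice k).1.mono_measure
        (Measure.restrict_mono Set.Ioc_subset_Icc_self le_rfl)).aestronglyMeasurable)
      (by
        refine MeasureTheory.integrableOn_const ?_
        rw [Real.volume_Ioc]
        exact ENNReal.ofReal_ne_top)
      (by
        intro k
        filter_upwards [ae_restrict_mem measurableSet_Ioc] with t ht
        have htIcc := Set.Ioc_subset_Icc_self ht
        rw [Real.norm_eq_abs]
        have hvb : ∀ i, |Y k t i - g t i| ≤ ce := by
          intro i
          have h1 : |Y k t i| ≤ 2 * Cg + ‖x‖ :=
            le_trans (norm_le_pi_norm (Y k t) i) (hYbd k t htIcc)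
          have h2 : |g t i| ≤ Cg := le_trans (norm_le_pi_norm (g t) i) (hCgb t htIcc)
          have h3 := abs_add_le (Y k t i) (-(g t i))
          rw [abs_neg] at h3
          rw [sub_eq_add_neg, hce]
          exact h3.trans (by linarith)
        have hq := quad_bound (Dfun M t) (Y k t - g t) (Y k t - g t)
          (cA := CD) hvb (fun i j => hCDb t htIcc i j) hvb hce0 hCD0
        rw [Fintype.card_fin] at hq
        exact hq)
      (by
        have hnull : volume ((↑Pstar : Set ℝ) ∪ {0}) = 0 := by
          refine measure_union_null (Pstar.finite_toSet.measure_zero _) ?_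
          exact Real.volume_singleton
        have hae0 : ∀ᵐ t ∂volume, t ∉ ((↑Pstar : Set ℝ) ∪ {0}) := by
          rw [MeasureTheory.measure_eq_zero_iff_ae_notMem] at hnull
          exact hnull
        have hae : ∀ᵐ t ∂(volume.restrict (Set.Ioc (-h) 0)),
            t ∉ ((↑Pstar : Set ℝ) ∪ {0}) := ae_restrict_of_ae hae0
        filter_upwards [hae, ae_restrict_mem measurableSet_Ioc] with t ht1 ht2
        have htne : t ≠ 0 := fun hc => ht1 (Or.inr (by simp [hc]))
        have htIoo : t ∈ Set.Ioo (-h) 0 := ⟨ht2.1, lt_of_le_of_ne ht2.2 htne⟩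
        have htP : t ∉ (↑Pstar : Set ℝ) := fun hc => ht1 (Or.inl hc)
        have hY := hYlim t htIoo htP
        have hcont := quad_cont (Dfun M t) (g t)
        have hcomp := (hcont.tendsto (g t)).comp hY
        have hval : (g t - g t) ⬝ᵥ Dfun M t *ᵥ (g t - g t) = 0 := by simp
        rw [hval] at hcomp
        exact hcomp)
    simpa using hdct
  have hItend : Filter.Tendsto
      (fun k => (∫ t in (-h)..0, φ k t) + ∫ t in (-h)..0, ψ t)
      Filter.atTop (nhds (0 + ∫ t in (-h)..0, ψ t)) :=
    hφlim.add tendsto_const_nhds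
  rw [zero_add] at hItend
  have hψ0 : 0 ≤ ∫ t in (-h)..0, ψ t :=
    ge_of_tendsto hItend (Filter.Eventually.of_forall hInonneg)
  have hfinal : (∫ t in (-h)..0, ψ t) = x ⬝ᵥ (Sbar M h) *ᵥ x := by
    have hψrw : ψ = fun t => ∑ i, ∑ j, (x i * x j) * Sfun M t i j := by
      funext t
      simp only [hψdef, dotProduct, Matrix.mulVec, Finset.mul_sum]
      exact Finset.sum_congr rfl fun i _ => Finset.sum_congr rfl fun j _ => by ring
    rw [hψrw]
    have hSii : ∀ i j, IntervalIntegrable (fun t => Sfun M t i j) volume (-h) 0 :=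
      fun i j => (pc_Sfun hε hMsymm hMpc hM22 i j).nice.intervalIntegrable hh
    rw [intervalIntegral.integral_finset_sum
      (f := fun (i : Fin n) t => ∑ j, (x i * x j) * Sfun M t i j)
      (fun i _ => iiSum Finset.univ _
        (fun j _ => ((Nice.const _).mul (pc_Sfun hε hMsymm hMpc hM22 i j).nice).intervalIntegrable hh))]
    have hx : x ⬝ᵥ (Sbar M h) *ᵥ x = ∑ i, ∑ j, (x i * x j) * (∫ t in (-h)..0, Sfun M t i j) := by
      simp only [dotProduct, Matrix.mulVec, Finset.mul_sum, Sbar, Matrix.of_apply]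
      exact Finset.sum_congr rfl fun i _ => Finset.sum_congr rfl fun j _ => by ring
    rw [hx]
    refine Finset.sum_congr rfl fun i _ => ?_
    rw [intervalIntegral.integral_finset_sum
      (f := fun (j : Fin n) t => (x i * x j) * Sfun M t i j)
      (fun j _ => ((Nice.const _).mul (pc_Sfun hε hMsymm hMpc hM22 i j).nice).intervalIntegrable hh)]
    refine Finset.sum_congr rfl fun j _ => ?_
    rw [intervalIntegral.integral_const_mul]
  rw [← hfinal]
  exact hψ0

end Main

end St4Helpers

open MeasureTheory in
set_option maxHeartbeats 2000000 in
/-- Let `M : [-h,0] → S^{2n}` be piecewise continuous with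
`M₂₂(t) ⪰ ε I` for all `t`.  Then `∫_{-h}^0 [y(0); y(t)]ᵀ M(t) [y(0); y(t)] dt ≥ 0` for
every continuous `y : [-h,0] → ℝⁿ` iff there is a piecewise continuous `T : [-h,0] → Sⁿ`
with `M(t) + [[T(t),0],[0,0]] ⪰ 0` for all `t ∈ [-h,0]` and `∫_{-h}^0 T(t) dt = 0`. -/
theorem statement4 (n : ℕ) (h ε : ℝ) (hh : 0 < h) (hε : 0 < ε)
    (M : ℝ → Matrix (Fin (n + n)) (Fin (n + n)) ℝ)
    (hMsymm : ∀ t ∈ Set.Icc (-h) 0, (M t).IsSymm)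
    (hMpc : ∀ i j, PiecewiseCts h fun t => M t i j)
    (hM22 : ∀ t ∈ Set.Icc (-h) 0,
      (blk22 n n (M t) - ε • (1 : Matrix (Fin n) (Fin n) ℝ)).PosSemidef) :
    (∀ y : ℝ → Fin n → ℝ, ContinuousOn y (Set.Icc (-h) 0) →
        0 ≤ ∫ t in (-h)..0,
          Fin.append (y 0) (y t) ⬝ᵥ (M t).mulVec (Fin.append (y 0) (y t))) ↔
      ∃ T : ℝ → Matrix (Fin n) (Fin n) ℝ,
        (∀ i j, PiecewiseCts h fun t => T t i j) ∧
        (∀ t ∈ Set.Icc (-h) 0, (T t).IsSymm) ∧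
        (∀ t ∈ Set.Icc (-h) 0, (M t + embedUL n n (T t)).PosSemidef) ∧
        (∀ i j, (∫ t in (-h)..0, T t i j) = 0) := by
  classical
  constructor
  · -- forward direction
    intro hyp
    set Sb : Matrix (Fin n) (Fin n) ℝ := Sbar M h with hSb
    have hSpc : PCMat h (Sfun M) := pc_Sfun hε hMsymm hMpc hM22
    have hSsymm : ∀ t ∈ Set.Icc (-h) 0, (Sfun M t).IsSymm :=
      Sfun_symm hε hMsymm hMpc hM22
    have hSbsymm : Sbᵀ = Sb := Sbar_symm hh hε hMsymm hMpc hM22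
    refine ⟨fun t => h⁻¹ • Sb - Sfun M t, ?_, ?_, ?_, ?_⟩
    · -- piecewise continuity
      intro i j
      have hfun : (fun t => (h⁻¹ • Sb - Sfun M t) i j)
          = fun t => h⁻¹ * Sb i j - Sfun M t i j := by
        funext t; simp [Matrix.sub_apply, Matrix.smul_apply, smul_eq_mul]
      rw [hfun]
      exact (PiecewiseCts.const _).sub (hSpc i j)
    · -- symmetry
      intro t ht
      show (h⁻¹ • Sb - Sfun M t)ᵀ = h⁻¹ • Sb - Sfun M t
      rw [Matrix.transpose_sub, Matrix.transpose_smul, hSbsymm, hSsymm t ht]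
    · -- positive semidefiniteness
      intro t ht
      haveI : Invertible (Dfun M t) :=
        Matrix.invertibleOfIsUnitDet _ (isUnit_iff_ne_zero.2
          (ne_of_gt (hDpd hε hMsymm hM22 t ht).det_pos))
      rw [← toBlk_posSemidef, toBlk_add, toBlk_embedUL,
        toBlk_eq_fromBlocks (hMsymm t ht), Matrix.fromBlocks_add]
      simp only [add_zero]
      rw [← Matrix.conjTranspose_eq_transpose_of_trivial (Bfun M t)]
      rw [Matrix.PosDef.fromBlocks₂₂ _ _ (hDpd hε hMsymm hM22 t ht)]
      rw [Matrix.conjTranspose_eq_transpose_of_trivial]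
      have hSchur : Afun M t + (h⁻¹ • Sb - Sfun M t)
          - Bfun M t * (Dfun M t)⁻¹ * (Bfun M t)ᵀ = h⁻¹ • Sb := by
        rw [Sfun]; abel
      rw [hSchur]
      refine Matrix.PosSemidef.of_dotProduct_mulVec_nonneg ?_ ?_
      · apply isSymm_iff_isHermitian.1
        show (h⁻¹ • Sb)ᵀ = h⁻¹ • Sb
        rw [Matrix.transpose_smul, hSbsymm]
      · intro v
        have hst : star v = v := funext fun _ => star_trivial _
        rw [hst, Matrix.smul_mulVec, dotProduct_smul, smul_eq_mul]
        exact mul_nonneg (inv_nonneg.2 hh.le)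
          (key_ineq hh hε hMsymm hMpc hM22 hyp v)
    · -- zero integral
      intro i j
      have hfun : (fun t => (h⁻¹ • Sb - Sfun M t) i j)
          = fun t => h⁻¹ * Sb i j - Sfun M t i j := by
        funext t; simp [Matrix.sub_apply, Matrix.smul_apply, smul_eq_mul]
      show (∫ t in (-h)..0, (h⁻¹ • Sb - Sfun M t) i j) = 0
      rw [show (fun t => (h⁻¹ • Sb - Sfun M t) i j)
          = fun t => h⁻¹ * Sb i j - Sfun M t i j from hfun] -- may be redundant
      rw [intervalIntegral.integral_sub intervalIntegrable_const
        ((hSpc i j).nice.intervalIntegrable hh)]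
      rw [intervalIntegral.integral_const]
      have hS : (∫ t in (-h)..0, Sfun M t i j) = Sb i j := rfl
      rw [hS, sub_neg_eq_add, zero_add, smul_eq_mul]
      field_simp
      ring
  · -- backward direction
    rintro ⟨T, hTpc, hTsymm, hTpos, hTint⟩ y hy
    exact backward hh M hMpc T hTpc hTpos hTint y hy
end

section
/- The linear map J : C([−h, 0], ℝⁿ) → ℝ^{nk(d+1)} defined by J φ = ∫_{−h}^{0} Z_{n,d}(t) φ(t) dt is surjective; that is, rank J = nk(d+1). -/
open Matrix MeasureTheory intervalIntegral Set

/-- Given delays `0 = h₀ < h₁ < ⋯ < h_k` (encoded by `hs : Fin (k+1) → ℝ`), the interval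
`H₁ = [-h₁, 0]` (for `i = 0`) resp. `H_{i+1} = [-h_{i+1}, -h_i)` (for `i ≥ 1`); these
partition `[-h_k, 0]`. -/
def Hint (k : ℕ) (hs : Fin (k + 1) → ℝ) (i : Fin k) : Set ℝ :=
  if (i : ℕ) = 0 then Set.Icc (-(hs i.succ)) 0
  else Set.Ico (-(hs i.succ)) (-(hs i.castSucc))

/-- `Z_{n,d}(t) = g(t) ⊗ I_n ⊗ z(t)`, where `g` is the vector of indicator functions of
the intervals `H₁, …, H_k` and `z(t) = (1, t, …, t^d)ᵀ`; a matrix of size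
`nk(d+1) × n` (rows indexed by `Fin k × ι × Fin (d+1)` with `ι ≃ Fin n`). -/
noncomputable def Zmat (k d : ℕ) (hs : Fin (k + 1) → ℝ) (ι : Type) [DecidableEq ι]
    (t : ℝ) : Matrix (Fin k × ι × Fin (d + 1)) ι ℝ :=
  Matrix.of fun p b =>
    (Hint k hs p.1).indicator (fun _ => (1 : ℝ)) t *
      (if p.2.1 = b then t ^ (p.2.2 : ℕ) else 0)



lemma polyzero {m : ℕ} {a b : ℝ} (hab : a < b) (c : Fin m → ℝ)
    (h : ∀ t ∈ Set.Ioo a b, ∑ l : Fin m, c l * t ^ (l : ℕ) = 0) : c = 0 := by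
  set P : Polynomial ℝ := ∑ l : Fin m, Polynomial.monomial (l : ℕ) (c l) with hP
  have hev : ∀ t, P.eval t = ∑ l : Fin m, c l * t ^ (l : ℕ) := by
    intro t
    simp [hP, Polynomial.eval_finset_sum, Polynomial.eval_monomial]
  have hP0 : P = 0 := by
    apply Polynomial.eq_zero_of_infinite_isRoot
    apply (Set.Ioo_infinite hab).mono
    intro t ht
    simp only [Set.mem_setOf_eq, Polynomial.IsRoot, hev, h t ht]
  funext l
  have h2 := congrArg (fun q => Polynomial.coeff q (l : ℕ)) hP0
  simp only [hP, Polynomial.finset_sum_coeff, Polynomial.coeff_monomial,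
    Polynomial.coeff_zero] at h2
  rw [Finset.sum_eq_single l] at h2
  · simpa using h2
  · intro l' _ hl'
    exact if_neg (fun h => hl' (Fin.ext h))
  · simp

lemma integral_mul_polysum {m : ℕ} (a b : ℝ) (f : ℝ → ℝ) (hf : Continuous f) (c : Fin m → ℝ) :
    (∫ t in a..b, f t * (∑ l : Fin m, c l * t ^ (l : ℕ))) =
      ∑ l : Fin m, c l * ∫ t in a..b, f t * t ^ (l : ℕ) := by
  have h1 : ∀ t, f t * (∑ l : Fin m, c l * t ^ (l : ℕ))
      = ∑ l : Fin m, c l * (f t * t ^ (l : ℕ)) := by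
    intro t; rw [Finset.mul_sum]; exact Finset.sum_congr rfl fun l _ => by ring
  simp only [h1]
  rw [intervalIntegral.integral_finset_sum]
  · exact Finset.sum_congr rfl fun l _ => intervalIntegral.integral_const_mul _ _
  · intro l _
    exact ((continuous_const.mul (hf.mul (continuous_pow _))).intervalIntegrable _ _)

lemma moment_surj {m : ℕ} {a b : ℝ} (hab : a < b) (w : Fin m → ℝ) :
    ∃ f : ℝ → ℝ, Continuous f ∧ (∀ t, t ∉ Set.Ioo a b → f t = 0) ∧
      ∀ j : Fin m, (∫ t in a..b, t ^ (j : ℕ) * f t) = w j := by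
  set M : Matrix (Fin m) (Fin m) ℝ :=
    Matrix.of (fun j l => ∫ t in a..b, ((t - a) * (b - t) * t ^ (j : ℕ)) * t ^ (l : ℕ)) with hM
  have hgc : ∀ j : ℕ, Continuous (fun t : ℝ => (t - a) * (b - t) * t ^ j) := by
    intro j; fun_prop
  have hMmul : ∀ (c : Fin m → ℝ) (j : Fin m), M.mulVec c j =
      ∫ t in a..b, ((t - a) * (b - t) * t ^ (j : ℕ)) * (∑ l : Fin m, c l * t ^ (l : ℕ)) := by
    intro c j
    rw [integral_mul_polysum a b _ (hgc j) c]
    simp only [Matrix.mulVec, dotProduct, hM, Matrix.of_apply]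
    exact Finset.sum_congr rfl fun l _ => mul_comm _ _
  -- injectivity of mulVec
  have hinj : Function.Injective M.mulVecLin := by
    rw [injective_iff_map_eq_zero]
    intro c hc
    have hc' : ∀ j, M.mulVec c j = 0 := fun j => congrFun hc j
    set P : ℝ → ℝ := fun t => ∑ l : Fin m, c l * t ^ (l : ℕ) with hPdef
    have hPc : Continuous P := by
      apply continuous_finset_sum
      intro l _; fun_prop
    have key : (∫ t in a..b, ((t - a) * (b - t) * P t) * P t) = 0 := by
      rw [integral_mul_polysum a b _ (by fun_prop) c]
      apply Finset.sum_eq_zero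
      intro l _
      have : (∫ t in a..b, ((t - a) * (b - t) * P t) * t ^ (l : ℕ))
          = ∫ t in a..b, ((t - a) * (b - t) * t ^ (l : ℕ)) * P t := by
        apply intervalIntegral.integral_congr
        intro t _; ring
      rw [this, ← hMmul c l, hc' l, mul_zero]
    have hzero : ∀ t ∈ Set.Ioo a b, P t = 0 := by
      by_contra hcon
      push_neg at hcon
      obtain ⟨t0, ht0, hPt0⟩ := hcon
      set F : ℝ → ℝ := fun t => ((t - a) * (b - t) * P t) * P t with hFdef
      have hFc : Continuous F := by fun_prop
      have hFnn : 0 ≤ᵐ[volume.restrict (Set.uIoc a b)] F := by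
        apply ae_restrict_of_forall_mem measurableSet_uIoc
        intro t ht
        rw [Set.uIoc_of_le hab.le] at ht
        have h1 : a ≤ t := ht.1.le
        have h2 : t ≤ b := ht.2
        have : F t = (t - a) * (b - t) * (P t) ^ 2 := by simp [hFdef]; ring
        rw [this]
        exact mul_nonneg (mul_nonneg (by linarith) (by linarith)) (sq_nonneg _)
      have hFi : IntervalIntegrable F volume a b := hFc.intervalIntegrable _ _
      have hiff := intervalIntegral.integral_pos_iff_support_of_nonneg_ae' hFnn hFi
      have hnot : ¬ (0 < volume (Function.support F ∩ Set.Ioc a b)) := by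
        intro hpos
        have : (0:ℝ) < ∫ t in a..b, F t := hiff.mpr ⟨hab, hpos⟩
        rw [key] at this
        exact lt_irrefl 0 this
      apply hnot
      have hUopen : IsOpen ((fun t => (t - a) * (b - t) * P t * P t) ⁻¹' Set.Ioi 0 ∩ Set.Ioo a b) :=
        (isOpen_Ioi.preimage hFc).inter isOpen_Ioo
      have hUsub : ((fun t => (t - a) * (b - t) * P t * P t) ⁻¹' Set.Ioi 0 ∩ Set.Ioo a b)
          ⊆ Function.support F ∩ Set.Ioc a b := by
        intro t ⟨h1, h2⟩
        exact ⟨ne_of_gt h1, h2.1, h2.2.le⟩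
      have hUne : t0 ∈ (fun t => (t - a) * (b - t) * P t * P t) ⁻¹' Set.Ioi 0 ∩ Set.Ioo a b := by
        refine ⟨?_, ht0⟩
        have h1 : 0 < t0 - a := by linarith [ht0.1]
        have h2 : 0 < b - t0 := by linarith [ht0.2]
        have h3 : 0 < P t0 * P t0 := mul_self_pos.mpr hPt0
        show 0 < (t0 - a) * (b - t0) * P t0 * P t0
        nlinarith [mul_pos (mul_pos h1 h2) h3]
      exact lt_of_lt_of_le (hUopen.measure_pos volume ⟨t0, hUne⟩) (measure_mono hUsub)
    exact polyzero hab c hzero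
  have hsurj : Function.Surjective M.mulVecLin :=
    (LinearMap.injective_iff_surjective).mp hinj
  obtain ⟨c, hc⟩ := hsurj w
  refine ⟨fun t => max ((t - a) * (b - t)) 0 * ∑ l : Fin m, c l * t ^ (l : ℕ), by fun_prop, ?_, ?_⟩
  · intro t ht
    have hle : (t - a) * (b - t) ≤ 0 := by
      rcases le_or_gt t a with h | h
      · have : 0 < b - t := by linarith
        nlinarith
      · have : b ≤ t := by
          by_contra hbt
          exact ht ⟨h, lt_of_not_ge hbt⟩
        nlinarith
    exact mul_eq_zero_of_left (max_eq_right hle) _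
  · intro j
    have heq : Set.EqOn (fun t => t ^ (j : ℕ) * (max ((t - a) * (b - t)) 0 * ∑ l : Fin m, c l * t ^ (l : ℕ)))
        (fun t => ((t - a) * (b - t) * t ^ (j : ℕ)) * ∑ l : Fin m, c l * t ^ (l : ℕ))
        (Set.uIcc a b) := by
      intro t ht
      rw [Set.uIcc_of_le hab.le] at ht
      have h0 : 0 ≤ (t - a) * (b - t) := mul_nonneg (by linarith [ht.1]) (by linarith [ht.2])
      simp only [max_eq_left h0]
      ring
    rw [intervalIntegral.integral_congr heq, ← hMmul c j]
    have : M.mulVec c = w := hc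
    rw [this]

theorem statement7 (n k d : ℕ) (hk : 0 < k) (hs : Fin (k + 1) → ℝ)
    (hs0 : hs 0 = 0) (hmono : StrictMono hs)
    (v : Fin k × Fin n × Fin (d + 1) → ℝ) :
    ∃ φ : ℝ → Fin n → ℝ,
      ContinuousOn φ (Set.Icc (-(hs (Fin.last k))) 0) ∧
      ∀ p, (∫ t in (-(hs (Fin.last k)))..0,
        ((Zmat k d hs (Fin n) t).mulVec (φ t)) p) = v p := by
  have hab : ∀ i : Fin k, -(hs i.succ) < -(hs i.castSucc) :=
    fun i => neg_lt_neg (hmono (Fin.castSucc_lt_succ : i.castSucc < i.succ))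
  choose f hfc hfz hfint using fun q : Fin k × Fin n =>
    moment_surj (hab q.1) (fun j : Fin (d + 1) => v (q.1, q.2, j))
  refine ⟨fun t b => ∑ i : Fin k, f (i, b) t, ?_, ?_⟩
  · exact (continuous_pi fun b => continuous_finset_sum _ fun i _ => hfc (i, b)).continuousOn
  rintro ⟨i, b, j⟩
  have hIoo_sub : Set.Ioo (-(hs i.succ)) (-(hs i.castSucc)) ⊆ Hint k hs i := by
    unfold Hint
    split_ifs with h0
    · have hc : i.castSucc = 0 := Fin.ext (by simpa using h0)
      rw [hc, hs0, neg_zero]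
      exact Set.Ioo_subset_Icc_self
    · exact Set.Ioo_subset_Ico_self
  have hHsub : Hint k hs i ⊆ Set.Icc (-(hs i.succ)) (-(hs i.castSucc)) := by
    unfold Hint
    split_ifs with h0
    · have hc : i.castSucc = 0 := Fin.ext (by simpa using h0)
      rw [hc, hs0, neg_zero]
    · exact Set.Ico_subset_Icc_self
  have hdisj : ∀ i' : Fin k, i' ≠ i →
      ∀ t ∈ Set.Icc (-(hs i.succ)) (-(hs i.castSucc)),
        t ∉ Set.Ioo (-(hs i'.succ)) (-(hs i'.castSucc)) := by
    intro i' hne t ht hmem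
    have hne' : (i' : ℕ) ≠ (i : ℕ) := fun h => hne (Fin.ext h)
    rcases hne'.lt_or_gt with hlt | hgt
    · have hle : hs i'.succ ≤ hs i.castSucc := by
        apply hmono.monotone
        rw [Fin.le_def]
        simp only [Fin.val_succ, Fin.coe_castSucc]
        omega
      linarith [ht.2, hmem.1]
    · have hle : hs i.succ ≤ hs i'.castSucc := by
        apply hmono.monotone
        rw [Fin.le_def]
        simp only [Fin.val_succ, Fin.coe_castSucc]
        omega
      linarith [ht.1, hmem.2]
  have hpt : ∀ t : ℝ,
      (Zmat k d hs (Fin n) t).mulVec (fun b' => ∑ i' : Fin k, f (i', b') t) (i, b, j)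
        = t ^ (j : ℕ) * f (i, b) t := by
    intro t
    have hmv : (Zmat k d hs (Fin n) t).mulVec (fun b' => ∑ i' : Fin k, f (i', b') t) (i, b, j)
        = (Hint k hs i).indicator (fun _ => (1 : ℝ)) t
          * (t ^ (j : ℕ) * ∑ i' : Fin k, f (i', b) t) := by
      simp only [Matrix.mulVec, dotProduct, Zmat, Matrix.of_apply]
      rw [Finset.sum_eq_single b]
      · simp [mul_assoc]
      · intro c _ hcb
        simp [show ¬(b = c) from fun h => hcb h.symm]
      · simp
    rw [hmv]
    by_cases ht : t ∈ Hint k hs i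
    · rw [Set.indicator_of_mem ht, one_mul]
      congr 1
      rw [Finset.sum_eq_single i]
      · intro i' _ hne
        exact hfz (i', b) t (hdisj i' hne t (hHsub ht))
      · simp
    · rw [Set.indicator_of_notMem ht, zero_mul,
        hfz (i, b) t (fun hmem => ht (hIoo_sub hmem)), mul_zero]
  have h1 : -(hs (Fin.last k)) ≤ -(hs i.succ) := by
    have : hs i.succ ≤ hs (Fin.last k) := by
      apply hmono.monotone
      rw [Fin.le_def]
      simp only [Fin.val_succ, Fin.val_last]
      omega
    linarith
  have h3 : -(hs i.castSucc) ≤ 0 := by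
    have : hs 0 ≤ hs i.castSucc := hmono.monotone (Fin.zero_le _)
    rw [hs0] at this; linarith
  have hInt : ∀ x y : ℝ, IntervalIntegrable (fun t => t ^ (j : ℕ) * f (i, b) t) volume x y :=
    fun x y => ((continuous_pow _).mul (hfc (i, b))).intervalIntegrable x y
  have key : (∫ t in (-(hs (Fin.last k)))..0, t ^ (j : ℕ) * f (i, b) t) = v (i, b, j) := by
    rw [← intervalIntegral.integral_add_adjacent_intervals (hInt _ (-(hs i.succ))) (hInt _ 0),
        ← intervalIntegral.integral_add_adjacent_intervals
          (hInt (-(hs i.succ)) (-(hs i.castSucc))) (hInt _ 0)]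
    have hz1 : (∫ t in (-(hs (Fin.last k)))..(-(hs i.succ)), t ^ (j : ℕ) * f (i, b) t) = 0 := by
      rw [intervalIntegral.integral_congr (g := fun _ => (0 : ℝ)) ?_,
        intervalIntegral.integral_zero]
      intro t ht
      rw [Set.uIcc_of_le h1] at ht
      show t ^ (j : ℕ) * f (i, b) t = 0
      rw [hfz (i, b) t (fun hmem => absurd hmem.1 (not_lt.mpr ht.2)), mul_zero]
    have hz3 : (∫ t in (-(hs i.castSucc))..0, t ^ (j : ℕ) * f (i, b) t) = 0 := by
      rw [intervalIntegral.integral_congr (g := fun _ => (0 : ℝ)) ?_,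
        intervalIntegral.integral_zero]
      intro t ht
      rw [Set.uIcc_of_le h3] at ht
      show t ^ (j : ℕ) * f (i, b) t = 0
      rw [hfz (i, b) t (fun hmem => absurd hmem.2 (not_lt.mpr ht.1)), mul_zero]
    rw [hz1, hz3, hfint (i, b) j]
    ring
  calc (∫ t in (-(hs (Fin.last k)))..0,
        (Zmat k d hs (Fin n) t).mulVec ((fun t b => ∑ i' : Fin k, f (i', b) t) t) (i, b, j))
      = ∫ t in (-(hs (Fin.last k)))..0, t ^ (j : ℕ) * f (i, b) t := by
        apply intervalIntegral.integral_congr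
        intro t _
        exact hpt t
    _ = v (i, b, j) := key
end

section
/- Let N : [−h, 0] × [−h, 0] → S^n be a symmetric binary piecewise polynomial matrix of degree at most d with respect to the partition H₁, …, H_k. Then ∫_{−h}^{0} ∫_{−h}^{0} φ(s)ᵀ N(s, t) φ(t) ds dt ≥ 0 for every continuous function φ : [−h, 0] → ℝⁿ if and only if there exists a positive semidefinite matrix Q ∈ S^{nk(d+1)} such that N(s, t) = Z_{n,d}(s)ᵀ Q Z_{n,d}(t) for all s, t ∈ [−h, 0]. -/
open Matrix

/-- `N : [-h,0]² → ℝ^{n×n}` is a binary piecewise polynomial matrix of degree at most `d`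
(w.r.t. the partition `H₁, …, H_k`): on each `H_i × H_j` it agrees with a matrix of
polynomials in `(s,t)` of degree at most `d` in each variable. -/
def IsBinPP (n k d : ℕ) (hs : Fin (k + 1) → ℝ)
    (N : ℝ → ℝ → Matrix (Fin n) (Fin n) ℝ) : Prop :=
  ∀ i j : Fin k, ∃ P : Matrix (Fin n) (Fin n) (MvPolynomial (Fin 2) ℝ),
    (∀ a b, (P a b).degreeOf 0 ≤ d ∧ (P a b).degreeOf 1 ≤ d) ∧
    ∀ s ∈ Hint k hs i, ∀ t ∈ Hint k hs j, ∀ a b,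
      N s t a b = MvPolynomial.eval ![s, t] (P a b)

open MeasureTheory Set

namespace Stmt8

variable {k : ℕ} {hs : Fin (k + 1) → ℝ}

/-- left endpoint -/
noncomputable def alp (hs : Fin (k + 1) → ℝ) (i : Fin k) : ℝ := -(hs i.succ)
/-- right endpoint -/
noncomputable def brp (hs : Fin (k + 1) → ℝ) (i : Fin k) : ℝ := -(hs i.castSucc)

lemma castSucc_zero' {i : Fin k} (h0 : (i : ℕ) = 0) : i.castSucc = 0 := by
  ext; simpa using h0

lemma Hint_subset_Icc_ab (hs0 : hs 0 = 0) (i : Fin k) :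
    Hint k hs i ⊆ Set.Icc (alp hs i) (brp hs i) := by
  intro t ht
  unfold Hint at ht
  split_ifs at ht with h0
  · refine ⟨ht.1, ?_⟩
    rw [brp, castSucc_zero' h0, hs0]
    simpa using ht.2
  · exact ⟨ht.1, le_of_lt ht.2⟩

lemma Ioo_subset_Hint (hs0 : hs 0 = 0) (i : Fin k) :
    Set.Ioo (alp hs i) (brp hs i) ⊆ Hint k hs i := by
  intro t ht
  unfold Hint
  split_ifs with h0
  · constructor
    · exact le_of_lt ht.1
    · have h2 := ht.2
      rw [brp, castSucc_zero' h0, hs0] at h2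
      simpa using le_of_lt h2
  · exact ⟨le_of_lt ht.1, ht.2⟩

lemma alp_lt_brp (hmono : StrictMono hs) (i : Fin k) : alp hs i < brp hs i := by
  have := hmono (Fin.castSucc_lt_succ (i := i))
  simp only [alp, brp]
  linarith

lemma Hint_subset_Icc (hs0 : hs 0 = 0) (hmono : StrictMono hs) (i : Fin k) :
    Hint k hs i ⊆ Set.Icc (-(hs (Fin.last k))) 0 := by
  intro t ht
  have h1 := Hint_subset_Icc_ab hs0 i ht
  constructor
  · refine le_trans ?_ h1.1
    simp only [alp, neg_le_neg_iff]
    exact hmono.monotone (Fin.le_last _)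
  · refine le_trans h1.2 ?_
    simp only [brp]
    have : hs 0 ≤ hs i.castSucc := hmono.monotone (Fin.zero_le _)
    rw [hs0] at this
    linarith

lemma Hint_disjoint_lt (hmono : StrictMono hs) {i j : Fin k}
    (h : i < j) {t : ℝ} (hi : t ∈ Hint k hs i) : t ∉ Hint k hs j := by
  intro hj
  have hj0 : (j : ℕ) ≠ 0 := by
    have : (i : ℕ) < (j : ℕ) := h
    omega
  unfold Hint at hj
  rw [if_neg hj0] at hj
  have ht2 : t < -(hs j.castSucc) := hj.2
  have ht1 : -(hs i.succ) ≤ t := by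
    unfold Hint at hi
    split_ifs at hi <;> exact hi.1
  have hle : i.succ ≤ j.castSucc := h
  have : hs i.succ ≤ hs j.castSucc := hmono.monotone hle
  linarith

lemma Hint_disjoint (hmono : StrictMono hs) {i j : Fin k}
    (hij : i ≠ j) {t : ℝ} (hi : t ∈ Hint k hs i) : t ∉ Hint k hs j := by
  rcases lt_or_gt_of_ne hij with h | h
  · exact Hint_disjoint_lt hmono h hi
  · intro hj
    exact Hint_disjoint_lt hmono h hj hi

lemma Hint_exists (hk : 0 < k) (hmono : StrictMono hs) {t : ℝ}
    (ht : t ∈ Set.Icc (-(hs (Fin.last k))) 0) : ∃ i, t ∈ Hint k hs i := by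
  -- the set of indices i with -(hs i.succ) ≤ t is nonempty
  classical
  have hne : (Finset.univ.filter (fun i : Fin k => -(hs i.succ) ≤ t)).Nonempty := by
    refine ⟨⟨k - 1, by omega⟩, ?_⟩
    simp only [Finset.mem_filter, Finset.mem_univ, true_and]
    have : (⟨k - 1, by omega⟩ : Fin k).succ = Fin.last k := by
      ext; simp; omega
    rw [this]
    exact ht.1
  set S := Finset.univ.filter (fun i : Fin k => -(hs i.succ) ≤ t) with hS
  obtain ⟨i, hiS, hmin⟩ := S.exists_min_image id hne
  have hi1 : -(hs i.succ) ≤ t := by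
    rw [hS] at hiS; simpa using hiS
  refine ⟨i, ?_⟩
  unfold Hint
  split_ifs with h0
  · exact ⟨hi1, ht.2⟩
  · refine ⟨hi1, ?_⟩
    by_contra hlt
    push_neg at hlt
    -- then i-1 is in S, contradicting minimality
    have hipos : 0 < (i : ℕ) := Nat.pos_of_ne_zero h0
    set i' : Fin k := ⟨(i : ℕ) - 1, by omega⟩ with hi'
    have hsucc : i'.succ = i.castSucc := by ext; simp [hi']; omega
    have hi'S : i' ∈ S := by
      rw [hS]
      simp only [Finset.mem_filter, Finset.mem_univ, true_and]
      rw [hsucc]; exact hlt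
    have := hmin i' hi'S
    simp only [id] at this
    have : (i : ℕ) ≤ (i' : ℕ) := this
    simp [hi'] at this
    omega

lemma Hint_measurable (i : Fin k) : MeasurableSet (Hint k hs i) := by
  unfold Hint
  split_ifs
  · exact measurableSet_Icc
  · exact measurableSet_Ico


variable {n d : ℕ}

lemma Zmat_apply_mem (hmono : StrictMono hs) {i : Fin k} {t : ℝ} (ht : t ∈ Hint k hs i)
    (p : Fin k × Fin n × Fin (d + 1)) (b : Fin n) :
    Zmat k d hs (Fin n) t p b =
      if p.1 = i then (if p.2.1 = b then t ^ (p.2.2 : ℕ) else 0) else 0 := by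
  unfold Zmat
  simp only [Matrix.of_apply]
  by_cases hp : p.1 = i
  · rw [if_pos hp, hp, Set.indicator_of_mem ht, one_mul]
  · rw [if_neg hp, Set.indicator_of_notMem (Hint_disjoint hmono (Ne.symm hp) ht), zero_mul]

lemma Zmat_mulVec (t : ℝ) (x : Fin n → ℝ) (p : Fin k × Fin n × Fin (d + 1)) :
    (Zmat k d hs (Fin n) t).mulVec x p =
      (Hint k hs p.1).indicator (fun _ => (1:ℝ)) t * (t ^ (p.2.2 : ℕ) * x p.2.1) := by
  unfold Zmat Matrix.mulVec dotProduct
  simp only [Matrix.of_apply]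
  rw [Finset.sum_eq_single p.2.1]
  · simp [mul_assoc]
  · intro b _ hb
    rw [if_neg (Ne.symm hb), mul_zero, zero_mul]
  · simp

lemma ZQZ_apply (hmono : StrictMono hs)
    (Q : Matrix (Fin k × Fin n × Fin (d + 1)) (Fin k × Fin n × Fin (d + 1)) ℝ)
    {i j : Fin k} {s t : ℝ} (hsi : s ∈ Hint k hs i) (htj : t ∈ Hint k hs j)
    (a b : Fin n) :
    ((Zmat k d hs (Fin n) s)ᵀ * Q * Zmat k d hs (Fin n) t) a b =
      ∑ p : Fin (d + 1), ∑ q : Fin (d + 1),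
        Q (i, a, p) (j, b, q) * s ^ (p : ℕ) * t ^ (q : ℕ) := by
  have hcol : ∀ r, (Q * Zmat k d hs (Fin n) t) r b =
      ∑ q : Fin (d + 1), Q r (j, b, q) * t ^ (q : ℕ) := by
    intro r
    rw [Matrix.mul_apply, Fintype.sum_prod_type]
    rw [Finset.sum_eq_single j]
    · rw [Fintype.sum_prod_type, Finset.sum_eq_single b]
      · exact Finset.sum_congr rfl fun q _ => by
          rw [Zmat_apply_mem hmono htj, if_pos rfl, if_pos rfl]
      · intro b' _ hb'
        refine Finset.sum_eq_zero fun q _ => ?_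
        rw [Zmat_apply_mem hmono htj, if_pos rfl, if_neg hb', mul_zero]
      · simp
    · intro j' _ hj'
      refine Finset.sum_eq_zero fun y _ => ?_
      rw [Zmat_apply_mem hmono htj]
      simp only [if_neg hj', mul_zero]
    · simp
  rw [Matrix.mul_assoc, Matrix.mul_apply]
  simp only [Matrix.transpose_apply, hcol]
  rw [Fintype.sum_prod_type]
  rw [Finset.sum_eq_single i]
  · rw [Fintype.sum_prod_type, Finset.sum_eq_single a]
    · refine Finset.sum_congr rfl fun p _ => ?_
      rw [Zmat_apply_mem hmono hsi, if_pos rfl, if_pos rfl, Finset.mul_sum]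
      refine Finset.sum_congr rfl fun q _ => by ring
    · intro a' _ ha'
      refine Finset.sum_eq_zero fun p _ => ?_
      rw [Zmat_apply_mem hmono hsi, if_pos rfl, if_neg ha', zero_mul]
    · simp
  · intro i' _ hi'
    refine Finset.sum_eq_zero fun y _ => ?_
    rw [Zmat_apply_mem hmono hsi]
    simp only [if_neg hi', zero_mul]
  · simp

/-- monomial exponent map -/
noncomputable def emap (d : ℕ) (pq : Fin (d + 1) × Fin (d + 1)) : Fin 2 →₀ ℕ :=
  Finsupp.single 0 (pq.1 : ℕ) + Finsupp.single 1 (pq.2 : ℕ)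

lemma emap_apply0 (pq : Fin (d + 1) × Fin (d + 1)) : emap d pq 0 = (pq.1 : ℕ) := by
  simp [emap]

lemma emap_apply1 (pq : Fin (d + 1) × Fin (d + 1)) : emap d pq 1 = (pq.2 : ℕ) := by
  simp [emap]

lemma emap_injective : Function.Injective (emap d) := by
  intro x y hxy
  have h0 := congrArg (fun f => f 0) hxy
  have h1 := congrArg (fun f => f 1) hxy
  simp only [emap_apply0, emap_apply1] at h0 h1
  exact Prod.ext (Fin.ext h0) (Fin.ext h1)

lemma evalPP (P : MvPolynomial (Fin 2) ℝ) (h0 : P.degreeOf 0 ≤ d) (h1 : P.degreeOf 1 ≤ d)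
    (s t : ℝ) :
    MvPolynomial.eval ![s, t] P =
      ∑ p : Fin (d + 1), ∑ q : Fin (d + 1),
        MvPolynomial.coeff (emap d (p, q)) P * s ^ (p : ℕ) * t ^ (q : ℕ) := by
  classical
  rw [MvPolynomial.eval_eq']
  rw [← Fintype.sum_prod_type']
  have key : ∀ pq : Fin (d + 1) × Fin (d + 1),
      MvPolynomial.coeff (emap d pq) P * s ^ (pq.1 : ℕ) * t ^ (pq.2 : ℕ) =
      MvPolynomial.coeff (emap d pq) P * ∏ i, ![s, t] i ^ (emap d pq) i := by
    intro pq
    rw [Fin.prod_univ_two]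
    simp [emap_apply0, emap_apply1, mul_assoc]
  calc ∑ m ∈ P.support, MvPolynomial.coeff m P * ∏ i, ![s, t] i ^ m i
      = ∑ m ∈ Finset.univ.image (emap d), MvPolynomial.coeff m P * ∏ i, ![s, t] i ^ m i := by
        refine Finset.sum_subset ?_ ?_
        · intro m hm
          have hm0 : m 0 ≤ d := le_trans (MvPolynomial.degreeOf_le_iff.mp le_rfl m hm) h0
          have hm1 : m 1 ≤ d := le_trans (MvPolynomial.degreeOf_le_iff.mp le_rfl m hm) h1
          refine Finset.mem_image.mpr ⟨(⟨m 0, by omega⟩, ⟨m 1, by omega⟩), Finset.mem_univ _, ?_⟩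
          ext i
          fin_cases i
          · simp [emap_apply0]
          · simp [emap_apply1]
        · intro m _ hm
          rw [MvPolynomial.notMem_support_iff.mp hm, zero_mul]
    _ = ∑ pq : Fin (d + 1) × Fin (d + 1),
          MvPolynomial.coeff (emap d pq) P * ∏ i, ![s, t] i ^ (emap d pq) i := by
        rw [Finset.sum_image (fun x _ y _ h => emap_injective h)]
    _ = ∑ pq : Fin (d + 1) × Fin (d + 1),
          MvPolynomial.coeff (emap d pq) P * s ^ (pq.1 : ℕ) * t ^ (pq.2 : ℕ) := by
        exact (Finset.sum_congr rfl fun pq _ => (key pq).symm)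

lemma ind_mul_eq (S : Set ℝ) (g : ℝ → ℝ) :
    (fun t => S.indicator (fun _ => (1:ℝ)) t * g t) = S.indicator g := by
  funext t
  by_cases ht : t ∈ S
  · simp [Set.indicator_of_mem ht]
  · simp [Set.indicator_of_notMem ht]

lemma neg_h_le (hs0 : hs 0 = 0) (hmono : StrictMono hs) : -(hs (Fin.last k)) ≤ 0 := by
  have : hs 0 ≤ hs (Fin.last k) := hmono.monotone (Fin.zero_le _)
  rw [hs0] at this
  linarith

lemma intervalIntegrable_ind (hs0 : hs 0 = 0) (hmono : StrictMono hs) (i : Fin k)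
    {g : ℝ → ℝ} (hg : ContinuousOn g (Set.Icc (-(hs (Fin.last k))) 0)) :
    IntervalIntegrable ((Hint k hs i).indicator g) volume (-(hs (Fin.last k))) 0 := by
  rw [intervalIntegrable_iff, Set.uIoc_of_le (neg_h_le hs0 hmono)]
  have h1 : IntegrableOn g (Set.Icc (-(hs (Fin.last k))) 0) volume :=
    hg.integrableOn_Icc
  have h2 := h1.indicator (Hint_measurable (hs := hs) i)
  exact h2.mono_set Set.Ioc_subset_Icc_self

lemma phi_integrable (hs0 : hs 0 = 0) (hmono : StrictMono hs)
    {φ : ℝ → Fin n → ℝ} (hφ : ContinuousOn φ (Set.Icc (-(hs (Fin.last k))) 0))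
    (q : Fin k × Fin n × Fin (d + 1)) :
    IntervalIntegrable (fun t => (Zmat k d hs (Fin n) t).mulVec (φ t) q)
      volume (-(hs (Fin.last k))) 0 := by
  have heq : (fun t => (Zmat k d hs (Fin n) t).mulVec (φ t) q) =
      (Hint k hs q.1).indicator (fun t => t ^ (q.2.2 : ℕ) * φ t q.2.1) := by
    rw [← ind_mul_eq]
    funext t
    rw [Zmat_mulVec]
  rw [heq]
  refine intervalIntegrable_ind hs0 hmono _ ?_
  exact ((continuous_pow _).continuousOn).mul ((continuousOn_pi.mp hφ) q.2.1)

lemma dot_ZQZ (Q : Matrix (Fin k × Fin n × Fin (d + 1)) (Fin k × Fin n × Fin (d + 1)) ℝ)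
    (s t : ℝ) (x y : Fin n → ℝ) :
    x ⬝ᵥ ((Zmat k d hs (Fin n) s)ᵀ * Q * Zmat k d hs (Fin n) t).mulVec y =
      (Zmat k d hs (Fin n) s *ᵥ x) ⬝ᵥ (Q *ᵥ (Zmat k d hs (Fin n) t *ᵥ y)) := by
  rw [Matrix.mul_assoc, ← Matrix.mulVec_mulVec, ← Matrix.mulVec_mulVec,
    Matrix.dotProduct_mulVec x, Matrix.vecMul_transpose]

lemma lemC (hs0 : hs 0 = 0) (hmono : StrictMono hs)
    (Q : Matrix (Fin k × Fin n × Fin (d + 1)) (Fin k × Fin n × Fin (d + 1)) ℝ)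
    (φ : ℝ → Fin n → ℝ)
    (hint : ∀ q, IntervalIntegrable (fun t => (Zmat k d hs (Fin n) t).mulVec (φ t) q)
      volume (-(hs (Fin.last k))) 0) :
    (∫ s in (-(hs (Fin.last k)))..0, ∫ t in (-(hs (Fin.last k)))..0,
        φ s ⬝ᵥ ((Zmat k d hs (Fin n) s)ᵀ * Q * Zmat k d hs (Fin n) t).mulVec (φ t)) =
      (fun q => ∫ t in (-(hs (Fin.last k)))..0, (Zmat k d hs (Fin n) t).mulVec (φ t) q) ⬝ᵥ
        Q.mulVec (fun q => ∫ t in (-(hs (Fin.last k)))..0,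
          (Zmat k d hs (Fin n) t).mulVec (φ t) q) := by
  set h := hs (Fin.last k)
  set y : ℝ → Fin k × Fin n × Fin (d + 1) → ℝ :=
    fun t => (Zmat k d hs (Fin n) t).mulVec (φ t) with hy
  set v : Fin k × Fin n × Fin (d + 1) → ℝ := fun q => ∫ t in (-h)..0, y t q with hv
  have hinner : ∀ s : ℝ, (∫ t in (-h)..0, φ s ⬝ᵥ
      ((Zmat k d hs (Fin n) s)ᵀ * Q * Zmat k d hs (Fin n) t).mulVec (φ t)) =
      y s ⬝ᵥ Q.mulVec v := by
    intro s
    have hptw : ∀ t, φ s ⬝ᵥ ((Zmat k d hs (Fin n) s)ᵀ * Q * Zmat k d hs (Fin n) t).mulVec (φ t)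
        = ∑ q, (y s ᵥ* Q) q * y t q := by
      intro t
      rw [dot_ZQZ, Matrix.dotProduct_mulVec]
      rfl
    calc (∫ t in (-h)..0, φ s ⬝ᵥ
          ((Zmat k d hs (Fin n) s)ᵀ * Q * Zmat k d hs (Fin n) t).mulVec (φ t))
        = ∫ t in (-h)..0, ∑ q, (y s ᵥ* Q) q * y t q := by
          exact intervalIntegral.integral_congr fun t _ => hptw t
      _ = ∑ q, ∫ t in (-h)..0, (y s ᵥ* Q) q * y t q := by
          exact intervalIntegral.integral_finset_sum
            (fun q _ => (hint q).const_mul _)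
      _ = ∑ q, (y s ᵥ* Q) q * v q := by
          exact Finset.sum_congr rfl fun q _ => intervalIntegral.integral_const_mul _ _
      _ = y s ⬝ᵥ Q.mulVec v := by rw [Matrix.dotProduct_mulVec]; rfl
  calc (∫ s in (-h)..0, ∫ t in (-h)..0, φ s ⬝ᵥ
        ((Zmat k d hs (Fin n) s)ᵀ * Q * Zmat k d hs (Fin n) t).mulVec (φ t))
      = ∫ s in (-h)..0, y s ⬝ᵥ Q.mulVec v := by
        exact intervalIntegral.integral_congr fun s _ => hinner s
    _ = ∫ s in (-h)..0, ∑ p, y s p * Q.mulVec v p := by rfl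
    _ = ∑ p, ∫ s in (-h)..0, y s p * Q.mulVec v p := by
        exact intervalIntegral.integral_finset_sum
          (fun p _ => (hint p).mul_const _)
    _ = ∑ p, v p * Q.mulVec v p := by
        exact Finset.sum_congr rfl fun p _ => intervalIntegral.integral_mul_const _ _
    _ = v ⬝ᵥ Q.mulVec v := rfl

noncomputable def bump (hs : Fin (k + 1) → ℝ) (i : Fin k) (t : ℝ) : ℝ :=
  max ((t - alp hs i) * (brp hs i - t)) 0

lemma bump_nonneg (i : Fin k) (t : ℝ) : 0 ≤ bump hs i t := le_max_right _ _

lemma bump_continuous (i : Fin k) : Continuous (bump hs i) :=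
  (((continuous_id.sub continuous_const).mul
    (continuous_const.sub continuous_id))).max continuous_const

lemma bump_eq_zero (hmono : StrictMono hs) {i : Fin k} {t : ℝ}
    (h : t ∉ Set.Ioo (alp hs i) (brp hs i)) : bump hs i t = 0 := by
  have hab := alp_lt_brp hmono i
  rw [Set.mem_Ioo] at h
  push_neg at h
  rcases le_or_gt t (alp hs i) with h1 | h1
  · exact max_eq_right (by nlinarith)
  · have h2 := h h1
    exact max_eq_right (by nlinarith)

lemma bump_pos (hmono : StrictMono hs) {i : Fin k} {t : ℝ}
    (h : t ∈ Set.Ioo (alp hs i) (brp hs i)) : 0 < bump hs i t := by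
  have : 0 < (t - alp hs i) * (brp hs i - t) := mul_pos (by linarith [h.1]) (by linarith [h.2])
  exact lt_max_iff.mpr (Or.inl this)

lemma bump_zero_of_mem_other (hs0 : hs 0 = 0) (hmono : StrictMono hs) {i j : Fin k}
    (hij : i ≠ j) {t : ℝ} (ht : t ∈ Hint k hs j) : bump hs i t = 0 := by
  refine bump_eq_zero hmono fun hIoo => ?_
  exact Hint_disjoint hmono hij (Ioo_subset_Hint hs0 i hIoo) ht

/-- test function -/
noncomputable def phiw (hs : Fin (k + 1) → ℝ) (n d : ℕ)
    (w : Fin k × Fin n × Fin (d + 1) → ℝ) : ℝ → Fin n → ℝ :=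
  fun t a => ∑ i : Fin k, bump hs i t * ∑ m : Fin (d + 1), w (i, a, m) * t ^ (m : ℕ)

lemma phiw_continuous (w : Fin k × Fin n × Fin (d + 1) → ℝ) :
    ContinuousOn (phiw hs n d w) (Set.Icc (-(hs (Fin.last k))) 0) := by
  refine continuousOn_pi.mpr fun a => Continuous.continuousOn ?_
  refine continuous_finset_sum _ fun i _ => (bump_continuous i).mul ?_
  exact continuous_finset_sum _ fun m _ => continuous_const.mul (continuous_pow _)

/-- Gram integral -/
noncomputable def gint (hs : Fin (k + 1) → ℝ) (j : Fin k) (e : ℕ) : ℝ :=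
  ∫ t in (-(hs (Fin.last k)))..0,
    (Hint k hs j).indicator (fun _ => (1:ℝ)) t * (bump hs j t * t ^ e)

/-- Gram matrix -/
noncomputable def Gmat (hs : Fin (k + 1) → ℝ) (n d : ℕ) :
    Matrix (Fin k × Fin n × Fin (d + 1)) (Fin k × Fin n × Fin (d + 1)) ℝ :=
  Matrix.of fun r c =>
    if r.1 = c.1 ∧ r.2.1 = c.2.1 then gint hs r.1 ((r.2.2 : ℕ) + (c.2.2 : ℕ)) else 0

lemma gint_integrable (hs0 : hs 0 = 0) (hmono : StrictMono hs) (j : Fin k) (e : ℕ) :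
    IntervalIntegrable (fun t => (Hint k hs j).indicator (fun _ => (1:ℝ)) t *
      (bump hs j t * t ^ e)) volume (-(hs (Fin.last k))) 0 := by
  rw [ind_mul_eq]
  exact intervalIntegrable_ind hs0 hmono j
    (((bump_continuous j).mul (continuous_pow e)).continuousOn)

lemma Gmat_mulVec (w : Fin k × Fin n × Fin (d + 1) → ℝ) (j : Fin k) (b : Fin n)
    (q : Fin (d + 1)) :
    (Gmat hs n d).mulVec w (j, b, q) =
      ∑ m : Fin (d + 1), gint hs j ((q : ℕ) + (m : ℕ)) * w (j, b, m) := by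
  unfold Matrix.mulVec dotProduct
  rw [Fintype.sum_prod_type]
  rw [Finset.sum_eq_single j]
  · rw [Fintype.sum_prod_type, Finset.sum_eq_single b]
    · refine Finset.sum_congr rfl fun m _ => ?_
      simp [Gmat]
    · intro b' _ hb'
      refine Finset.sum_eq_zero fun m _ => ?_
      simp [Gmat, Ne.symm hb']
    · intro hmem; exact absurd (Finset.mem_univ b) hmem
  · intro j' _ hj'
    refine Finset.sum_eq_zero fun y _ => ?_
    simp [Gmat, Ne.symm hj']
  · intro hmem; exact absurd (Finset.mem_univ j) hmem

lemma L_phiw (hs0 : hs 0 = 0) (hmono : StrictMono hs)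
    (w : Fin k × Fin n × Fin (d + 1) → ℝ) (q : Fin k × Fin n × Fin (d + 1)) :
    (∫ t in (-(hs (Fin.last k)))..0,
        (Zmat k d hs (Fin n) t).mulVec (phiw hs n d w t) q) =
      (Gmat hs n d).mulVec w q := by
  obtain ⟨j, b, qe⟩ := q
  have hptw : ∀ t, (Zmat k d hs (Fin n) t).mulVec (phiw hs n d w t) (j, b, qe) =
      ∑ m : Fin (d + 1), w (j, b, m) *
        ((Hint k hs j).indicator (fun _ => (1:ℝ)) t * (bump hs j t * t ^ ((qe : ℕ) + (m : ℕ)))) := by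
    intro t
    rw [Zmat_mulVec]
    by_cases ht : t ∈ Hint k hs j
    · rw [Set.indicator_of_mem ht]
      have hphi : phiw hs n d w t b = bump hs j t * ∑ m : Fin (d + 1), w (j, b, m) * t ^ (m : ℕ) := by
        unfold phiw
        rw [Finset.sum_eq_single j]
        · intro i _ hi
          rw [bump_zero_of_mem_other hs0 hmono hi ht, zero_mul]
        · intro hmem; exact absurd (Finset.mem_univ j) hmem
      rw [hphi]
      simp only [one_mul, Finset.mul_sum, pow_add]
      exact Finset.sum_congr rfl fun m _ => by ring
    · simp [Set.indicator_of_notMem ht]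
  calc (∫ t in (-(hs (Fin.last k)))..0,
        (Zmat k d hs (Fin n) t).mulVec (phiw hs n d w t) (j, b, qe))
      = ∫ t in (-(hs (Fin.last k)))..0, ∑ m : Fin (d + 1), w (j, b, m) *
          ((Hint k hs j).indicator (fun _ => (1:ℝ)) t *
            (bump hs j t * t ^ ((qe : ℕ) + (m : ℕ)))) := by
        exact intervalIntegral.integral_congr fun t _ => hptw t
    _ = ∑ m : Fin (d + 1), ∫ t in (-(hs (Fin.last k)))..0, w (j, b, m) *
          ((Hint k hs j).indicator (fun _ => (1:ℝ)) t *
            (bump hs j t * t ^ ((qe : ℕ) + (m : ℕ)))) := by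
        exact intervalIntegral.integral_finset_sum
          (fun m _ => (gint_integrable hs0 hmono j _).const_mul _)
    _ = ∑ m : Fin (d + 1), w (j, b, m) * gint hs j ((qe : ℕ) + (m : ℕ)) := by
        refine Finset.sum_congr rfl fun m _ => ?_
        rw [intervalIntegral.integral_const_mul]
        rfl
    _ = (Gmat hs n d).mulVec w (j, b, qe) := by
        rw [Gmat_mulVec]
        exact Finset.sum_congr rfl fun m _ => mul_comm _ _

lemma quad_Gmat (hs0 : hs 0 = 0) (hmono : StrictMono hs)
    (w : Fin k × Fin n × Fin (d + 1) → ℝ) :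
    w ⬝ᵥ (Gmat hs n d).mulVec w =
      ∑ jb : Fin k × Fin n, ∫ t in (-(hs (Fin.last k)))..0,
        (Hint k hs jb.1).indicator (fun _ => (1:ℝ)) t *
          (bump hs jb.1 t * (∑ m : Fin (d + 1), w (jb.1, jb.2, m) * t ^ (m : ℕ)) ^ 2) := by
  unfold dotProduct
  simp only [Fintype.sum_prod_type]
  refine Finset.sum_congr rfl fun j _ => Finset.sum_congr rfl fun b _ => ?_
  have hq : ∀ q : Fin (d + 1), w (j, b, q) * (Gmat hs n d).mulVec w (j, b, q) =
      ∑ m : Fin (d + 1), ∫ t in (-(hs (Fin.last k)))..0,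
        (Hint k hs j).indicator (fun _ => (1:ℝ)) t *
          (bump hs j t * (w (j, b, q) * w (j, b, m) * (t ^ (q : ℕ) * t ^ (m : ℕ)))) := by
    intro q
    rw [Gmat_mulVec, Finset.mul_sum]
    refine Finset.sum_congr rfl fun m _ => ?_
    symm
    calc (∫ t in (-(hs (Fin.last k)))..0, (Hint k hs j).indicator (fun _ => (1:ℝ)) t *
            (bump hs j t * (w (j, b, q) * w (j, b, m) * (t ^ (q:ℕ) * t ^ (m:ℕ)))))
        = ∫ t in (-(hs (Fin.last k)))..0, (w (j, b, q) * w (j, b, m)) *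
            ((Hint k hs j).indicator (fun _ => (1:ℝ)) t * (bump hs j t * t ^ ((q:ℕ) + (m:ℕ)))) := by
          refine intervalIntegral.integral_congr fun t _ => ?_
          rw [pow_add]; ring
      _ = (w (j, b, q) * w (j, b, m)) * gint hs j ((q:ℕ) + (m:ℕ)) := by
          rw [intervalIntegral.integral_const_mul]; rfl
      _ = w (j, b, q) * (gint hs j ((q:ℕ) + (m:ℕ)) * w (j, b, m)) := by ring
  calc ∑ q : Fin (d + 1), w (j, b, q) * (Gmat hs n d).mulVec w (j, b, q)
      = ∑ q : Fin (d + 1), ∑ m : Fin (d + 1), ∫ t in (-(hs (Fin.last k)))..0,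
          (Hint k hs j).indicator (fun _ => (1:ℝ)) t *
            (bump hs j t * (w (j, b, q) * w (j, b, m) * (t ^ (q : ℕ) * t ^ (m : ℕ)))) := by
        exact Finset.sum_congr rfl fun q _ => hq q
    _ = ∫ t in (-(hs (Fin.last k)))..0, ∑ q : Fin (d + 1), ∑ m : Fin (d + 1),
          (Hint k hs j).indicator (fun _ => (1:ℝ)) t *
            (bump hs j t * (w (j, b, q) * w (j, b, m) * (t ^ (q : ℕ) * t ^ (m : ℕ)))) := by
        have key : ∀ q m : Fin (d + 1), IntervalIntegrable (fun t =>
            (Hint k hs j).indicator (fun _ => (1:ℝ)) t *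
              (bump hs j t * (w (j, b, q) * w (j, b, m) * (t ^ (q : ℕ) * t ^ (m : ℕ)))))
            volume (-(hs (Fin.last k))) 0 := by
          intro q m
          have h1 := (gint_integrable hs0 hmono j ((q : ℕ) + (m : ℕ))).const_mul
            (w (j, b, q) * w (j, b, m))
          have heq : (fun t => (Hint k hs j).indicator (fun _ => (1:ℝ)) t *
              (bump hs j t * (w (j, b, q) * w (j, b, m) * (t ^ (q : ℕ) * t ^ (m : ℕ))))) =
              fun t => w (j, b, q) * w (j, b, m) *
                ((Hint k hs j).indicator (fun _ => (1:ℝ)) t *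
                  (bump hs j t * t ^ ((q : ℕ) + (m : ℕ)))) := by
            funext t
            rw [pow_add]
            ring
          rw [heq]
          exact h1
        have key2 : ∀ q : Fin (d + 1), IntervalIntegrable (fun t =>
            ∑ m : Fin (d + 1), (Hint k hs j).indicator (fun _ => (1:ℝ)) t *
              (bump hs j t * (w (j, b, q) * w (j, b, m) * (t ^ (q : ℕ) * t ^ (m : ℕ)))))
            volume (-(hs (Fin.last k))) 0 := by
          intro q
          have h2 := IntervalIntegrable.sum (μ := volume) Finset.univ (fun m _ => key q m)
          have h3 : (∑ m : Fin (d + 1), fun t => (Hint k hs j).indicator (fun _ => (1:ℝ)) t *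
              (bump hs j t * (w (j, b, q) * w (j, b, m) * (t ^ (q : ℕ) * t ^ (m : ℕ))))) =
              fun t => ∑ m : Fin (d + 1), (Hint k hs j).indicator (fun _ => (1:ℝ)) t *
                (bump hs j t * (w (j, b, q) * w (j, b, m) * (t ^ (q : ℕ) * t ^ (m : ℕ)))) := by
            funext t
            simp
          rwa [h3] at h2
        symm
        rw [intervalIntegral.integral_finset_sum (fun q _ => key2 q)]
        exact Finset.sum_congr rfl fun q _ =>
          intervalIntegral.integral_finset_sum (fun m _ => key q m)
    _ = ∫ t in (-(hs (Fin.last k)))..0,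
          (Hint k hs j).indicator (fun _ => (1:ℝ)) t *
            (bump hs j t * (∑ m : Fin (d + 1), w (j, b, m) * t ^ (m : ℕ)) ^ 2) := by
        refine intervalIntegral.integral_congr fun t _ => ?_
        rw [sq, Finset.sum_mul_sum]
        simp only [Finset.mul_sum]
        refine Finset.sum_congr rfl fun q _ => Finset.sum_congr rfl fun m _ => by ring

lemma quad_pos (hs0 : hs 0 = 0) (hmono : StrictMono hs)
    {w : Fin k × Fin n × Fin (d + 1) → ℝ} (hw : w ≠ 0) :
    0 < w ⬝ᵥ (Gmat hs n d).mulVec w := by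
  classical
  rw [quad_Gmat hs0 hmono]
  have hnn : ∀ jb : Fin k × Fin n, (0:ℝ) ≤ ∫ t in (-(hs (Fin.last k)))..0,
      (Hint k hs jb.1).indicator (fun _ => (1:ℝ)) t *
        (bump hs jb.1 t * (∑ m : Fin (d + 1), w (jb.1, jb.2, m) * t ^ (m : ℕ)) ^ 2) := by
    intro jb
    refine intervalIntegral.integral_nonneg (neg_h_le hs0 hmono) fun u _ => ?_
    exact mul_nonneg (Set.indicator_nonneg (fun _ _ => zero_le_one) u)
      (mul_nonneg (bump_nonneg _ _) (sq_nonneg _))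
  obtain ⟨r, hr⟩ : ∃ r, w r ≠ 0 := by
    by_contra hc
    push_neg at hc
    exact hw (funext hc)
  obtain ⟨j, b, m⟩ := r
  refine Finset.sum_pos' (fun jb _ => hnn jb) ⟨(j, b), Finset.mem_univ _, ?_⟩
  set p : Polynomial ℝ := ∑ q : Fin (d + 1), Polynomial.C (w (j, b, q)) * Polynomial.X ^ (q : ℕ)
    with hp
  have hpeval : ∀ t : ℝ, Polynomial.eval t p =
      ∑ q : Fin (d + 1), w (j, b, q) * t ^ (q : ℕ) := by
    intro t
    rw [hp, Polynomial.eval_finset_sum]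
    simp
  have hpcoeff : p.coeff (m : ℕ) = w (j, b, m) := by
    rw [hp, Polynomial.finset_sum_coeff]
    rw [Finset.sum_eq_single m]
    · simp
    · intro q _ hq
      have : (q : ℕ) ≠ (m : ℕ) := fun h => hq (Fin.ext h)
      simp [Polynomial.coeff_X_pow, this, Ne.symm this]
    · intro hmem; exact absurd (Finset.mem_univ m) hmem
  have hp0 : p ≠ 0 := fun h => hr (by rw [← hpcoeff, h, Polynomial.coeff_zero])
  set F : ℝ → ℝ := fun t => (Hint k hs j).indicator (fun _ => (1:ℝ)) t *
      (bump hs j t * (∑ q : Fin (d + 1), w (j, b, q) * t ^ (q : ℕ)) ^ 2) with hF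
  have hFnn : ∀ t, 0 ≤ F t := fun t =>
    mul_nonneg (Set.indicator_nonneg (fun _ _ => zero_le_one) t)
      (mul_nonneg (bump_nonneg _ _) (sq_nonneg _))
  have hFint : IntervalIntegrable F volume (-(hs (Fin.last k))) 0 := by
    rw [hF, ind_mul_eq]
    refine intervalIntegrable_ind hs0 hmono j ?_
    refine ((bump_continuous j).mul ?_).continuousOn
    exact (continuous_finset_sum _ fun q _ => continuous_const.mul (continuous_pow _)).pow 2
  rcases (hnn (j, b)).lt_or_eq with hlt | heq
  · exact hlt
  exfalso
  have hzero : F =ᵐ[volume.restrict (Set.Ioc (-(hs (Fin.last k))) 0)] 0 := by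
    refine (intervalIntegral.integral_eq_zero_iff_of_le_of_nonneg_ae (neg_h_le hs0 hmono)
      (Filter.Eventually.of_forall fun t => hFnn t) hFint).mp heq.symm
  have hnull : volume ({t | F t ≠ 0} ∩ Set.Ioc (-(hs (Fin.last k))) 0) = 0 := by
    have h1 : volume.restrict (Set.Ioc (-(hs (Fin.last k))) 0) {t | F t ≠ 0} = 0 := by
      have h2 := hzero
      rw [Filter.EventuallyEq, MeasureTheory.ae_iff] at h2
      simpa using h2
    rwa [MeasureTheory.Measure.restrict_apply' measurableSet_Ioc] at h1
  have hroots : volume {x : ℝ | Polynomial.IsRoot p x} = 0 :=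
    (Polynomial.finite_setOf_isRoot hp0).measure_zero _
  have hsub : Set.Ioo (alp hs j) (brp hs j) ⊆
      ({t | F t ≠ 0} ∩ Set.Ioc (-(hs (Fin.last k))) 0) ∪ {x : ℝ | Polynomial.IsRoot p x} := by
    intro t htIoo
    have htH : t ∈ Hint k hs j := Ioo_subset_Hint hs0 j htIoo
    have htIcc := Hint_subset_Icc hs0 hmono j htH
    have htIoc : t ∈ Set.Ioc (-(hs (Fin.last k))) 0 := by
      refine ⟨lt_of_le_of_lt ?_ htIoo.1, htIcc.2⟩
      simp only [alp, neg_le_neg_iff]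
      exact hmono.monotone (Fin.le_last _)
    by_cases hFt : F t = 0
    · right
      rw [hF] at hFt
      simp only [Set.indicator_of_mem htH, one_mul] at hFt
      have hb := bump_pos hmono htIoo
      have hsq : (∑ q : Fin (d + 1), w (j, b, q) * t ^ (q : ℕ)) ^ 2 = 0 := by
        rcases mul_eq_zero.mp hFt with h | h
        · exact absurd h (ne_of_gt hb)
        · exact h
      have := pow_eq_zero_iff (n := 2) (by norm_num) |>.mp hsq
      show Polynomial.eval t p = 0
      rw [hpeval]
      exact this
    · exact Or.inl ⟨hFt, htIoc⟩
  have hle : volume (Set.Ioo (alp hs j) (brp hs j)) = 0 := by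
    refine le_antisymm ?_ zero_le
    refine le_trans (measure_mono hsub) ?_
    refine le_trans (measure_union_le _ _) ?_
    rw [hnull, hroots]
    simp
  rw [Real.volume_Ioo] at hle
  have := alp_lt_brp hmono j
  rw [ENNReal.ofReal_eq_zero] at hle
  linarith

lemma Gmat_surj (hs0 : hs 0 = 0) (hmono : StrictMono hs) :
    Function.Surjective (fun w => (Gmat hs n d).mulVec w) := by
  have hinj : Function.Injective ((Gmat hs n d).mulVecLin) := by
    intro w w' hww
    by_contra hne
    have hsub : (Gmat hs n d).mulVec (w - w') = 0 := by
      rw [Matrix.mulVec_sub]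
      simp only [Matrix.mulVecLin_apply] at hww
      rw [hww, sub_self]
    have hw0 : w - w' ≠ 0 := sub_ne_zero_of_ne hne
    have := quad_pos hs0 hmono hw0
    rw [hsub, dotProduct_zero] at this
    exact lt_irrefl 0 this
  have hsurj := LinearMap.injective_iff_surjective.mp hinj
  intro u
  obtain ⟨w, hw⟩ := hsurj u
  exact ⟨w, hw⟩

end Stmt8

open Stmt8

/-- Let `N` be a symmetric binary piecewise polynomial matrix of degree
at most `d`.  Then `∫∫ φ(s)ᵀ N(s,t) φ(t) ds dt ≥ 0` for every continuous
`φ : [-h,0] → ℝⁿ` iff there is a positive semidefinite `Q ∈ S^{nk(d+1)}` with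
`N(s,t) = Z_{n,d}(s)ᵀ Q Z_{n,d}(t)` for all `s, t ∈ [-h,0]`. -/
theorem statement8 (n k d : ℕ) (hk : 0 < k) (hs : Fin (k + 1) → ℝ)
    (hs0 : hs 0 = 0) (hmono : StrictMono hs)
    (N : ℝ → ℝ → Matrix (Fin n) (Fin n) ℝ)
    (hNsym : ∀ s t, N s t = (N t s)ᵀ)
    (hN : IsBinPP n k d hs N) :
    (∀ φ : ℝ → Fin n → ℝ, ContinuousOn φ (Set.Icc (-(hs (Fin.last k))) 0) →
        0 ≤ ∫ s in (-(hs (Fin.last k)))..0, ∫ t in (-(hs (Fin.last k)))..0,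
          φ s ⬝ᵥ (N s t).mulVec (φ t)) ↔
      ∃ Q : Matrix (Fin k × Fin n × Fin (d + 1)) (Fin k × Fin n × Fin (d + 1)) ℝ,
        Q.PosSemidef ∧
        ∀ s ∈ Set.Icc (-(hs (Fin.last k))) 0, ∀ t ∈ Set.Icc (-(hs (Fin.last k))) 0,
          N s t = (Zmat k d hs (Fin n) s)ᵀ * Q * Zmat k d hs (Fin n) t := by
  classical
  have hIcc : Set.uIcc (-(hs (Fin.last k))) 0 = Set.Icc (-(hs (Fin.last k))) 0 :=
    Set.uIcc_of_le (neg_h_le hs0 hmono)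
  have congrInt : ∀ (Q : Matrix (Fin k × Fin n × Fin (d + 1))
        (Fin k × Fin n × Fin (d + 1)) ℝ) (φ : ℝ → Fin n → ℝ),
      (∀ s ∈ Set.Icc (-(hs (Fin.last k))) 0, ∀ t ∈ Set.Icc (-(hs (Fin.last k))) 0,
        N s t = (Zmat k d hs (Fin n) s)ᵀ * Q * Zmat k d hs (Fin n) t) →
      (∫ s in (-(hs (Fin.last k)))..0, ∫ t in (-(hs (Fin.last k)))..0,
          φ s ⬝ᵥ (N s t).mulVec (φ t)) =
        ∫ s in (-(hs (Fin.last k)))..0, ∫ t in (-(hs (Fin.last k)))..0,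
          φ s ⬝ᵥ ((Zmat k d hs (Fin n) s)ᵀ * Q * Zmat k d hs (Fin n) t).mulVec (φ t) := by
    intro Q φ hrep
    refine intervalIntegral.integral_congr fun s hsmem => ?_
    rw [hIcc] at hsmem
    refine intervalIntegral.integral_congr fun t htmem => ?_
    rw [hIcc] at htmem
    rw [hrep s hsmem t htmem]
  constructor
  · intro hpos
    choose P hPdeg hPeq using hN
    set M : Matrix (Fin k × Fin n × Fin (d + 1)) (Fin k × Fin n × Fin (d + 1)) ℝ :=
      Matrix.of fun r c =>
        MvPolynomial.coeff (emap d (r.2.2, c.2.2)) (P r.1 c.1 r.2.1 c.2.1) with hM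
    have hrep : ∀ s ∈ Set.Icc (-(hs (Fin.last k))) 0, ∀ t ∈ Set.Icc (-(hs (Fin.last k))) 0,
        N s t = (Zmat k d hs (Fin n) s)ᵀ * M * Zmat k d hs (Fin n) t := by
      intro s hsmem t htmem
      obtain ⟨i, hi⟩ := Hint_exists hk hmono hsmem
      obtain ⟨j, hj⟩ := Hint_exists hk hmono htmem
      ext a b
      rw [ZQZ_apply hmono M hi hj a b, hPeq i j s hi t hj a b,
        evalPP (P i j a b) (hPdeg i j a b).1 (hPdeg i j a b).2 s t]
      rfl
    set M' : Matrix (Fin k × Fin n × Fin (d + 1)) (Fin k × Fin n × Fin (d + 1)) ℝ :=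
      (2⁻¹ : ℝ) • (M + Mᵀ) with hM'
    have htrans : ∀ s t : ℝ,
        (Zmat k d hs (Fin n) s)ᵀ * Mᵀ * Zmat k d hs (Fin n) t =
        ((Zmat k d hs (Fin n) t)ᵀ * M * Zmat k d hs (Fin n) s)ᵀ := by
      intro s t
      rw [Matrix.transpose_mul, Matrix.transpose_mul, Matrix.transpose_transpose,
        ← Matrix.mul_assoc]
    have hrep' : ∀ s ∈ Set.Icc (-(hs (Fin.last k))) 0, ∀ t ∈ Set.Icc (-(hs (Fin.last k))) 0,
        N s t = (Zmat k d hs (Fin n) s)ᵀ * M' * Zmat k d hs (Fin n) t := by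
      intro s hsmem t htmem
      have h1 := hrep s hsmem t htmem
      have h2 := hrep t htmem s hsmem
      rw [hM', Matrix.mul_smul, Matrix.smul_mul, Matrix.mul_add, Matrix.add_mul,
        ← h1, htrans s t, ← h2, ← hNsym s t]
      ext a b
      simp only [Matrix.smul_apply, Matrix.add_apply, smul_eq_mul]
      ring
    refine ⟨M', Matrix.PosSemidef.of_dotProduct_mulVec_nonneg ?_ ?_, hrep'⟩
    · show M'ᴴ = M'
      ext r c
      simp only [Matrix.conjTranspose_apply, hM', Matrix.smul_apply, Matrix.add_apply,
        Matrix.transpose_apply, star_trivial, smul_eq_mul]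
      ring
    · intro x
      obtain ⟨w, hwx⟩ := Gmat_surj (n := n) (d := d) hs0 hmono x
      have hcont := phiw_continuous (hs := hs) (n := n) (d := d) w
      have h0 := hpos (phiw hs n d w) hcont
      rw [congrInt M' (phiw hs n d w) hrep'] at h0
      rw [lemC hs0 hmono M' (phiw hs n d w)
        (fun q => phi_integrable hs0 hmono hcont q)] at h0
      have hv : (fun q => ∫ t in (-(hs (Fin.last k)))..0,
          (Zmat k d hs (Fin n) t).mulVec (phiw hs n d w t) q) = x := by
        funext q
        rw [L_phiw hs0 hmono w q]
        exact congrFun hwx q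
      rw [hv] at h0
      simpa using h0
  · rintro ⟨Q, hQ, hrep⟩ φ hφ
    rw [congrInt Q φ hrep]
    rw [lemC hs0 hmono Q φ (fun q => phi_integrable hs0 hmono hφ q)]
    have := hQ.dotProduct_mulVec_nonneg (fun q => ∫ t in (-(hs (Fin.last k)))..0,
      (Zmat k d hs (Fin n) t).mulVec (φ t) q)
    simpa using this
end
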